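/- arXiv:2512.07298 — 16 statements merged into one kernel-verified Lean document; each statement's English description precedes it below -/
import Mathlib

section
/- For all x, y ∈ ℝ^d and every ε ∈ (0,1]: (1 + γV(x) + γV(y))·ψ_ε(|x−y|) + γ·g(|x−y|)·(−λ_V V(x) − λ_V V(y) + 2C_V) ≤ −[ (c₃/(2(c₁+c₂)))·1_{|x−y|≤l₀} + (γλ_V/(1+2γ))·1_{|x−y|>l₀} ]·ρ(x,y) + (2(c₃ + 2c₂K₁)ε + 2c₂K₂(2ε)^α)·(1 + γV(x) + γV(y)). -/
open Real Set Bornology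

set_option maxHeartbeats 2000000 in
theorem stmt_0 (d : ℕ) (hd : 1 ≤ d)
    (V : EuclideanSpace ℝ (Fin d) → ℝ)
    (hVcont : Continuous V) (hV1 : ∀ x, 1 ≤ V x)
    (hVsub : ∀ R > (0:ℝ), IsBounded {x : EuclideanSpace ℝ (Fin d) | V x ≤ R})
    (K₁ K₂ lamV CV LV : ℝ) (hK₁ : 0 < K₁) (hK₂ : 0 < K₂) (hlamV : 0 < lamV)
    (hCV : 0 < CV) (hLV : 0 < LV)
    (α : ℝ) (hα : α ∈ Set.Ioo (0:ℝ) 1) (η : ℝ) (hη : η ∈ Set.Ico (0:ℝ) 1)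
    (l₀ c₁ c₂ c₃ γ : ℝ)
    (hl₀ : l₀ = 1 + sSup ((fun p : EuclideanSpace ℝ (Fin d) × EuclideanSpace ℝ (Fin d) =>
        ‖p.1 - p.2‖) '' {p | V p.1 + V p.2 ≤ 4 * CV / lamV}))
    (hc₂ : c₂ = 2 * (K₁ * l₀ + K₂ * l₀ ^ α))
    (hc₁ : c₁ = c₂ * Real.exp (-c₂ * l₀))
    (hc₃ : c₃ = c₂ ^ 2 * Real.exp (-c₂ * l₀) / l₀)
    (hγ : γ = min 1 (min (c₃ / (4 * CV * (c₁ + c₂)))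
        ((c₃ / (24 * LV * (1 + LV ^ η) * (c₁ + c₂) * (1 + c₂ / c₁))) ^ (1 / (1 - η)))))
    (f g : ℝ → ℝ)
    (hf : ∀ r, f r = c₁ * r + 1 - Real.exp (-c₂ * r))
    (hg : ∀ r, g r = f (min r l₀))
    (ρ : EuclideanSpace ℝ (Fin d) → EuclideanSpace ℝ (Fin d) → ℝ)
    (hρ : ∀ x y, ρ x y = g ‖x - y‖ * (1 + γ * V x + γ * V y))
    (ε : ℝ) (hε : ε ∈ Set.Ioc (0:ℝ) 1)
    (h : ℝ → ℝ) (hh01 : ∀ r, 0 ≤ r → h r ∈ Set.Icc (0:ℝ) 1)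
    (hh0 : ∀ r, 0 ≤ r → r ≤ ε → h r = 0) (hh1 : ∀ r, 2 * ε ≤ r → h r = 1)
    (ψ : ℝ → ℝ)
    (hψ : ∀ r, ψ r = if r ≤ l₀ then
        (c₁ + c₂ * Real.exp (-c₂ * r)) * (K₁ * r + K₂ * r ^ α)
          + 2 * (-(c₂ ^ 2) * Real.exp (-c₂ * r)) * (h r) ^ 2
      else 0)
    (x y : EuclideanSpace ℝ (Fin d)) :
    (1 + γ * V x + γ * V y) * ψ ‖x - y‖
        + γ * g ‖x - y‖ * (-(lamV * V x) - lamV * V y + 2 * CV)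
      ≤ -((if ‖x - y‖ ≤ l₀ then c₃ / (2 * (c₁ + c₂)) else γ * lamV / (1 + 2 * γ)) * ρ x y)
        + (2 * (c₃ + 2 * c₂ * K₁) * ε + 2 * c₂ * K₂ * (2 * ε) ^ α)
          * (1 + γ * V x + γ * V y) := by
  obtain ⟨hα0, hα1⟩ := hα
  obtain ⟨hη0, hη1⟩ := hη
  obtain ⟨hε0, hε1⟩ := hε
  -- basic positivity facts
  have hl1 : 1 ≤ l₀ := by
    have hnn : 0 ≤ sSup ((fun p : EuclideanSpace ℝ (Fin d) × EuclideanSpace ℝ (Fin d) =>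
        ‖p.1 - p.2‖) '' {p | V p.1 + V p.2 ≤ 4 * CV / lamV}) := by
      apply Real.sSup_nonneg
      rintro t ⟨p, _, rfl⟩
      exact norm_nonneg _
    rw [hl₀]; linarith
  have hl0 : (0:ℝ) < l₀ := by linarith
  have hl₀α : 0 < l₀ ^ α := Real.rpow_pos_of_pos hl0 α
  have hc2 : 0 < c₂ := by
    rw [hc₂]; nlinarith [mul_pos hK₁ hl0, mul_pos hK₂ hl₀α]
  have hexpl : 0 < Real.exp (-c₂ * l₀) := Real.exp_pos _
  have hc1 : 0 < c₁ := by rw [hc₁]; exact mul_pos hc2 hexpl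
  have hc3 : 0 < c₃ := by
    rw [hc₃]; exact div_pos (mul_pos (pow_pos hc2 2) hexpl) hl0
  have hc12 : 0 < c₁ + c₂ := by linarith
  have hγ0 : 0 < γ := by
    have hLVη : 0 < LV ^ η := Real.rpow_pos_of_pos hLV η
    have hden2 : 0 < 24 * LV * (1 + LV ^ η) * (c₁ + c₂) * (1 + c₂ / c₁) := by
      have h1 : 0 < c₂ / c₁ := div_pos hc2 hc1
      have h2 : 0 < 24 * LV := by linarith
      have h3 : 0 < 1 + LV ^ η := by linarith
      have h4 : 0 < 1 + c₂ / c₁ := by linarith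
      positivity
    have hB0 : 0 < (c₃ / (24 * LV * (1 + LV ^ η) * (c₁ + c₂) * (1 + c₂ / c₁))) ^ (1 / (1 - η)) :=
      Real.rpow_pos_of_pos (div_pos hc3 hden2) _
    have hA0 : 0 < c₃ / (4 * CV * (c₁ + c₂)) := by
      apply div_pos hc3; nlinarith
    rw [hγ]; exact lt_min one_pos (lt_min hA0 hB0)
  have hγA : γ ≤ c₃ / (4 * CV * (c₁ + c₂)) := by
    rw [hγ]; exact le_trans (min_le_right _ _) (min_le_left _ _)
  have hγCV : 2 * CV * γ ≤ c₃ / (2 * (c₁ + c₂)) := by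
    have hd1 : (0:ℝ) < 4 * CV * (c₁ + c₂) := by nlinarith
    have := (le_div_iff₀ hd1).mp hγA
    rw [le_div_iff₀ (by nlinarith : (0:ℝ) < 2 * (c₁ + c₂))]
    nlinarith
  have hVx := hV1 x
  have hVy := hV1 y
  have hS1 : 1 ≤ 1 + γ * V x + γ * V y := by
    have h1 : 0 ≤ γ * V x := mul_nonneg hγ0.le (by linarith)
    have h2 : 0 ≤ γ * V y := mul_nonneg hγ0.le (by linarith)
    linarith
  have hfnn : ∀ r : ℝ, 0 ≤ r → 0 ≤ f r := by
    intro r hr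
    rw [hf]
    have h1 : Real.exp (-c₂ * r) ≤ 1 := by
      rw [← Real.exp_zero]
      exact Real.exp_le_exp.mpr (by nlinarith)
    nlinarith [mul_nonneg hc1.le hr]
  have hfle : ∀ r : ℝ, 0 ≤ r → f r ≤ (c₁ + c₂) * r := by
    intro r hr
    rw [hf]
    have := Real.add_one_le_exp (-c₂ * r)
    nlinarith
  have hEnn : 0 ≤ 2 * (c₃ + 2 * c₂ * K₁) * ε + 2 * c₂ * K₂ * (2 * ε) ^ α := by
    have h2e : 0 ≤ (2 * ε) ^ α := Real.rpow_nonneg (by linarith) α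
    nlinarith [mul_pos hc3 hε0, mul_pos (mul_pos hc2 hK₁) hε0,
      mul_nonneg (mul_nonneg hc2.le hK₂.le) h2e]
  have hr0 : (0:ℝ) ≤ ‖x - y‖ := norm_nonneg _
  rw [hρ, hψ, hg]
  by_cases hrl : ‖x - y‖ ≤ l₀
  · rw [if_pos hrl, if_pos hrl, min_eq_left hrl]
    set r := ‖x - y‖ with hrdef
    set S := 1 + γ * V x + γ * V y with hSdef
    set Eε := 2 * (c₃ + 2 * c₂ * K₁) * ε + 2 * c₂ * K₂ * (2 * ε) ^ α with hEdef
    clear_value r S Eε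
    have hE1 : Real.exp (-c₂ * r) ≤ 1 := by
      rw [← Real.exp_zero]; exact Real.exp_le_exp.mpr (by nlinarith)
    have hEl : Real.exp (-c₂ * l₀) ≤ Real.exp (-c₂ * r) :=
      Real.exp_le_exp.mpr (by nlinarith)
    have hc1E : c₁ ≤ c₂ * Real.exp (-c₂ * r) := by
      rw [hc₁]; exact mul_le_mul_of_nonneg_left hEl hc2.le
    have hrα : 0 ≤ r ^ α := Real.rpow_nonneg hr0 α
    have hKrnn : 0 ≤ K₁ * r + K₂ * r ^ α := by
      nlinarith [mul_nonneg hK₁.le hr0, mul_nonneg hK₂.le hrα]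
    have hc3l : c₃ * l₀ = c₂ ^ 2 * Real.exp (-c₂ * l₀) := by
      rw [hc₃]; field_simp
    have hfr0 := hfnn r hr0
    -- key pointwise estimate
    have hkey : (c₁ + c₂ * Real.exp (-c₂ * r)) * (K₁ * r + K₂ * r ^ α)
        + 2 * (-(c₂ ^ 2) * Real.exp (-c₂ * r)) * (h r) ^ 2
        + c₃ / (c₁ + c₂) * f r ≤ Eε := by
      have hfr : c₃ / (c₁ + c₂) * f r ≤ c₃ * r := by
        have h1 := hfle r hr0
        have h2 : c₃ / (c₁ + c₂) * f r ≤ c₃ / (c₁ + c₂) * ((c₁ + c₂) * r) :=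
          mul_le_mul_of_nonneg_left h1 (div_nonneg hc3.le hc12.le)
        have h3 : c₃ / (c₁ + c₂) * ((c₁ + c₂) * r) = c₃ * r := by
          field_simp
        linarith
      by_cases h2ε : 2 * ε ≤ r
      · rw [hh1 r h2ε]
        have hrl2 : r ^ α ≤ l₀ ^ α := Real.rpow_le_rpow hr0 hrl hα0.le
        have hKr : K₁ * r + K₂ * r ^ α ≤ c₂ / 2 := by
          rw [hc₂]
          nlinarith [mul_le_mul_of_nonneg_left hrl (le_of_lt hK₁),
            mul_le_mul_of_nonneg_left hrl2 (le_of_lt hK₂)]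
        have ht1 : (c₁ + c₂ * Real.exp (-c₂ * r)) * (K₁ * r + K₂ * r ^ α)
            ≤ (2 * (c₂ * Real.exp (-c₂ * r))) * (c₂ / 2) := by
          apply mul_le_mul (by linarith) hKr hKrnn
          positivity
        have hexpr : 0 < Real.exp (-c₂ * r) := Real.exp_pos _
        have hsq : c₂ ^ 2 * Real.exp (-c₂ * l₀) ≤ c₂ ^ 2 * Real.exp (-c₂ * r) :=
          mul_le_mul_of_nonneg_left hEl (by positivity)
        have hc3r : c₃ * r ≤ c₃ * l₀ := mul_le_mul_of_nonneg_left hrl hc3.le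
        linarith only [ht1, hsq, hc3l, hfr, hc3r, hEnn]
      · push_neg at h2ε
        have hhr := hh01 r hr0
        have hhsq : 0 ≤ (h r) ^ 2 := sq_nonneg _
        have hexpr : 0 < Real.exp (-c₂ * r) := Real.exp_pos _
        have hterm2 : 2 * (-(c₂ ^ 2) * Real.exp (-c₂ * r)) * (h r) ^ 2 ≤ 0 := by
          have h0 : 0 ≤ c₂ ^ 2 * Real.exp (-c₂ * r) := mul_nonneg (sq_nonneg _) hexpr.le
          have h5 : 0 ≤ 2 * (c₂ ^ 2 * Real.exp (-c₂ * r)) * (h r) ^ 2 :=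
            mul_nonneg (by linarith only [h0]) hhsq
          linarith only [h5]
        have h2eα : r ^ α ≤ (2 * ε) ^ α := Real.rpow_le_rpow hr0 h2ε.le hα0.le
        have hKr2 : K₁ * r + K₂ * r ^ α ≤ K₁ * (2 * ε) + K₂ * (2 * ε) ^ α := by
          nlinarith [mul_le_mul_of_nonneg_left h2ε.le (le_of_lt hK₁),
            mul_le_mul_of_nonneg_left h2eα (le_of_lt hK₂)]
        have hc12E : c₁ + c₂ * Real.exp (-c₂ * r) ≤ 2 * c₂ := by
          nlinarith [mul_le_mul_of_nonneg_left hE1 hc2.le]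
        have ht1 : (c₁ + c₂ * Real.exp (-c₂ * r)) * (K₁ * r + K₂ * r ^ α)
            ≤ 2 * c₂ * (K₁ * (2 * ε) + K₂ * (2 * ε) ^ α) := by
          apply mul_le_mul hc12E hKr2 hKrnn (by linarith)
        have hc3r : c₃ * r ≤ c₃ * (2 * ε) := mul_le_mul_of_nonneg_left h2ε.le hc3.le
        rw [hEdef]
        linarith only [ht1, hterm2, hfr, hc3r]
    -- assemble
    set c := c₃ / (2 * (c₁ + c₂)) with hcdef
    clear_value c
    have hcpos : 0 < c := by rw [hcdef]; positivity
    have h2c : c₃ / (c₁ + c₂) = 2 * c := by rw [hcdef]; field_simp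
    have hkey2 : (c₁ + c₂ * Real.exp (-c₂ * r)) * (K₁ * r + K₂ * r ^ α)
        + 2 * (-(c₂ ^ 2) * Real.exp (-c₂ * r)) * (h r) ^ 2 ≤ Eε - 2 * c * f r := by
      rw [h2c] at hkey; linarith only [hkey]
    have hmul : S * ((c₁ + c₂ * Real.exp (-c₂ * r)) * (K₁ * r + K₂ * r ^ α)
        + 2 * (-(c₂ ^ 2) * Real.exp (-c₂ * r)) * (h r) ^ 2)
        ≤ S * (Eε - 2 * c * f r) :=
      mul_le_mul_of_nonneg_left hkey2 (by linarith)
    have hγterm : γ * f r * (-(lamV * V x) - lamV * V y + 2 * CV) ≤ c * f r := by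
      have hgf : 0 ≤ γ * f r := mul_nonneg hγ0.le hfr0
      have h1 : γ * f r * (-(lamV * V x) - lamV * V y + 2 * CV) ≤ γ * f r * (2 * CV) := by
        apply mul_le_mul_of_nonneg_left _ hgf
        linarith only [mul_le_mul_of_nonneg_left hVx hlamV.le,
          mul_le_mul_of_nonneg_left hVy hlamV.le, hlamV]
      have h2 : γ * f r * (2 * CV) = (2 * CV * γ) * f r := by ring
      linarith only [h1, h2, mul_le_mul_of_nonneg_right hγCV hfr0]
    have hcS : 0 ≤ c * f r * (S - 1) :=
      mul_nonneg (mul_nonneg hcpos.le hfr0) (by linarith only [hS1])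
    linarith only [hmul, hγterm, hcS]
  · push_neg at hrl
    rw [if_neg (not_le.mpr hrl), if_neg (not_le.mpr hrl), min_eq_right hrl.le]
    set S := 1 + γ * V x + γ * V y with hSdef
    clear_value S
    have hfl0 : 0 ≤ f l₀ := hfnn l₀ hl0.le
    -- outside the ball, V x + V y is large
    have hWgt : 4 * CV / lamV < V x + V y := by
      by_contra hcon
      push_neg at hcon
      obtain ⟨M, hM⟩ := isBounded_iff_forall_norm_le.mp
        (hVsub (4 * CV / lamV) (by positivity))
      have hbdd : BddAbove ((fun p : EuclideanSpace ℝ (Fin d) × EuclideanSpace ℝ (Fin d) =>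
          ‖p.1 - p.2‖) '' {p | V p.1 + V p.2 ≤ 4 * CV / lamV}) := by
        refine ⟨2 * M, ?_⟩
        rintro t ⟨p, hp, rfl⟩
        simp only [Set.mem_setOf_eq] at hp
        have h1 := hV1 p.1
        have h2 := hV1 p.2
        have hm1 := hM p.1 (by simp only [Set.mem_setOf_eq]; linarith)
        have hm2 := hM p.2 (by simp only [Set.mem_setOf_eq]; linarith)
        have := norm_sub_le p.1 p.2
        simp only []
        linarith
      have hmem : ‖x - y‖ ∈ ((fun p : EuclideanSpace ℝ (Fin d) × EuclideanSpace ℝ (Fin d) =>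
          ‖p.1 - p.2‖) '' {p | V p.1 + V p.2 ≤ 4 * CV / lamV}) :=
        ⟨(x, y), hcon, rfl⟩
      have hle := le_csSup hbdd hmem
      have : ‖x - y‖ ≤ l₀ - 1 := by rw [hl₀]; linarith
      linarith
    have h12 : (0:ℝ) < 1 + 2 * γ := by linarith
    have hWle : 4 * CV < lamV * (V x + V y) := by
      rw [div_lt_iff₀ hlamV] at hWgt; nlinarith
    have hW2 : 2 ≤ V x + V y := by linarith
    set T := -(lamV * V x) - lamV * V y + 2 * CV with hTdef
    clear_value T
    have hA : 0 ≤ lamV * (V x + V y) - 2 * CV - lamV := by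
      nlinarith [mul_le_mul_of_nonneg_left hW2 hlamV.le]
    have hB : 0 < lamV * (V x + V y) - 4 * CV := by linarith
    have hkey1 : γ * T * (1 + 2 * γ) + γ * lamV * S ≤ 0 := by
      rw [hTdef, hSdef]
      linarith only [mul_nonneg hγ0.le hA, mul_nonneg (mul_nonneg hγ0.le hγ0.le) hB.le]
    have hkey0 : γ * T + (γ * lamV / (1 + 2 * γ)) * S ≤ 0 := by
      have h3 : (γ * T * (1 + 2 * γ) + γ * lamV * S) / (1 + 2 * γ) ≤ 0 :=
        div_nonpos_of_nonpos_of_nonneg hkey1 h12.le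
      have h4 : (γ * T * (1 + 2 * γ) + γ * lamV * S) / (1 + 2 * γ)
          = γ * T + (γ * lamV / (1 + 2 * γ)) * S := by
        field_simp
        try ring
      linarith [h4 ▸ h3]
    have hESnn : 0 ≤ (2 * (c₃ + 2 * c₂ * K₁) * ε + 2 * c₂ * K₂ * (2 * ε) ^ α) * S :=
      mul_nonneg hEnn (by linarith)
    have hprod : (γ * T + (γ * lamV / (1 + 2 * γ)) * S) * f l₀ ≤ 0 :=
      mul_nonpos_of_nonpos_of_nonneg hkey0 hfl0
    linarith only [hprod, hESnn]
end

section
/- For all x, y ∈ ℝ^d: |∇V(x) − ∇V(y)| ≤ L_V(1 + L_V^η)(1 + V(x)^η + V(y)^η)|x − y|. -/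
open scoped RealInnerProductSpace
open Real Set

/-- The Hilbert–Schmidt norm of a continuous linear map on `EuclideanSpace ℝ (Fin d)`,
computed as the square root of the sum of squared norms of the images of the standard
basis vectors. -/
noncomputable def hsNorm {d : ℕ}
    (A : EuclideanSpace ℝ (Fin d) →L[ℝ] EuclideanSpace ℝ (Fin d)) : ℝ :=
  Real.sqrt (∑ i, ‖A (EuclideanSpace.single i 1)‖ ^ 2)

lemma opNorm_le_hsNorm {d : ℕ}
    (A : EuclideanSpace ℝ (Fin d) →L[ℝ] EuclideanSpace ℝ (Fin d)) : ‖A‖ ≤ hsNorm A := by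
  have hhs : 0 ≤ hsNorm A := Real.sqrt_nonneg _
  refine ContinuousLinearMap.opNorm_le_bound A hhs (fun v => ?_)
  have hv : v = ∑ i, v i • EuclideanSpace.single i (1 : ℝ) := by
    ext j
    rw [WithLp.ofLp_sum, Finset.sum_apply]
    simp [EuclideanSpace.single_apply, PiLp.smul_apply]
  calc ‖A v‖ = ‖∑ i, v i • A (EuclideanSpace.single i 1)‖ := by
        conv_lhs => rw [hv]
        rw [map_sum]
        simp
    _ ≤ ∑ i, ‖v i • A (EuclideanSpace.single i 1)‖ := norm_sum_le _ _
    _ = ∑ i, |v i| * ‖A (EuclideanSpace.single i 1)‖ := by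
        simp [norm_smul]
    _ ≤ hsNorm A * ‖v‖ := by
        have hcs := Finset.sum_mul_sq_le_sq_mul_sq Finset.univ
          (fun i => |v i|) (fun i => ‖A (EuclideanSpace.single i 1)‖)
        have h1 : (∑ i, |v i| * ‖A (EuclideanSpace.single i 1)‖)
            ≤ Real.sqrt ((∑ i, |v i| ^ 2) * ∑ i, ‖A (EuclideanSpace.single i 1)‖ ^ 2) := by
          rw [← Real.sqrt_sq (by positivity : (0:ℝ) ≤ ∑ i, |v i| * ‖A (EuclideanSpace.single i 1)‖)]
          exact Real.sqrt_le_sqrt hcs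
        have h2 : Real.sqrt ((∑ i, |v i| ^ 2) * ∑ i, ‖A (EuclideanSpace.single i 1)‖ ^ 2)
            = ‖v‖ * hsNorm A := by
          rw [Real.sqrt_mul (by positivity)]
          have hnv : Real.sqrt (∑ i, |v i| ^ 2) = ‖v‖ := by
            rw [EuclideanSpace.norm_eq]
            simp [Real.norm_eq_abs]
          rw [hnv]
          rfl
        rw [mul_comm]
        exact h1.trans_eq h2

lemma real_rpow_add_le (a b p : ℝ) (ha : 0 ≤ a) (hb : 0 ≤ b) (hp : 0 ≤ p) (hp1 : p ≤ 1) :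
    (a + b) ^ p ≤ a ^ p + b ^ p := by
  have h := NNReal.rpow_add_le_add_rpow a.toNNReal b.toNNReal hp hp1
  have := NNReal.coe_le_coe.2 h
  push_cast at this
  rwa [Real.coe_toNNReal _ ha, Real.coe_toNNReal _ hb] at this

theorem stmt_2 (d : ℕ) (hd : 1 ≤ d) (LV η : ℝ) (hLV : 0 < LV) (hη : η ∈ Set.Ico (0:ℝ) 1)
    (V : EuclideanSpace ℝ (Fin d) → ℝ) (hV : ContDiff ℝ 2 V) (hV1 : ∀ x, 1 ≤ V x)
    (hHess : ∀ x, hsNorm (fderiv ℝ (gradient V) x) ≤ LV * (1 + V x ^ η))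
    (hMix : ∀ x y : EuclideanSpace ℝ (Fin d), ∀ u ∈ Set.Icc (0:ℝ) 1,
      V (y + u • (x - y)) ≤ LV * (1 + V x + V y))
    (x y : EuclideanSpace ℝ (Fin d)) :
    ‖gradient V x - gradient V y‖
      ≤ LV * (1 + LV ^ η) * (1 + V x ^ η + V y ^ η) * ‖x - y‖ := by
  obtain ⟨hη0, hη1⟩ := hη
  set C : ℝ := LV * (1 + LV ^ η) * (1 + V x ^ η + V y ^ η) with hC
  -- differentiability of the gradient
  have hdiff : ∀ z, DifferentiableAt ℝ (gradient V) z := by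
    intro z
    have h1 : ContDiff ℝ 1 (fderiv ℝ V) := hV.fderiv_right (by norm_num)
    have h2 : Differentiable ℝ (fderiv ℝ V) := h1.differentiable one_ne_zero
    have : gradient V = fun w => (InnerProductSpace.toDual ℝ _).symm (fderiv ℝ V w) := rfl
    rw [this]
    exact ((InnerProductSpace.toDual ℝ _).symm.toContinuousLinearEquiv.differentiable.comp
      h2) z
  -- pointwise bound on the segment
  have key : ∀ z ∈ segment ℝ y x, ‖fderiv ℝ (gradient V) z‖ ≤ C := by
    intro z hz
    rw [segment_eq_image' ℝ y x] at hz
    obtain ⟨u, hu, rfl⟩ := hz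
    have hVz : V (y + u • (x - y)) ≤ LV * (1 + V x + V y) := hMix x y u hu
    have hVz0 : (0:ℝ) ≤ V (y + u • (x - y)) := le_trans zero_le_one (hV1 _)
    have hVx0 : (0:ℝ) ≤ V x := le_trans zero_le_one (hV1 x)
    have hVy0 : (0:ℝ) ≤ V y := le_trans zero_le_one (hV1 y)
    have hpow : V (y + u • (x - y)) ^ η ≤ LV ^ η * (1 + V x ^ η + V y ^ η) := by
      calc V (y + u • (x - y)) ^ η ≤ (LV * (1 + V x + V y)) ^ η :=
            Real.rpow_le_rpow hVz0 hVz hη0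
        _ = LV ^ η * (1 + V x + V y) ^ η := Real.mul_rpow hLV.le (by positivity)
        _ ≤ LV ^ η * (1 + V x ^ η + V y ^ η) := by
            apply mul_le_mul_of_nonneg_left _ (Real.rpow_nonneg hLV.le η)
            calc (1 + V x + V y) ^ η = (1 + (V x + V y)) ^ η := by ring_nf
              _ ≤ 1 ^ η + (V x + V y) ^ η :=
                  real_rpow_add_le 1 (V x + V y) η zero_le_one (by positivity) hη0 hη1.le
              _ ≤ 1 + (V x ^ η + V y ^ η) := by
                  rw [Real.one_rpow]
                  exact add_le_add (le_refl 1) (real_rpow_add_le _ _ _ hVx0 hVy0 hη0 hη1.le)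
              _ = 1 + V x ^ η + V y ^ η := by ring
    have hS : (1:ℝ) ≤ 1 + V x ^ η + V y ^ η := by
      have : (0:ℝ) ≤ V x ^ η := Real.rpow_nonneg hVx0 η
      have : (0:ℝ) ≤ V y ^ η := Real.rpow_nonneg hVy0 η
      nlinarith [Real.rpow_nonneg hVx0 η]
    calc ‖fderiv ℝ (gradient V) (y + u • (x - y))‖
        ≤ hsNorm (fderiv ℝ (gradient V) (y + u • (x - y))) := opNorm_le_hsNorm _
      _ ≤ LV * (1 + V (y + u • (x - y)) ^ η) := hHess _
      _ ≤ LV * (1 + LV ^ η * (1 + V x ^ η + V y ^ η)) := by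
          apply mul_le_mul_of_nonneg_left _ hLV.le
          linarith
      _ ≤ C := by
          rw [hC]
          have hLη : (0:ℝ) ≤ LV ^ η := Real.rpow_nonneg hLV.le η
          nlinarith
  have hmvt := (convex_segment y x).norm_image_sub_le_of_norm_fderiv_le
    (fun z _ => hdiff z) key (left_mem_segment ℝ y x) (right_mem_segment ℝ y x)
  simpa using hmvt
end

section
/- For all x ∈ ℝ^d: |∇V(x)| ≤ L_V(1 + L_V^η)(1 + 2L_V)(1 + V(0)^η)(1 + V(x)) + |∇V(0)|. -/
open scoped RealInnerProductSpace
open Real Set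

lemma rpow_add_le_add_rpow' {u v p : ℝ} (hu : 0 ≤ u) (hv : 0 ≤ v) (hp : 0 ≤ p) (hp1 : p ≤ 1) :
    (u + v) ^ p ≤ u ^ p + v ^ p := by
  lift u to NNReal using hu
  lift v to NNReal using hv
  have := NNReal.rpow_add_le_add_rpow u v hp hp1
  exact_mod_cast this

set_option maxHeartbeats 1000000 in
theorem stmt_3 (d : ℕ) (hd : 1 ≤ d) (LV η : ℝ) (hLV : 0 < LV) (hη : η ∈ Set.Ico (0:ℝ) 1)
    (V : EuclideanSpace ℝ (Fin d) → ℝ) (hV : ContDiff ℝ 2 V) (hV1 : ∀ x, 1 ≤ V x)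
    (hHess : ∀ x, hsNorm (fderiv ℝ (gradient V) x) ≤ LV * (1 + V x ^ η))
    (hMix : ∀ x y : EuclideanSpace ℝ (Fin d), ∀ u ∈ Set.Icc (0:ℝ) 1,
      V (y + u • (x - y)) ≤ LV * (1 + V x + V y))
    (hQuad : ∀ x y : EuclideanSpace ℝ (Fin d), V x ^ η * ‖y‖ ^ 2 ≤ LV * (1 + V x + V y))
    (x : EuclideanSpace ℝ (Fin d)) :
    ‖gradient V x‖
      ≤ LV * (1 + LV ^ η) * (1 + 2 * LV) * (1 + V (0 : EuclideanSpace ℝ (Fin d)) ^ η) * (1 + V x)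
        + ‖gradient V (0 : EuclideanSpace ℝ (Fin d))‖ := by
  obtain ⟨hη0, hη1⟩ := hη
  set a := V x with ha_def
  set b := V (0 : EuclideanSpace ℝ (Fin d)) with hb_def
  have ha : 1 ≤ a := hV1 x
  have hb : 1 ≤ b := hV1 0
  set n := ‖x‖ with hn_def
  have hn0 : 0 ≤ n := norm_nonneg _
  set T : ℝ := 1 + a + b with hT_def
  have hT0 : 0 < T := by linarith
  set C : ℝ := LV * (1 + (LV * T) ^ η) with hC_def
  -- differentiability of the gradient
  have hgrad : Differentiable ℝ (gradient V) := by
    have h1 : ContDiff ℝ 1 (fderiv ℝ V) := hV.fderiv_right (by norm_num)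
    have h2 : ContDiff ℝ 1 (gradient V) :=
      ((InnerProductSpace.toDual ℝ (EuclideanSpace ℝ (Fin d))).symm.contDiff (n := 1)).comp h1
    exact h2.differentiable one_ne_zero
  -- bound on the segment
  have hseg : ∀ z ∈ segment ℝ (0 : EuclideanSpace ℝ (Fin d)) x, ‖fderiv ℝ (gradient V) z‖ ≤ C := by
    rintro z ⟨u, v, hu, hv, huv, rfl⟩
    have hpt : u • (0 : EuclideanSpace ℝ (Fin d)) + v • x = (0 : EuclideanSpace ℝ (Fin d)) + v • (x - (0 : EuclideanSpace ℝ (Fin d))) := by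
      simp
    have hVz : V (u • (0 : EuclideanSpace ℝ (Fin d)) + v • x) ≤ LV * T := by
      rw [hpt]
      simpa [hT_def, ← ha_def, ← hb_def] using hMix x 0 v ⟨hv, by linarith⟩
    have hVz1 : (1 : ℝ) ≤ V (u • (0 : EuclideanSpace ℝ (Fin d)) + v • x) := hV1 _
    have hstep : V (u • (0 : EuclideanSpace ℝ (Fin d)) + v • x) ^ η ≤ (LV * T) ^ η :=
      Real.rpow_le_rpow (by linarith) hVz hη0
    calc ‖fderiv ℝ (gradient V) (u • (0 : EuclideanSpace ℝ (Fin d)) + v • x)‖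
        ≤ hsNorm (fderiv ℝ (gradient V) (u • (0 : EuclideanSpace ℝ (Fin d)) + v • x)) := opNorm_le_hsNorm _
      _ ≤ LV * (1 + V (u • (0 : EuclideanSpace ℝ (Fin d)) + v • x) ^ η) := hHess _
      _ ≤ C := by
          rw [hC_def]
          have := mul_le_mul_of_nonneg_left (add_le_add_left hstep 1) hLV.le
          linarith
  have hMVT : ‖gradient V x - gradient V (0 : EuclideanSpace ℝ (Fin d))‖ ≤ C * ‖x - (0 : EuclideanSpace ℝ (Fin d))‖ :=
    Convex.norm_image_sub_le_of_norm_fderiv_le (fun z _ => hgrad z) hseg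
      (convex_segment _ _) (left_mem_segment ℝ (0 : EuclideanSpace ℝ (Fin d)) x) (right_mem_segment ℝ (0 : EuclideanSpace ℝ (Fin d)) x)
  rw [sub_zero] at hMVT
  have htri : ‖gradient V x‖ - ‖gradient V (0 : EuclideanSpace ℝ (Fin d))‖ ≤ ‖gradient V x - gradient V (0 : EuclideanSpace ℝ (Fin d))‖ :=
    norm_sub_norm_le _ _
  -- now bound C * n
  have hKey : C * n ≤ LV * (1 + LV ^ η) * (1 + 2 * LV) * (1 + b ^ η) * (1 + a) := by
    have hone_a : (1 : ℝ) ≤ a ^ η := by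
      have := Real.rpow_le_rpow zero_le_one ha hη0
      simpa using this
    have hone_b : (1 : ℝ) ≤ b ^ η := by
      have := Real.rpow_le_rpow zero_le_one hb hη0
      simpa using this
    have hl0 : 0 ≤ LV ^ η := Real.rpow_nonneg hLV.le η
    have hquadxx : a ^ η * n ^ 2 ≤ LV * (1 + 2 * a) := by
      have := hQuad x x
      rw [← ha_def, ← hn_def] at this
      linarith
    have hn2 : n ^ 2 ≤ 2 * LV * (1 + a) := by
      nlinarith [hquadxx, sq_nonneg n, hone_a]
    have hf2 : n ≤ (1 + 2 * LV) * (1 + a) := by nlinarith [sq_nonneg (n - 1)]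
    -- t := (1+a)^η
    set t : ℝ := (1 + a) ^ η with ht_def
    have ht0 : 0 ≤ t := Real.rpow_nonneg (by linarith) η
    have ht_le : t ≤ 1 + a := by
      have := Real.rpow_le_rpow_of_exponent_le (by linarith : (1:ℝ) ≤ 1 + a) hη1.le
      simpa [ht_def] using this
    have ht2a : t ≤ 2 * a ^ η := by
      have h1 : (1 + a : ℝ) ^ η ≤ (2 * a) ^ η :=
        Real.rpow_le_rpow (by linarith) (by linarith) hη0
      have h2 : ((2 : ℝ) * a) ^ η = 2 ^ η * a ^ η :=
        Real.mul_rpow (by norm_num) (by linarith)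
      have h3 : (2 : ℝ) ^ η ≤ 2 := by
        have := Real.rpow_le_rpow_of_exponent_le one_le_two hη1.le
        simpa using this
      have ha0 : (0:ℝ) ≤ a ^ η := by linarith
      calc t ≤ 2 ^ η * a ^ η := by rw [ht_def, ← h2]; exact h1
        _ ≤ 2 * a ^ η := by nlinarith
    have hf3 : t * n ≤ (1 + LV) * (1 + a) := by
      have hsq : (t * n) ^ 2 ≤ ((1 + LV) * (1 + a)) ^ 2 := by
        have s1 : t * t * n ^ 2 ≤ (2 * a ^ η) * t * n ^ 2 :=
          mul_le_mul_of_nonneg_right (mul_le_mul_of_nonneg_right ht2a ht0) (sq_nonneg n)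
        have s2 : (2 * a ^ η) * t * n ^ 2 = 2 * t * (a ^ η * n ^ 2) := by ring
        have s3 : 2 * t * (a ^ η * n ^ 2) ≤ 2 * t * (LV * (1 + 2 * a)) :=
          mul_le_mul_of_nonneg_left hquadxx (by linarith)
        have s4 : 2 * t * (LV * (1 + 2 * a)) ≤ 2 * (1 + a) * (LV * (1 + 2 * a)) :=
          mul_le_mul_of_nonneg_right (by linarith) (by nlinarith)
        have s5 : 2 * (1 + a) * (LV * (1 + 2 * a)) ≤ ((1 + LV) * (1 + a)) ^ 2 := by
          nlinarith [mul_nonneg (sq_nonneg (1 - LV)) (sq_nonneg (1 + a)),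
            mul_pos hLV (by linarith : (0:ℝ) < 1 + a)]
        calc (t * n) ^ 2 = t * t * n ^ 2 := by ring
          _ ≤ ((1 + LV) * (1 + a)) ^ 2 := by linarith
      have h1 : t * n = Real.sqrt ((t * n) ^ 2) :=
        (Real.sqrt_sq (mul_nonneg ht0 hn0)).symm
      have h2 : Real.sqrt (((1 + LV) * (1 + a)) ^ 2) = (1 + LV) * (1 + a) :=
        Real.sqrt_sq (by nlinarith)
      rw [h1, ← h2]
      exact Real.sqrt_le_sqrt hsq
    -- subadditivity
    have hsub : (LV * T) ^ η ≤ LV ^ η * (t + b ^ η) := by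
      have h1 : (LV * T) ^ η = LV ^ η * T ^ η :=
        Real.mul_rpow hLV.le hT0.le
      have h2 : T ^ η ≤ t + b ^ η := by
        have : T = (1 + a) + b := by rw [hT_def]
        rw [this]
        exact rpow_add_le_add_rpow' (by linarith) (by linarith) hη0 hη1.le
      rw [h1]
      exact mul_le_mul_of_nonneg_left h2 hl0
    have hCn : C * n ≤ LV * n + LV * (LV ^ η * (t * n) + LV ^ η * (b ^ η * n)) := by
      have h1 : (LV * T) ^ η * n ≤ (LV ^ η * (t + b ^ η)) * n :=
        mul_le_mul_of_nonneg_right hsub hn0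
      have h2 : LV * ((LV * T) ^ η * n) ≤ LV * ((LV ^ η * (t + b ^ η)) * n) :=
        mul_le_mul_of_nonneg_left h1 hLV.le
      have h3 : C * n = LV * n + LV * ((LV * T) ^ η * n) := by rw [hC_def]; ring
      have h4 : LV * ((LV ^ η * (t + b ^ η)) * n)
          = LV * (LV ^ η * (t * n) + LV ^ η * (b ^ η * n)) := by ring
      linarith [h3, h2, h4.le, h4.ge]
    have hbn : b ^ η * n ≤ b ^ η * ((1 + 2 * LV) * (1 + a)) :=
      mul_le_mul_of_nonneg_left hf2 (by linarith)
    calc C * n ≤ LV * n + LV * (LV ^ η * (t * n) + LV ^ η * (b ^ η * n)) := hCn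
      _ ≤ LV * ((1 + 2 * LV) * (1 + a))
          + LV * (LV ^ η * ((1 + LV) * (1 + a)) + LV ^ η * (b ^ η * ((1 + 2 * LV) * (1 + a)))) := by
          have h1 := mul_le_mul_of_nonneg_left hf2 hLV.le
          have h2 := mul_le_mul_of_nonneg_left hf3 hl0
          have h3 := mul_le_mul_of_nonneg_left hbn hl0
          have h4 := mul_le_mul_of_nonneg_left (add_le_add h2 h3) hLV.le
          linarith
      _ ≤ LV * (1 + LV ^ η) * (1 + 2 * LV) * (1 + b ^ η) * (1 + a) := by
          have h4 : (0:ℝ) ≤ LV * (1 + a) * ((1 + 2 * LV) * b ^ η + LV ^ η * LV) := by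
            have : (0:ℝ) ≤ b ^ η := by linarith
            positivity
          nlinarith [h4]
    done
  calc ‖gradient V x‖ ≤ ‖gradient V (0 : EuclideanSpace ℝ (Fin d))‖ + C * n := by linarith
    _ ≤ LV * (1 + LV ^ η) * (1 + 2 * LV) * (1 + b ^ η) * (1 + a)
        + ‖gradient V (0 : EuclideanSpace ℝ (Fin d))‖ := by linarith
end

section
/- For all r ∈ [0, l₀]: f′(r)(K₁r + K₂r^α) + 2f″(r) ≤ −c₃r, that is, (c₂e^{−c₂r} + c₁)(K₁r + K₂r^α) − 2c₂²e^{−c₂r} ≤ −c₃r. -/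
open Real Set

theorem stmt_4 (K₁ K₂ α l₀ : ℝ) (hK₁ : 0 < K₁) (hK₂ : 0 < K₂)
    (hα : α ∈ Set.Ioo (0:ℝ) 1) (hl₀ : 0 < l₀)
    (c₁ c₂ c₃ : ℝ)
    (hc₂ : c₂ = 2 * (K₁ * l₀ + K₂ * l₀ ^ α))
    (hc₁ : c₁ = c₂ * Real.exp (-c₂ * l₀))
    (hc₃ : c₃ = c₂ ^ 2 * Real.exp (-c₂ * l₀) / l₀) :
    ∀ r ∈ Set.Icc (0:ℝ) l₀,
      (c₂ * Real.exp (-c₂ * r) + c₁) * (K₁ * r + K₂ * r ^ α)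
        - 2 * c₂ ^ 2 * Real.exp (-c₂ * r) ≤ -(c₃ * r) := by
  intro r hr
  obtain ⟨hr0, hrl⟩ := hr
  have hrpow : r ^ α ≤ l₀ ^ α := Real.rpow_le_rpow hr0 hrl hα.1.le
  have hrpow0 : 0 ≤ r ^ α := Real.rpow_nonneg hr0 α
  have hl₀pow : 0 < l₀ ^ α := Real.rpow_pos_of_pos hl₀ α
  have hc₂pos : 0 < c₂ := by
    rw [hc₂]; positivity
  have hg : K₁ * r + K₂ * r ^ α ≤ c₂ / 2 := by
    rw [hc₂]; nlinarith
  have hg0 : 0 ≤ K₁ * r + K₂ * r ^ α := by positivity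
  have hexple : Real.exp (-c₂ * l₀) ≤ Real.exp (-c₂ * r) := by
    apply Real.exp_le_exp.2; nlinarith
  have hexpr0 : 0 < Real.exp (-c₂ * r) := Real.exp_pos _
  have hexpl0 : 0 < Real.exp (-c₂ * l₀) := Real.exp_pos _
  have hc₁le : c₁ ≤ c₂ * Real.exp (-c₂ * r) := by
    rw [hc₁]; nlinarith
  have h1 : (c₂ * Real.exp (-c₂ * r) + c₁) * (K₁ * r + K₂ * r ^ α)
      - 2 * c₂ ^ 2 * Real.exp (-c₂ * r) ≤ -(c₂ ^ 2 * Real.exp (-c₂ * l₀)) := by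
    nlinarith [mul_le_mul hc₁le hg hg0 (by positivity : (0:ℝ) ≤ c₂ * Real.exp (-c₂ * r)),
      mul_le_mul_of_nonneg_left hg (by positivity : (0:ℝ) ≤ c₂ * Real.exp (-c₂ * r)),
      mul_le_mul_of_nonneg_left hexple (by positivity : (0:ℝ) ≤ c₂ ^ 2)]
  have h2 : c₃ * r ≤ c₂ ^ 2 * Real.exp (-c₂ * l₀) := by
    rw [hc₃]
    rw [div_mul_eq_mul_div, div_le_iff₀ hl₀]
    nlinarith [mul_le_mul_of_nonneg_left hrl (by positivity : (0:ℝ) ≤ c₂ ^ 2 * Real.exp (-c₂ * l₀))]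
  linarith
end

section
/- For every p > 0 there exist constants λ_V, C_V > 0 (depending on p, d, λ*, C*, L, α) such that ⟨∇V_p(x), b(x)⟩ + (1/2)ΔV_p(x) ≤ −λ_V·V_p(x) + C_V for all x ∈ ℝ^d; moreover one may take λ_V = pλ*/4. -/
open scoped RealInnerProductSpace
open Real Set

private lemma aux2 (β ε : ℝ) (hβ0 : 0 ≤ β) (hβ2 : β < 2) (hε : 0 < ε) :
    ∃ C : ℝ, 0 < C ∧ ∀ r : ℝ, 0 ≤ r → r ^ β ≤ ε * r ^ 2 + C := by
  have hR1 : (1:ℝ) ≤ max 1 ((1/ε) ^ (1/(2-β))) := le_max_left _ _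
  set R : ℝ := max 1 ((1/ε) ^ (1/(2-β))) with hR
  have hR0 : (0:ℝ) < R := lt_of_lt_of_le one_pos hR1
  refine ⟨R ^ β + 1, by positivity, ?_⟩
  intro r hr
  rcases le_or_gt r R with h | h
  · have h1 : r ^ β ≤ R ^ β := Real.rpow_le_rpow hr h hβ0
    nlinarith [mul_nonneg hε.le (sq_nonneg r)]
  · have hr1 : (1:ℝ) < r := lt_of_le_of_lt hR1 h
    have hr0 : (0:ℝ) < r := by linarith
    have hβne : (2:ℝ) - β ≠ 0 := by linarith
    have h2 : (1/ε) ≤ r ^ (2-β) := by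
      have e1 : ((1/ε) ^ (1/(2-β))) ^ (2-β) = 1/ε := by
        rw [← Real.rpow_mul (by positivity : (0:ℝ) ≤ 1/ε), one_div_mul_cancel hβne,
          Real.rpow_one]
      calc (1/ε) = ((1/ε) ^ (1/(2-β))) ^ (2-β) := e1.symm
        _ ≤ R ^ (2-β) := Real.rpow_le_rpow (by positivity) (le_max_right _ _) (by linarith)
        _ ≤ r ^ (2-β) := Real.rpow_le_rpow hR0.le h.le (by linarith)
    have h3 : r ^ (β - 2) ≤ ε := by
      have e2 : r ^ (β-2) = (r ^ (2-β))⁻¹ := by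
        rw [← Real.rpow_neg hr0.le]; ring_nf
      rw [e2]
      have hrp : 0 < r ^ (2-β) := Real.rpow_pos_of_pos hr0 _
      rw [inv_le_comm₀ hrp hε]
      rwa [one_div] at h2
    have e3 : r ^ β = r ^ (2:ℕ) * r ^ (β - 2) := by
      rw [← Real.rpow_natCast r 2, ← Real.rpow_add hr0]; norm_num
    have hr2 : (0:ℝ) ≤ r ^ 2 := sq_nonneg r
    have hRb : (0:ℝ) < R ^ β := Real.rpow_pos_of_pos hR0 _
    nlinarith [mul_le_mul_of_nonneg_left h3 hr2]

private lemma aux1 (q ε : ℝ) (hq : 0 < q) (hε : 0 < ε) :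
    ∃ C : ℝ, 0 < C ∧ ∀ s : ℝ, 1 ≤ s → s ^ (q-1) ≤ ε * s ^ q + C := by
  have hS1 : (1:ℝ) ≤ max 1 (1/ε) := le_max_left _ _
  set S : ℝ := max 1 (1/ε) with hSdef
  have hS0 : (0:ℝ) < S := lt_of_lt_of_le one_pos hS1
  refine ⟨S ^ (q+1), Real.rpow_pos_of_pos hS0 _, ?_⟩
  intro s hs
  have hs0 : (0:ℝ) < s := lt_of_lt_of_le one_pos hs
  rcases le_or_gt s S with h | h
  · have h1 : s ^ (q-1) ≤ s ^ (q+1) :=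
      Real.rpow_le_rpow_of_exponent_le hs (by linarith)
    have h2 : s ^ (q+1) ≤ S ^ (q+1) := Real.rpow_le_rpow hs0.le h (by linarith)
    have h3 : (0:ℝ) ≤ ε * s ^ q := mul_nonneg hε.le (Real.rpow_nonneg hs0.le _)
    linarith
  · have hinv : s⁻¹ ≤ ε := by
      have h4 : 1/ε ≤ s := le_of_lt (lt_of_le_of_lt (le_max_right _ _) h)
      rw [one_div] at h4
      exact inv_le_of_inv_le₀ hε h4
    have e1 : s ^ (q-1) = s ^ q * s⁻¹ := by
      rw [← Real.rpow_neg_one s, ← Real.rpow_add hs0]; ring_nf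
    have h5 : s ^ q * s⁻¹ ≤ s ^ q * ε :=
      mul_le_mul_of_nonneg_left hinv (Real.rpow_nonneg hs0.le _)
    have h6 : (0:ℝ) < S ^ (q+1) := Real.rpow_pos_of_pos hS0 _
    nlinarith

set_option maxHeartbeats 2000000 in
theorem stmt_5 (d : ℕ) (hd : 1 ≤ d)
    (b₀ b₁ b : EuclideanSpace ℝ (Fin d) → EuclideanSpace ℝ (Fin d))
    (hb : ∀ x, b x = b₀ x + b₁ x)
    (lamStar Cstar : ℝ) (hlam : 0 < lamStar) (hCstar : 0 < Cstar)
    (hb₁ : ∀ x, ⟪x, b₁ x⟫ ≤ -(lamStar * ‖x‖ ^ 2) + Cstar)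
    (L α : ℝ) (hL : 0 < L) (hα : α ∈ Set.Ioo (0:ℝ) 1)
    (hb₀ : ∀ x, ‖b₀ x‖ ≤ L * (1 + ‖x‖ ^ α))
    (p : ℝ) (hp : 0 < p) :
    ∃ lamV CV : ℝ, 0 < lamV ∧ 0 < CV ∧ lamV = p * lamStar / 4 ∧
      ∀ x : EuclideanSpace ℝ (Fin d),
        ⟪(p * (1 + ‖x‖ ^ 2) ^ (p / 2 - 1)) • x, b x⟫
          + (1 / 2) * (p * (1 + ‖x‖ ^ 2) ^ (p / 2 - 1)
              * ((d : ℝ) + (p - 2) * ‖x‖ ^ 2 / (1 + ‖x‖ ^ 2)))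
        ≤ -(lamV * (1 + ‖x‖ ^ 2) ^ (p / 2)) + CV := by
  obtain ⟨hα0, hα1⟩ := hα
  have hεL : 0 < lamStar / (4 * L) := by positivity
  obtain ⟨C₁, hC₁pos, hC₁⟩ := aux2 1 (lamStar/(4*L)) one_pos.le one_lt_two hεL
  obtain ⟨C₂, hC₂pos, hC₂⟩ := aux2 (1+α) (lamStar/(4*L)) (by linarith) (by linarith) hεL
  have habs : (0:ℝ) ≤ |p - 2| := abs_nonneg _
  have hdpos : (0:ℝ) < (d:ℝ) := by exact_mod_cast Nat.lt_of_lt_of_le Nat.zero_lt_one hd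
  set K : ℝ := Cstar + L*C₁ + L*C₂ + ((d:ℝ) + |p - 2|)/2 + lamStar/2 with hK
  have hKpos : 0 < K := by positivity
  obtain ⟨C₃, hC₃pos, hC₃⟩ := aux1 (p/2) (lamStar/(4*K)) (by positivity) (by positivity)
  refine ⟨p*lamStar/4, p*K*C₃, by positivity, by positivity, rfl, ?_⟩
  intro x
  have hinner := real_inner_le_norm x (b₀ x)
  have hb0x := hb₀ x
  have hb1x := hb₁ x
  rw [real_inner_smul_left, hb x, inner_add_right]
  set A₀ : ℝ := ⟪x, b₀ x⟫ with hA₀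
  set A₁ : ℝ := ⟪x, b₁ x⟫ with hA₁
  clear_value A₀ A₁
  set N : ℝ := ‖b₀ x‖ with hN
  have hN0 : (0:ℝ) ≤ N := norm_nonneg _
  clear_value N
  set r : ℝ := ‖x‖ with hr
  have hr0 : (0:ℝ) ≤ r := norm_nonneg x
  clear_value r
  clear hr hN hA₀ hA₁ hb hb₀ hb₁ x
  -- now pure real arithmetic
  set s : ℝ := 1 + r^2 with hs
  have hs1 : (1:ℝ) ≤ s := by nlinarith [sq_nonneg r]
  have hs0 : (0:ℝ) < s := by linarith
  clear_value s
  have hGpos : 0 < s ^ (p/2 - 1) := Real.rpow_pos_of_pos hs0 _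
  have hSpos : 0 < s ^ (p/2) := Real.rpow_pos_of_pos hs0 _
  have hGS : s ^ (p/2 - 1) * s = s ^ (p/2) := by
    rw [← Real.rpow_add_one hs0.ne']; norm_num
  have h3 : r * r ^ α = r ^ (1+α) := by
    rcases hr0.eq_or_lt with h | h
    · rw [← h, Real.zero_rpow (by linarith), Real.zero_rpow (by linarith), mul_zero]
    · rw [Real.rpow_add h, Real.rpow_one]
  have hB0 : A₀ ≤ L*r + L*(r ^ (1+α)) := by
    calc A₀ ≤ r * N := hinner
      _ ≤ r * (L * (1 + r ^ α)) := mul_le_mul_of_nonneg_left hb0x hr0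
      _ = L*r + L*(r * r ^ α) := by ring
      _ = L*r + L*(r ^ (1+α)) := by rw [h3]
  have h4 := hC₁ r hr0
  rw [Real.rpow_one] at h4
  have hLr : L * r ≤ lamStar/4 * r^2 + L*C₁ := by
    have h4' := mul_le_mul_of_nonneg_left h4 hL.le
    have hLcancel : L * (lamStar/(4*L)) = lamStar/4 := by field_simp
    nlinarith
  have h5 := hC₂ r hr0
  have hLp : L * r ^ (1+α) ≤ lamStar/4 * r^2 + L*C₂ := by
    have h5' := mul_le_mul_of_nonneg_left h5 hL.le
    have hLcancel : L * (lamStar/(4*L)) = lamStar/4 := by field_simp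
    nlinarith
  have hLap : (d:ℝ) + (p-2)*r^2/s ≤ (d:ℝ) + |p - 2| := by
    have ht0 : (0:ℝ) ≤ r^2/s := by positivity
    have ht1 : r^2/s ≤ 1 := by rw [div_le_one hs0]; nlinarith
    have e1 : (p-2)*(r^2/s) ≤ |p - 2| * (r^2/s) :=
      mul_le_mul_of_nonneg_right (le_abs_self _) ht0
    have e2 : |p - 2| * (r^2/s) ≤ |p - 2| * 1 :=
      mul_le_mul_of_nonneg_left ht1 habs
    rw [mul_div_assoc]
    nlinarith
  have hsum : A₀ + A₁ + ((d:ℝ) + (p-2)*r^2/s)/2 ≤ -(lamStar/2)*s + K := by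
    rw [hK]
    have hss : lamStar * s = lamStar + lamStar * r^2 := by rw [hs]; ring
    linarith [hB0, hb1x, hLr, hLp, hLap, hss]
  have h10 := hC₃ s hs1
  calc (p * s ^ (p/2 - 1)) * (A₀ + A₁)
        + 1/2 * (p * s ^ (p/2 - 1) * ((d:ℝ) + (p-2)*r^2/s))
      = (p * s ^ (p/2 - 1)) * (A₀ + A₁ + ((d:ℝ) + (p-2)*r^2/s)/2) := by ring
    _ ≤ (p * s ^ (p/2 - 1)) * (-(lamStar/2)*s + K) :=
        mul_le_mul_of_nonneg_left hsum (by positivity)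
    _ = -(p*lamStar/2) * (s ^ (p/2)) + p*K*(s ^ (p/2 - 1)) := by rw [← hGS]; ring
    _ ≤ -(p*lamStar/2) * (s ^ (p/2)) + p*K*(lamStar/(4*K) * s ^ (p/2) + C₃) := by
        have := mul_le_mul_of_nonneg_left h10 (by positivity : (0:ℝ) ≤ p*K)
        linarith
    _ = -(p*lamStar/4 * s ^ (p/2)) + p*K*C₃ := by field_simp; ring
end

section
/- For every δ ∈ (0, 2^{−1/θ}], every β > 0 and every x ∈ ℝ^d: |x − π^{(δ,θ)}(x)| ≤ |x|^{1+β}·(δ^{−θ}/2)^{−β/ℓ₀}; in particular, taking β = ℓ₀/(2θ), one has |x − π^{(δ,θ)}(x)| ≤ 2^{1/(2θ)}·δ^{1/2}·|x|^{1+ℓ₀/(2θ)}. -/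
open Real Set

/- The truncation map `π^{(δ,θ)}(x) = (min(|x|, (δ^{-θ}-1)^{1/ℓ₀})) x/|x|`, with `π(0) = 0`. -/
open Classical in
noncomputable def truncMap {d : ℕ} (δ θ ℓ₀ : ℝ) (x : EuclideanSpace ℝ (Fin d)) :
    EuclideanSpace ℝ (Fin d) :=
  if x = 0 then 0 else (min ‖x‖ ((δ ^ (-θ) - 1) ^ (1 / ℓ₀))) • ‖x‖⁻¹ • x

theorem stmt_6 (d : ℕ) (hd : 1 ≤ d) (ℓ₀ θ : ℝ) (hℓ₀ : 0 < ℓ₀)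
    (hθ : θ ∈ Set.Ioo (0:ℝ) (1/2))
    (δ : ℝ) (hδ : 0 < δ) (hδ' : δ ≤ (2:ℝ) ^ (-(1/θ))) :
    (∀ β > (0:ℝ), ∀ x : EuclideanSpace ℝ (Fin d),
        ‖x - truncMap δ θ ℓ₀ x‖ ≤ ‖x‖ ^ (1 + β) * (δ ^ (-θ) / 2) ^ (-(β / ℓ₀)))
    ∧ (∀ x : EuclideanSpace ℝ (Fin d),
        ‖x - truncMap δ θ ℓ₀ x‖ ≤ 2 ^ (1 / (2 * θ)) * δ ^ ((1:ℝ)/2) * ‖x‖ ^ (1 + ℓ₀ / (2 * θ))) := by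
  obtain ⟨hθ0, hθ2⟩ := hθ
  have hθne : θ ≠ 0 := ne_of_gt hθ0
  -- δ^{-θ} ≥ 2
  have h2 : (2:ℝ) ≤ δ ^ (-θ) := by
    have h := Real.rpow_le_rpow_of_nonpos hδ hδ' (neg_nonpos.mpr hθ0.le)
    have he : ((2:ℝ) ^ (-(1/θ))) ^ (-θ) = 2 := by
      rw [← Real.rpow_mul (by norm_num), show -(1/θ) * -θ = (1:ℝ) by field_simp,
        Real.rpow_one]
    linarith [h, he.ge, he.le]
  have hA1 : (1:ℝ) ≤ δ ^ (-θ) / 2 := by linarith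
  have hA0 : (0:ℝ) < δ ^ (-θ) / 2 := by linarith
  set R := (δ ^ (-θ) - 1) ^ (1 / ℓ₀) with hRdef
  have hB : δ ^ (-θ) / 2 ≤ δ ^ (-θ) - 1 := by linarith
  have hS0 : (0:ℝ) < (δ ^ (-θ) / 2) ^ (1 / ℓ₀) := Real.rpow_pos_of_pos hA0 _
  have hSR : (δ ^ (-θ) / 2) ^ (1 / ℓ₀) ≤ R :=
    Real.rpow_le_rpow hA0.le hB (by positivity)
  have hR0 : (0:ℝ) < R := lt_of_lt_of_le hS0 hSR
  have main : ∀ β > (0:ℝ), ∀ x : EuclideanSpace ℝ (Fin d),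
      ‖x - truncMap δ θ ℓ₀ x‖ ≤ ‖x‖ ^ (1 + β) * (δ ^ (-θ) / 2) ^ (-(β / ℓ₀)) := by
    intro β hβ x
    have hRHS : 0 ≤ ‖x‖ ^ (1 + β) * (δ ^ (-θ) / 2) ^ (-(β / ℓ₀)) := by positivity
    by_cases hx : x = 0
    · simp only [truncMap, hx, if_true, norm_zero, sub_zero]
      positivity
    · rw [truncMap, if_neg hx]
      have hxn : (0:ℝ) < ‖x‖ := norm_pos_iff.mpr hx
      by_cases hle : ‖x‖ ≤ R
      · rw [min_eq_left hle, smul_smul, mul_inv_cancel₀ (ne_of_gt hxn), one_smul, sub_self,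
          norm_zero]
        exact hRHS
      · push_neg at hle
        rw [min_eq_right hle.le]
        have heq : x - R • ‖x‖⁻¹ • x = (1 - R * ‖x‖⁻¹) • x := by
          rw [sub_smul, one_smul, smul_smul]
        rw [heq, norm_smul, Real.norm_eq_abs]
        have h1 : R * ‖x‖⁻¹ < 1 := by
          rw [mul_inv_lt_iff₀ hxn, one_mul]; exact hle
        have h1' : 0 < R * ‖x‖⁻¹ := by positivity
        rw [abs_of_nonneg (by linarith)]
        have hmain : (1 - R * ‖x‖⁻¹) * ‖x‖ ≤ ‖x‖ := by
          nlinarith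
        refine hmain.trans ?_
        -- ‖x‖ ≤ ‖x‖^{1+β} * (δ^{-θ}/2)^{-(β/ℓ₀)}
        have hpow : (δ ^ (-θ) / 2) ^ (β / ℓ₀) ≤ ‖x‖ ^ β := by
          have : (δ ^ (-θ) / 2) ^ (β / ℓ₀) = ((δ ^ (-θ) / 2) ^ (1 / ℓ₀)) ^ β := by
            rw [← Real.rpow_mul hA0.le]
            congr 1; field_simp
          rw [this]
          exact Real.rpow_le_rpow hS0.le (hSR.trans hle.le) hβ.le
        have hx1b : ‖x‖ ^ (1 + β) = ‖x‖ * ‖x‖ ^ β := by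
          rw [Real.rpow_add hxn, Real.rpow_one]
        rw [Real.rpow_neg hA0.le, ← div_eq_mul_inv,
          le_div_iff₀ (Real.rpow_pos_of_pos hA0 _), hx1b]
        exact mul_le_mul_of_nonneg_left hpow hxn.le
  refine ⟨main, ?_⟩
  intro x
  have hβ : (0:ℝ) < ℓ₀ / (2 * θ) := by positivity
  have h := main (ℓ₀ / (2 * θ)) hβ x
  have hexp : ℓ₀ / (2 * θ) / ℓ₀ = 1 / (2 * θ) := by
    field_simp
  have hkey : (δ ^ (-θ) / 2) ^ (-(1 / (2 * θ))) = 2 ^ (1 / (2 * θ)) * δ ^ ((1:ℝ)/2) := by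
    rw [Real.div_rpow (Real.rpow_nonneg hδ.le _) (by norm_num),
      ← Real.rpow_mul hδ.le, Real.rpow_neg (by norm_num), div_eq_mul_inv, inv_inv]
    rw [show -θ * -(1 / (2 * θ)) = (1:ℝ)/2 by field_simp]
    ring
  rw [hexp, hkey] at h
  calc ‖x - truncMap δ θ ℓ₀ x‖ ≤ ‖x‖ ^ (1 + ℓ₀ / (2 * θ)) * (2 ^ (1 / (2 * θ)) * δ ^ ((1:ℝ)/2)) := h
    _ = 2 ^ (1 / (2 * θ)) * δ ^ ((1:ℝ)/2) * ‖x‖ ^ (1 + ℓ₀ / (2 * θ)) := by ring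
end

section
/- For all δ ∈ (0, 2^{−1/θ}] and all x, y ∈ ℝ^d: |b(x) − b^{(δ)}(y)| ≤ K₂|x−y|^α + L₀(1+|x|^{ℓ₀}+|y|^{ℓ₀})|x−y| + 2^{1/(2θ)}·δ^{1/2}·(λ* + L₀(1+2|y|^{ℓ₀}))·|y|^{1+ℓ₀/(2θ)}. -/
open scoped RealInnerProductSpace
open Real Set

/-- The modified truncated Euler drift
`b^{(δ)}(x) = -λ* x + b₀(x) + (b₁(π^{(δ,θ)}(x)) + λ* π^{(δ,θ)}(x))`. -/
noncomputable def truncDrift {d : ℕ}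
    (b₀ b₁ : EuclideanSpace ℝ (Fin d) → EuclideanSpace ℝ (Fin d))
    (lamStar δ θ ℓ₀ : ℝ) (x : EuclideanSpace ℝ (Fin d)) : EuclideanSpace ℝ (Fin d) :=
  -(lamStar • x) + b₀ x + (b₁ (truncMap δ θ ℓ₀ x) + lamStar • truncMap δ θ ℓ₀ x)

lemma norm_sub_truncMap {d : ℕ} (δ θ ℓ₀ : ℝ)
    (hR : 0 ≤ (δ ^ (-θ) - 1) ^ (1 / ℓ₀)) (y : EuclideanSpace ℝ (Fin d)) :
    ‖y - truncMap δ θ ℓ₀ y‖ = ‖y‖ - min ‖y‖ ((δ ^ (-θ) - 1) ^ (1 / ℓ₀)) := by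
  set R := (δ ^ (-θ) - 1) ^ (1 / ℓ₀) with hRdef
  by_cases hy : y = 0
  · simp [truncMap, hy, min_eq_left hR]
  · have hy' : (0:ℝ) < ‖y‖ := norm_pos_iff.mpr hy
    have hc1 : min ‖y‖ R ≤ ‖y‖ := min_le_left _ _
    rw [truncMap, if_neg hy, ← hRdef, smul_smul]
    have heq : y - (min ‖y‖ R * ‖y‖⁻¹) • y = (1 - min ‖y‖ R * ‖y‖⁻¹) • y := by
      rw [sub_smul, one_smul]
    have hle1 : min ‖y‖ R * ‖y‖⁻¹ ≤ 1 := by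
      rw [mul_inv_le_iff₀ hy', one_mul]; exact hc1
    rw [heq, norm_smul, Real.norm_eq_abs, abs_of_nonneg (by linarith), sub_mul, one_mul,
        mul_assoc, inv_mul_cancel₀ hy'.ne', mul_one]

lemma norm_truncMap_le {d : ℕ} (δ θ ℓ₀ : ℝ)
    (hR : 0 ≤ (δ ^ (-θ) - 1) ^ (1 / ℓ₀)) (y : EuclideanSpace ℝ (Fin d)) :
    ‖truncMap δ θ ℓ₀ y‖ ≤ ‖y‖ := by
  by_cases hy : y = 0
  · simp [truncMap, hy]
  · have hy' : (0:ℝ) < ‖y‖ := norm_pos_iff.mpr hy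
    rw [truncMap, if_neg hy, norm_smul, norm_smul, Real.norm_eq_abs, Real.norm_eq_abs,
        abs_of_nonneg (le_min (norm_nonneg y) hR), abs_of_nonneg (inv_nonneg.mpr hy'.le),
        inv_mul_cancel₀ hy'.ne', mul_one]
    exact min_le_left _ _

lemma key_bound {d : ℕ} (δ θ ℓ₀ : ℝ) (hδ : 0 < δ) (hδ2 : δ ≤ (2:ℝ) ^ (-(1/θ)))
    (hθ : 0 < θ) (hℓ₀ : 0 < ℓ₀) (y : EuclideanSpace ℝ (Fin d)) :
    ‖y - truncMap δ θ ℓ₀ y‖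
      ≤ 2 ^ (1 / (2 * θ)) * δ ^ ((1:ℝ)/2) * ‖y‖ ^ (1 + ℓ₀ / (2 * θ)) := by
  have h2 : (2:ℝ) ≤ δ ^ (-θ) := by
    have h1 : ((2:ℝ) ^ (-(1/θ))) ^ (-θ) ≤ δ ^ (-θ) :=
      Real.rpow_le_rpow_of_nonpos hδ hδ2 (by linarith [neg_nonpos.mpr hθ.le])
    have h2' : ((2:ℝ) ^ (-(1/θ))) ^ (-θ) = 2 := by
      rw [← Real.rpow_mul (by norm_num)]
      have : (-(1/θ)) * (-θ) = 1 := by field_simp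
      rw [this, Real.rpow_one]
    linarith
  have hR1 : (1:ℝ) ≤ (δ ^ (-θ) - 1) ^ (1 / ℓ₀) := by
    calc (1:ℝ) = (1:ℝ) ^ (1/ℓ₀) := (Real.one_rpow _).symm
    _ ≤ (δ ^ (-θ) - 1) ^ (1 / ℓ₀) :=
        Real.rpow_le_rpow (by norm_num) (by linarith) (by positivity)
  have hR : (0:ℝ) ≤ (δ ^ (-θ) - 1) ^ (1 / ℓ₀) := by linarith
  set R := (δ ^ (-θ) - 1) ^ (1 / ℓ₀) with hRdef
  rw [norm_sub_truncMap δ θ ℓ₀ hR y]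
  have hrhs : 0 ≤ 2 ^ (1 / (2 * θ)) * δ ^ ((1:ℝ)/2) * ‖y‖ ^ (1 + ℓ₀ / (2 * θ)) := by
    positivity
  rcases le_or_gt ‖y‖ R with h | h
  · rw [min_eq_left h]; simpa using hrhs
  · rw [min_eq_right h.le]
    have hy' : (0:ℝ) < ‖y‖ := lt_of_le_of_lt (by linarith) h
    -- R^ℓ₀ = δ^{-θ} - 1
    have hRl : R ^ ℓ₀ = δ ^ (-θ) - 1 := by
      rw [hRdef, ← Real.rpow_mul (by linarith)]
      rw [show (1/ℓ₀) * ℓ₀ = 1 by field_simp, Real.rpow_one]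
    have h1 : δ ^ (-θ) / 2 ≤ ‖y‖ ^ ℓ₀ := by
      have := Real.rpow_le_rpow hR h.le hℓ₀.le
      rw [hRl] at this; linarith
    have h2θ : (0:ℝ) < 1 / (2 * θ) := by positivity
    have h2exp : (‖y‖ ^ ℓ₀) ^ (1/(2*θ)) = ‖y‖ ^ (ℓ₀ / (2*θ)) := by
      rw [← Real.rpow_mul hy'.le]; ring_nf
    have h3 : (δ ^ (-θ) / 2) ^ (1/(2*θ)) ≤ ‖y‖ ^ (ℓ₀ / (2*θ)) := by
      rw [← h2exp]
      exact Real.rpow_le_rpow (by positivity) h1 h2θ.le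
    have h4 : (δ ^ (-θ) / 2) ^ (1/(2*θ)) = δ ^ (-((1:ℝ)/2)) / 2 ^ (1/(2*θ)) := by
      have hθne : θ ≠ 0 := hθ.ne'
      rw [Real.div_rpow (by positivity) (by norm_num), ← Real.rpow_mul hδ.le,
        show (-θ) * (1/(2*θ)) = -((1:ℝ)/2) from by field_simp]
    have hone : (1:ℝ) ≤ 2 ^ (1 / (2 * θ)) * δ ^ ((1:ℝ)/2) * ‖y‖ ^ (ℓ₀ / (2*θ)) := by
      have h5 : δ ^ (-((1:ℝ)/2)) / 2 ^ (1/(2*θ)) ≤ ‖y‖ ^ (ℓ₀ / (2*θ)) := h4 ▸ h3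
      have h6 : (2:ℝ) ^ (1/(2*θ)) * δ ^ ((1:ℝ)/2)
          * (δ ^ (-((1:ℝ)/2)) / 2 ^ (1/(2*θ))) = 1 := by
        have e1 : δ ^ ((1:ℝ)/2) * δ ^ (-((1:ℝ)/2)) = 1 := by
          rw [← Real.rpow_add hδ]; norm_num
        have e2 : (0:ℝ) < (2:ℝ) ^ (1/(2*θ)) := by positivity
        field_simp
        nlinarith [e1]
      have e2 : (0:ℝ) < (2:ℝ) ^ (1/(2*θ)) * δ ^ ((1:ℝ)/2) := by positivity
      calc (1:ℝ) = 2 ^ (1/(2*θ)) * δ ^ ((1:ℝ)/2)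
          * (δ ^ (-((1:ℝ)/2)) / 2 ^ (1/(2*θ))) := h6.symm
      _ ≤ 2 ^ (1 / (2 * θ)) * δ ^ ((1:ℝ)/2) * ‖y‖ ^ (ℓ₀ / (2*θ)) :=
          mul_le_mul_of_nonneg_left h5 e2.le
    have hsplit : ‖y‖ ^ (1 + ℓ₀ / (2 * θ)) = ‖y‖ * ‖y‖ ^ (ℓ₀ / (2*θ)) := by
      rw [Real.rpow_add hy', Real.rpow_one]
    calc ‖y‖ - R ≤ ‖y‖ := by linarith
    _ = 1 * ‖y‖ := (one_mul _).symm
    _ ≤ (2 ^ (1 / (2 * θ)) * δ ^ ((1:ℝ)/2) * ‖y‖ ^ (ℓ₀ / (2*θ))) * ‖y‖ :=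
        mul_le_mul_of_nonneg_right hone hy'.le
    _ = 2 ^ (1 / (2 * θ)) * δ ^ ((1:ℝ)/2) * ‖y‖ ^ (1 + ℓ₀ / (2 * θ)) := by
        rw [hsplit]; ring

theorem stmt_8 (d : ℕ) (hd : 1 ≤ d)
    (b₀ b₁ b : EuclideanSpace ℝ (Fin d) → EuclideanSpace ℝ (Fin d))
    (hb : ∀ x, b x = b₀ x + b₁ x)
    (K₂ α : ℝ) (hK₂ : 0 < K₂) (hα : α ∈ Set.Ioo (0:ℝ) 1)
    (hb₀ : ∀ x y, ‖b₀ x - b₀ y‖ ≤ K₂ * ‖x - y‖ ^ α)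
    (L₀ ℓ₀ : ℝ) (hL₀ : 0 < L₀) (hℓ₀ : 0 < ℓ₀)
    (hb₁ : ∀ x y, ‖b₁ x - b₁ y‖ ≤ L₀ * (1 + ‖x‖ ^ ℓ₀ + ‖y‖ ^ ℓ₀) * ‖x - y‖)
    (lamStar Cstar : ℝ) (hlam : 0 < lamStar) (hCstar : 0 < Cstar)
    (hdiss : ∀ x, ⟪x, b₁ x⟫ ≤ -(lamStar * ‖x‖ ^ 2) + Cstar)
    (θ : ℝ) (hθ : θ ∈ Set.Ioo (0:ℝ) (1/2)) :
    ∀ δ : ℝ, 0 < δ → δ ≤ (2:ℝ) ^ (-(1/θ)) →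
      ∀ x y : EuclideanSpace ℝ (Fin d),
        ‖b x - truncDrift b₀ b₁ lamStar δ θ ℓ₀ y‖
          ≤ K₂ * ‖x - y‖ ^ α + L₀ * (1 + ‖x‖ ^ ℓ₀ + ‖y‖ ^ ℓ₀) * ‖x - y‖
            + 2 ^ (1 / (2 * θ)) * δ ^ ((1:ℝ)/2)
              * (lamStar + L₀ * (1 + 2 * ‖y‖ ^ ℓ₀)) * ‖y‖ ^ (1 + ℓ₀ / (2 * θ)) := by
  intro δ hδ hδ2 x y
  obtain ⟨hθ0, hθhalf⟩ := hθ
  -- R ≥ 0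
  have h2 : (2:ℝ) ≤ δ ^ (-θ) := by
    have h1 : ((2:ℝ) ^ (-(1/θ))) ^ (-θ) ≤ δ ^ (-θ) :=
      Real.rpow_le_rpow_of_nonpos hδ hδ2 (by linarith [neg_nonpos.mpr hθ0.le])
    have h2' : ((2:ℝ) ^ (-(1/θ))) ^ (-θ) = 2 := by
      rw [← Real.rpow_mul (by norm_num)]
      have : (-(1/θ)) * (-θ) = 1 := by field_simp
      rw [this, Real.rpow_one]
    linarith
  have hR : (0:ℝ) ≤ (δ ^ (-θ) - 1) ^ (1 / ℓ₀) := Real.rpow_nonneg (by linarith) _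
  set pp := truncMap δ θ ℓ₀ y with hpp
  have hpple : ‖pp‖ ≤ ‖y‖ := norm_truncMap_le δ θ ℓ₀ hR y
  have hpppow : ‖pp‖ ^ ℓ₀ ≤ ‖y‖ ^ ℓ₀ :=
    Real.rpow_le_rpow (norm_nonneg _) hpple hℓ₀.le
  have hdiff : ‖y - pp‖
      ≤ 2 ^ (1 / (2 * θ)) * δ ^ ((1:ℝ)/2) * ‖y‖ ^ (1 + ℓ₀ / (2 * θ)) :=
    key_bound δ θ ℓ₀ hδ hδ2 hθ0 hℓ₀ y
  have hdecomp : b x - truncDrift b₀ b₁ lamStar δ θ ℓ₀ y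
      = (b₀ x - b₀ y) + (b₁ x - b₁ y) + ((b₁ y - b₁ pp) + lamStar • (y - pp)) := by
    rw [hb x]
    simp only [truncDrift, ← hpp, smul_sub]
    abel
  have h3 : ‖(b₁ y - b₁ pp) + lamStar • (y - pp)‖
      ≤ (lamStar + L₀ * (1 + 2 * ‖y‖ ^ ℓ₀)) * ‖y - pp‖ := by
    calc ‖(b₁ y - b₁ pp) + lamStar • (y - pp)‖
        ≤ ‖b₁ y - b₁ pp‖ + ‖lamStar • (y - pp)‖ := norm_add_le _ _
    _ = ‖b₁ y - b₁ pp‖ + lamStar * ‖y - pp‖ := by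
        rw [norm_smul, Real.norm_eq_abs, abs_of_pos hlam]
    _ ≤ L₀ * (1 + ‖y‖ ^ ℓ₀ + ‖pp‖ ^ ℓ₀) * ‖y - pp‖ + lamStar * ‖y - pp‖ := by
        have := hb₁ y pp; linarith
    _ ≤ (lamStar + L₀ * (1 + 2 * ‖y‖ ^ ℓ₀)) * ‖y - pp‖ := by
        have hnn : (0:ℝ) ≤ ‖y - pp‖ := norm_nonneg _
        nlinarith [mul_le_mul_of_nonneg_left (mul_le_mul_of_nonneg_right hpppow hnn) hL₀.le,
          mul_nonneg hlam.le hnn]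
  have hcoef : (0:ℝ) ≤ lamStar + L₀ * (1 + 2 * ‖y‖ ^ ℓ₀) := by positivity
  have h4 : ‖(b₁ y - b₁ pp) + lamStar • (y - pp)‖
      ≤ 2 ^ (1 / (2 * θ)) * δ ^ ((1:ℝ)/2)
          * (lamStar + L₀ * (1 + 2 * ‖y‖ ^ ℓ₀)) * ‖y‖ ^ (1 + ℓ₀ / (2 * θ)) := by
    calc ‖(b₁ y - b₁ pp) + lamStar • (y - pp)‖
        ≤ (lamStar + L₀ * (1 + 2 * ‖y‖ ^ ℓ₀)) * ‖y - pp‖ := h3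
    _ ≤ (lamStar + L₀ * (1 + 2 * ‖y‖ ^ ℓ₀))
          * (2 ^ (1 / (2 * θ)) * δ ^ ((1:ℝ)/2) * ‖y‖ ^ (1 + ℓ₀ / (2 * θ))) :=
        mul_le_mul_of_nonneg_left hdiff hcoef
    _ = 2 ^ (1 / (2 * θ)) * δ ^ ((1:ℝ)/2)
          * (lamStar + L₀ * (1 + 2 * ‖y‖ ^ ℓ₀)) * ‖y‖ ^ (1 + ℓ₀ / (2 * θ)) := by ring
  calc ‖b x - truncDrift b₀ b₁ lamStar δ θ ℓ₀ y‖
      = ‖(b₀ x - b₀ y) + (b₁ x - b₁ y) + ((b₁ y - b₁ pp) + lamStar • (y - pp))‖ := by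
        rw [hdecomp]
  _ ≤ ‖b₀ x - b₀ y‖ + ‖b₁ x - b₁ y‖ + ‖(b₁ y - b₁ pp) + lamStar • (y - pp)‖ :=
        norm_add₃_le
  _ ≤ K₂ * ‖x - y‖ ^ α + L₀ * (1 + ‖x‖ ^ ℓ₀ + ‖y‖ ^ ℓ₀) * ‖x - y‖
      + 2 ^ (1 / (2 * θ)) * δ ^ ((1:ℝ)/2)
        * (lamStar + L₀ * (1 + 2 * ‖y‖ ^ ℓ₀)) * ‖y‖ ^ (1 + ℓ₀ / (2 * θ)) := by
      have := hb₀ x y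
      have := hb₁ x y
      linarith
end

section
/- Set δ₀ := min( 2^{−1/θ}, (λ*/(8(2λ* + α + L₀)²))^{1/(1−2θ)} ). There exists a constant C₁ > 0, depending only on λ*, C*, K₂, α, L₀, |b₀(0)|, |b₁(0)| and θ, such that for all δ ∈ (0, δ₀] and all x ∈ ℝ^d: ⟨x, b^{(δ)}(x)⟩ + δ|b^{(δ)}(x)|² ≤ −(λ*/2)|x|² + C₁. -/
open scoped RealInnerProductSpace
open Real Set


section helperYoung

lemma young_rpow {p q ε : ℝ} (t : ℝ) (hp : 0 < p) (hpq : p < q) (hε : 0 < ε) (ht : 0 ≤ t) :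
    t ^ p ≤ ε * t ^ q + ε ^ (-(p / (q - p))) := by
  have hqp : 0 < q - p := sub_pos.2 hpq
  have hs0 : 0 < ε ^ (-(1 / (q - p))) := Real.rpow_pos_of_pos hε _
  set s : ℝ := ε ^ (-(1 / (q - p))) with hs
  rcases le_total t s with h | h
  · have h1 : t ^ p ≤ s ^ p := Real.rpow_le_rpow ht h hp.le
    have h2 : s ^ p = ε ^ (-(p / (q - p))) := by
      rw [hs, ← Real.rpow_mul hε.le]
      congr 1
      ring
    have h3 : 0 ≤ ε * t ^ q := mul_nonneg hε.le (Real.rpow_nonneg ht q)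
    linarith [h1.trans_eq h2]
  · have ht0 : 0 < t := hs0.trans_le h
    have h1 : s ^ (q - p) ≤ t ^ (q - p) := Real.rpow_le_rpow hs0.le h hqp.le
    have h2 : s ^ (q - p) = ε⁻¹ := by
      rw [hs, ← Real.rpow_mul hε.le, show -(1/(q-p)) * (q-p) = -1 by field_simp,
        Real.rpow_neg_one]
    have h3 : t ^ q = t ^ p * t ^ (q - p) := by
      rw [← Real.rpow_add ht0]; ring_nf
    have h4 : 0 < t ^ p := Real.rpow_pos_of_pos ht0 _
    have h5 : 0 ≤ ε ^ (-(p/(q-p))) := (Real.rpow_pos_of_pos hε _).le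
    have h6 : t ^ p * ε⁻¹ ≤ t ^ p * t ^ (q - p) := by
      apply mul_le_mul_of_nonneg_left _ h4.le
      rw [← h2]; exact h1
    have h7 : ε * (t ^ p * ε⁻¹) = t ^ p := by field_simp
    have h8 : ε * (t ^ p * t ^ (q - p)) = ε * t ^ q := by rw [h3]
    have h9 := mul_le_mul_of_nonneg_left h6 hε.le
    linarith

lemma young_lin {a ε : ℝ} (t : ℝ) (hε : 0 < ε) : a * t ≤ ε * t ^ 2 + a ^ 2 / (4 * ε) := by
  have h4 : (0:ℝ) < 4 * ε := by linarith
  have h : a * t - ε * t ^ 2 ≤ a ^ 2 / (4 * ε) := by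
    rw [le_div_iff₀ h4]
    nlinarith [sq_nonneg (2 * ε * t - a)]
  linarith

end helperYoung

set_option maxHeartbeats 3000000 in
/-- The constant `C₁` depends only on `λ*, C*, K₂, α, L₀, |b₀(0)|, |b₁(0)|, θ`:
it is chosen before the dimension `d`, the exponent `ℓ₀` and the drifts `b₀, b₁`
(whose values at `0` are controlled by `M₀, M₁`). -/
theorem stmt_9 (K₂ α L₀ θ lamStar Cstar M₀ M₁ : ℝ)
    (hK₂ : 0 < K₂) (hα : α ∈ Set.Ioo (0:ℝ) 1) (hL₀ : 0 < L₀)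
    (hθ : θ ∈ Set.Ioo (0:ℝ) (1/2)) (hlam : 0 < lamStar) (hCstar : 0 < Cstar)
    (hM₀ : 0 ≤ M₀) (hM₁ : 0 ≤ M₁) :
    ∃ C₁ > (0:ℝ), ∀ ℓ₀ > (0:ℝ), ∀ d : ℕ, 1 ≤ d →
      ∀ b₀ b₁ : EuclideanSpace ℝ (Fin d) → EuclideanSpace ℝ (Fin d),
        (∀ x y, ‖b₀ x - b₀ y‖ ≤ K₂ * ‖x - y‖ ^ α) →
        (∀ x y, ‖b₁ x - b₁ y‖ ≤ L₀ * (1 + ‖x‖ ^ ℓ₀ + ‖y‖ ^ ℓ₀) * ‖x - y‖) →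
        (∀ x, ⟪x, b₁ x⟫ ≤ -(lamStar * ‖x‖ ^ 2) + Cstar) →
        ‖b₀ (0 : EuclideanSpace ℝ (Fin d))‖ ≤ M₀ →
        ‖b₁ (0 : EuclideanSpace ℝ (Fin d))‖ ≤ M₁ →
        ∀ δ : ℝ, 0 < δ →
          δ ≤ min ((2:ℝ) ^ (-(1/θ)))
              ((lamStar / (8 * (2 * lamStar + α + L₀) ^ 2)) ^ (1 / (1 - 2 * θ))) →
          ∀ x : EuclideanSpace ℝ (Fin d),
            ⟪x, truncDrift b₀ b₁ lamStar δ θ ℓ₀ x⟫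
                + δ * ‖truncDrift b₀ b₁ lamStar δ θ ℓ₀ x‖ ^ 2
              ≤ -(lamStar / 2 * ‖x‖ ^ 2) + C₁ := by
  obtain ⟨hα0, hα1⟩ := hα
  obtain ⟨hθ0, hθh⟩ := hθ
  have h12θ : (0:ℝ) < 1 - 2 * θ := by linarith only [hθh]
  set Q : ℝ := 2 * lamStar + α + L₀ with hQdef
  have hQ : 0 < Q := by positivity
  set cB : ℝ := K₂ * (α / K₂) ^ (-(α / (1 - α))) with hcB
  have hcB0 : 0 < cB := by
    have := Real.rpow_pos_of_pos (div_pos hα0 hK₂) (-(α / (1 - α)))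
    positivity
  set cY : ℝ := K₂ * (lamStar / (16 * K₂)) ^ (-((1 + α) / (1 - α))) with hcY
  have hcY0 : 0 < cY := by
    have := Real.rpow_pos_of_pos (by positivity : (0:ℝ) < lamStar / (16 * K₂)) (-((1 + α) / (1 - α)))
    positivity
  set B : ℝ := cB + M₀ + M₁ with hB
  have hB0 : 0 < B := by positivity
  refine ⟨cY + 4 * (M₀ + Cstar) ^ 2 / lamStar + Cstar + 2 * B ^ 2 + 1, by positivity, ?_⟩
  intro ℓ₀ hℓ₀ d hd b₀ b₁ hb₀ hb₁ hdiss hM₀' hM₁' δ hδ hδle x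
  clear_value Q cB cY B
  have hδ1 : δ ≤ (2:ℝ) ^ (-(1/θ)) := (le_min_iff.1 hδle).1
  have hδ2 : δ ≤ (lamStar / (8 * Q ^ 2)) ^ (1 / (1 - 2 * θ)) := (le_min_iff.1 hδle).2
  have hδlt1 : δ < 1 :=
    lt_of_le_of_lt hδ1 (Real.rpow_lt_one_of_one_lt_of_neg one_lt_two
      (neg_lt_zero.2 (by positivity)))
  -- 2 ≤ δ^{-θ}
  have hεpos : (0:ℝ) < δ ^ (-θ) := Real.rpow_pos_of_pos hδ _
  have hε2 : (2:ℝ) ≤ δ ^ (-θ) := by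
    have h1 : δ ^ θ ≤ ((2:ℝ) ^ (-(1/θ))) ^ θ := Real.rpow_le_rpow hδ.le hδ1 hθ0.le
    have h2 : ((2:ℝ) ^ (-(1/θ))) ^ θ = (2:ℝ)⁻¹ := by
      rw [← Real.rpow_mul (by norm_num : (0:ℝ) ≤ 2),
        show -(1/θ) * θ = -1 by field_simp, Real.rpow_neg_one]
    have h3 : 0 < δ ^ θ := Real.rpow_pos_of_pos hδ _
    have h4 : δ ^ (-θ) = (δ ^ θ)⁻¹ := Real.rpow_neg hδ.le θ
    rw [h4]
    rw [h2] at h1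
    calc (2:ℝ) = ((2:ℝ)⁻¹)⁻¹ := by norm_num
    _ ≤ (δ ^ θ)⁻¹ := by
        apply inv_anti₀ h3 h1
  have hε1 : (1:ℝ) ≤ δ ^ (-θ) := by linarith only [hε2]
  have ha1 : (1:ℝ) ≤ δ ^ (-θ) - 1 := by linarith only [hε2]
  have ha0 : (0:ℝ) ≤ δ ^ (-θ) - 1 := by linarith only [hε2]
  set R : ℝ := (δ ^ (-θ) - 1) ^ (1 / ℓ₀) with hRdef
  clear_value R
  have hR1 : (1:ℝ) ≤ R := by
    rw [hRdef]
    calc (1:ℝ) = (1:ℝ) ^ (1/ℓ₀) := (Real.one_rpow _).symm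
    _ ≤ (δ ^ (-θ) - 1) ^ (1/ℓ₀) := Real.rpow_le_rpow (by norm_num) ha1 (by positivity)
  have hRl : R ^ ℓ₀ = δ ^ (-θ) - 1 := by
    rw [hRdef, ← Real.rpow_mul ha0, one_div, inv_mul_cancel₀ hℓ₀.ne', Real.rpow_one]
  -- the truncated point p
  set p := truncMap δ θ ℓ₀ x with hpdef
  set v := truncDrift b₀ b₁ lamStar δ θ ℓ₀ x with hvdef
  clear_value p v
  have hv : v = -(lamStar • x) + b₀ x + (b₁ p + lamStar • p) := by
    rw [hvdef, truncDrift, hpdef]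
  -- bound on b₀ side constants
  have hb0n : ∀ y : EuclideanSpace ℝ (Fin d), ‖b₀ y‖ ≤ K₂ * ‖y‖ ^ α + M₀ := by
    intro y
    have h := hb₀ y 0
    rw [sub_zero] at h
    calc ‖b₀ y‖ = ‖(b₀ y - b₀ 0) + b₀ 0‖ := by rw [sub_add_cancel]
    _ ≤ ‖b₀ y - b₀ 0‖ + ‖b₀ 0‖ := norm_add_le _ _
    _ ≤ K₂ * ‖y‖ ^ α + M₀ := add_le_add h hM₀'
  -- case x = 0
  rcases eq_or_ne x 0 with rfl | hx0
  · have hp0 : p = 0 := by rw [hpdef, truncMap, if_pos rfl]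
    have hv0 : v = b₀ 0 + b₁ 0 := by
      rw [hv, hp0]
      simp
    have hnv : ‖v‖ ≤ M₀ + M₁ := by
      rw [hv0]
      exact (norm_add_le _ _).trans (add_le_add hM₀' hM₁')
    have hnv2 : ‖v‖ ^ 2 ≤ (M₀ + M₁) ^ 2 := by
      apply pow_le_pow_left₀ (norm_nonneg _) hnv
    have hδnv : δ * ‖v‖ ^ 2 ≤ (M₀ + M₁) ^ 2 := by
      calc δ * ‖v‖ ^ 2 ≤ 1 * (M₀ + M₁) ^ 2 := by
            apply mul_le_mul hδlt1.le hnv2 (by positivity) (by norm_num)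
      _ = (M₀ + M₁) ^ 2 := one_mul _
    have hMB : (M₀ + M₁) ^ 2 ≤ B ^ 2 := by
      apply pow_le_pow_left₀ (by positivity)
      rw [hB]; linarith only [hcB0]
    have hdivpos : 0 ≤ 4 * (M₀ + Cstar) ^ 2 / lamStar := by positivity
    have hiz : ⟪(0:EuclideanSpace ℝ (Fin d)), v⟫ = 0 := inner_zero_left v
    rw [hiz]
    simp only [norm_zero]
    norm_num
    have hBB : B ^ 2 ≤ 2 * B ^ 2 := by linarith only [sq_nonneg B]
    linarith only [hδnv, hMB, hBB, hcY0, hdivpos, hCstar]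
  -- main case : x ≠ 0
  have hx : 0 < ‖x‖ := norm_pos_iff.2 hx0
  set m : ℝ := min ‖x‖ R with hm
  have hm0 : 0 < m := lt_min hx (by linarith only [hR1])
  set c : ℝ := m * ‖x‖⁻¹ with hc
  clear_value m c
  have hc0 : 0 < c := by
    rw [hc]
    exact mul_pos hm0 (inv_pos.2 hx)
  have hpc : p = c • x := by
    rw [hpdef, truncMap, if_neg hx0, smul_smul, ← hRdef, ← hm, ← hc]
  have hpn : ‖p‖ = m := by
    rw [hpc, norm_smul, Real.norm_eq_abs, abs_of_pos hc0, hc]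
    field_simp
  have hple : ‖p‖ ≤ ‖x‖ := by rw [hpn, hm]; exact min_le_left _ _
  have hpR : ‖p‖ ≤ R := by rw [hpn, hm]; exact min_le_right _ _
  have hxc : x = c⁻¹ • p := by
    rw [hpc, smul_smul, inv_mul_cancel₀ hc0.ne', one_smul]
  -- (A) inner product with the truncated dissipative part
  have hA : ⟪x, b₁ p + lamStar • p⟫ ≤ Cstar * (1 + ‖x‖) := by
    have e1 : ⟪x, b₁ p + lamStar • p⟫ = c⁻¹ * ⟪p, b₁ p + lamStar • p⟫ := by
      have h := real_inner_smul_left p (b₁ p + lamStar • p) c⁻¹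
      rw [← hxc] at h
      exact h
    have e2 : ⟪p, b₁ p + lamStar • p⟫ ≤ Cstar := by
      rw [inner_add_right, real_inner_smul_right, real_inner_self_eq_norm_sq]
      have := hdiss p
      linarith only [this]
    have e3 : c⁻¹ ≤ 1 + ‖x‖ := by
      rcases min_cases ‖x‖ R with ⟨h1, h2⟩ | ⟨h1, h2⟩
      · have : c = 1 := by rw [hc, hm, h1]; field_simp
        rw [this, inv_one]
        linarith only [norm_nonneg x]
      · have hcR : c = R * ‖x‖⁻¹ := by rw [hc, hm, h1]
        have hR0 : (0:ℝ) < R := by linarith only [hR1]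
        have : c⁻¹ = ‖x‖ * R⁻¹ := by rw [hcR]; field_simp
        rw [this]
        have hRi : R⁻¹ ≤ 1 := by
          rw [inv_le_one_iff₀]; right; exact hR1
        have h5 : ‖x‖ * R⁻¹ ≤ ‖x‖ * 1 :=
          mul_le_mul_of_nonneg_left hRi hx.le
        linarith only [h5, hx.le]
    calc ⟪x, b₁ p + lamStar • p⟫ = c⁻¹ * ⟪p, b₁ p + lamStar • p⟫ := e1
    _ ≤ c⁻¹ * Cstar := mul_le_mul_of_nonneg_left e2 (by positivity)
    _ ≤ (1 + ‖x‖) * Cstar := mul_le_mul_of_nonneg_right e3 hCstar.le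
    _ = Cstar * (1 + ‖x‖) := mul_comm _ _
  -- (B) bound on b₀
  have hKα : K₂ * ‖x‖ ^ α ≤ α * ‖x‖ + cB := by
    have h := young_rpow (p := α) (q := 1) (ε := α / K₂) ‖x‖ hα0 hα1
      (div_pos hα0 hK₂) (norm_nonneg x)
    rw [Real.rpow_one] at h
    have h2 := mul_le_mul_of_nonneg_left h hK₂.le
    have e1 : K₂ * (α / K₂ * ‖x‖ + (α / K₂) ^ (-(α / (1 - α)))) = α * ‖x‖ + cB := by
      rw [hcB]; field_simp
    linarith only [h2.trans_eq e1]
  have hb0x : ‖b₀ x‖ ≤ α * ‖x‖ + cB + M₀ := by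
    have := hb0n x
    linarith only [this, hKα]
  -- (C) bound on truncated b₁ part
  have hpl : ‖p‖ ^ ℓ₀ ≤ δ ^ (-θ) - 1 := by
    calc ‖p‖ ^ ℓ₀ ≤ R ^ ℓ₀ := Real.rpow_le_rpow (norm_nonneg _) hpR hℓ₀.le
    _ = δ ^ (-θ) - 1 := hRl
  have hb1p : ‖b₁ p + lamStar • p‖ ≤ (L₀ * δ ^ (-θ) + lamStar) * ‖x‖ + M₁ := by
    have h := hb₁ p 0
    rw [sub_zero, norm_zero, Real.zero_rpow hℓ₀.ne', add_zero] at h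
    have h1 : L₀ * (1 + ‖p‖ ^ ℓ₀) * ‖p‖ ≤ L₀ * δ ^ (-θ) * ‖x‖ := by
      apply mul_le_mul _ hple (norm_nonneg _) (by positivity)
      apply mul_le_mul_of_nonneg_left _ hL₀.le
      linarith only [hpl]
    have h2 : ‖b₁ p‖ ≤ ‖b₁ p - b₁ 0‖ + ‖b₁ 0‖ := by
      calc ‖b₁ p‖ = ‖(b₁ p - b₁ 0) + b₁ 0‖ := by rw [sub_add_cancel]
      _ ≤ _ := norm_add_le _ _
    have h3 : ‖lamStar • p‖ ≤ lamStar * ‖x‖ := by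
      rw [norm_smul, Real.norm_eq_abs, abs_of_pos hlam]
      exact mul_le_mul_of_nonneg_left hple hlam.le
    calc ‖b₁ p + lamStar • p‖ ≤ ‖b₁ p‖ + ‖lamStar • p‖ := norm_add_le _ _
    _ ≤ (‖b₁ p - b₁ 0‖ + ‖b₁ 0‖) + lamStar * ‖x‖ := add_le_add h2 h3
    _ ≤ (L₀ * δ ^ (-θ) * ‖x‖ + M₁) + lamStar * ‖x‖ := by
        have h4 := h.trans h1
        linarith only [h4, hM₁']
    _ = (L₀ * δ ^ (-θ) + lamStar) * ‖x‖ + M₁ := by ring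
  -- (D) norm bound on the drift
  have hvn : ‖v‖ ≤ Q * δ ^ (-θ) * ‖x‖ + B := by
    have h1 : ‖-(lamStar • x)‖ = lamStar * ‖x‖ := by
      rw [norm_neg, norm_smul, Real.norm_eq_abs, abs_of_pos hlam]
    calc ‖v‖ ≤ ‖-(lamStar • x)‖ + ‖b₀ x‖ + ‖b₁ p + lamStar • p‖ := by
          rw [hv]; exact (norm_add_le _ _).trans (add_le_add (norm_add_le _ _) le_rfl)
    _ ≤ lamStar * ‖x‖ + (α * ‖x‖ + cB + M₀) + ((L₀ * δ ^ (-θ) + lamStar) * ‖x‖ + M₁) := by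
          rw [h1]; linarith only [hb0x, hb1p]
    _ = (2 * lamStar + α + L₀ * δ ^ (-θ)) * ‖x‖ + B := by rw [hB]; ring
    _ ≤ Q * δ ^ (-θ) * ‖x‖ + B := by
          have : (2 * lamStar + α + L₀ * δ ^ (-θ)) ≤ Q * δ ^ (-θ) := by
            rw [hQdef]
            have h8 : 0 ≤ (2 * lamStar + α) * (δ ^ (-θ) - 1) :=
              mul_nonneg (by linarith only [hlam, hα0]) (by linarith only [hε2])
            nlinarith only [h8]
          have h9 := mul_le_mul_of_nonneg_right this (norm_nonneg x)
          linarith only [h9]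
  -- (E) the delta term
  have hde : δ * (δ ^ (-θ)) ^ 2 = δ ^ (1 - 2 * θ) := by
    rw [← Real.rpow_natCast (δ ^ (-θ)) 2, ← Real.rpow_mul hδ.le]
    nth_rewrite 1 [← Real.rpow_one δ]
    rw [← Real.rpow_add hδ]
    congr 1
    push_cast
    ring
  have hd12 : δ ^ (1 - 2 * θ) ≤ lamStar / (8 * Q ^ 2) := by
    have h1 : δ ^ (1 - 2 * θ) ≤ ((lamStar / (8 * Q ^ 2)) ^ (1 / (1 - 2 * θ))) ^ (1 - 2 * θ) :=
      Real.rpow_le_rpow hδ.le hδ2 h12θ.le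
    have h2 : ((lamStar / (8 * Q ^ 2)) ^ (1 / (1 - 2 * θ))) ^ (1 - 2 * θ)
        = lamStar / (8 * Q ^ 2) := by
      rw [← Real.rpow_mul (by positivity), one_div, inv_mul_cancel₀ h12θ.ne', Real.rpow_one]
    linarith only [h1.trans_eq h2]
  have hE : δ * ‖v‖ ^ 2 ≤ lamStar / 4 * ‖x‖ ^ 2 + 2 * B ^ 2 := by
    have h1 : ‖v‖ ^ 2 ≤ (Q * δ ^ (-θ) * ‖x‖ + B) ^ 2 :=
      pow_le_pow_left₀ (norm_nonneg _) hvn 2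
    have h2 : (Q * δ ^ (-θ) * ‖x‖ + B) ^ 2
        ≤ 2 * Q ^ 2 * (δ ^ (-θ)) ^ 2 * ‖x‖ ^ 2 + 2 * B ^ 2 := by
      nlinarith only [sq_nonneg (Q * δ ^ (-θ) * ‖x‖ - B)]
    have h3 : δ * ‖v‖ ^ 2 ≤ δ * (2 * Q ^ 2 * (δ ^ (-θ)) ^ 2 * ‖x‖ ^ 2 + 2 * B ^ 2) :=
      mul_le_mul_of_nonneg_left (h1.trans h2) hδ.le
    have h4 : δ * (2 * Q ^ 2 * (δ ^ (-θ)) ^ 2 * ‖x‖ ^ 2 + 2 * B ^ 2)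
        = 2 * Q ^ 2 * (δ * (δ ^ (-θ)) ^ 2) * ‖x‖ ^ 2 + 2 * δ * B ^ 2 := by ring
    have h5 : 2 * Q ^ 2 * (δ * (δ ^ (-θ)) ^ 2) * ‖x‖ ^ 2
        ≤ 2 * Q ^ 2 * (lamStar / (8 * Q ^ 2)) * ‖x‖ ^ 2 := by
      apply mul_le_mul_of_nonneg_right _ (sq_nonneg _)
      apply mul_le_mul_of_nonneg_left _ (by positivity)
      rw [hde]; exact hd12
    have h6 : 2 * Q ^ 2 * (lamStar / (8 * Q ^ 2)) = lamStar / 4 := by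
      field_simp; ring
    have h7 : 2 * δ * B ^ 2 ≤ 2 * B ^ 2 := by
      have h71 : 0 ≤ (1 - δ) * B ^ 2 :=
        mul_nonneg (by linarith only [hδlt1]) (sq_nonneg B)
      linarith only [h71]
    calc δ * ‖v‖ ^ 2 ≤ 2 * Q ^ 2 * (δ * (δ ^ (-θ)) ^ 2) * ‖x‖ ^ 2 + 2 * δ * B ^ 2 := by
          rw [← h4]; exact h3
    _ ≤ lamStar / 4 * ‖x‖ ^ 2 + 2 * B ^ 2 := by rw [← h6]; exact add_le_add h5 h7
  -- (F) final assembly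
  have hiv : ⟪x, v⟫ = -(lamStar * ‖x‖ ^ 2) + ⟪x, b₀ x⟫ + ⟪x, b₁ p + lamStar • p⟫ := by
    rw [hv, inner_add_right, inner_add_right, inner_neg_right, real_inner_smul_right,
      real_inner_self_eq_norm_sq]
  have hib0 : ⟪x, b₀ x⟫ ≤ K₂ * ‖x‖ ^ (1 + α) + M₀ * ‖x‖ := by
    have h1 : ⟪x, b₀ x⟫ ≤ ‖x‖ * ‖b₀ x‖ := real_inner_le_norm x (b₀ x)
    have h2 : ‖x‖ * ‖b₀ x‖ ≤ ‖x‖ * (K₂ * ‖x‖ ^ α + M₀) :=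
      mul_le_mul_of_nonneg_left (hb0n x) (norm_nonneg x)
    have h3 : ‖x‖ * ‖x‖ ^ α = ‖x‖ ^ (1 + α) := by
      rw [Real.rpow_add hx, Real.rpow_one]
    calc ⟪x, b₀ x⟫ ≤ ‖x‖ * (K₂ * ‖x‖ ^ α + M₀) := h1.trans h2
    _ = K₂ * (‖x‖ * ‖x‖ ^ α) + M₀ * ‖x‖ := by ring
    _ = K₂ * ‖x‖ ^ (1 + α) + M₀ * ‖x‖ := by rw [h3]
  have hY : K₂ * ‖x‖ ^ (1 + α) ≤ lamStar / 16 * ‖x‖ ^ 2 + cY := by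
    have h := young_rpow (p := 1 + α) (q := 2) (ε := lamStar / (16 * K₂)) ‖x‖
      (by linarith only [hα0]) (by linarith only [hα1]) (by positivity) (norm_nonneg x)
    have h2 := mul_le_mul_of_nonneg_left h hK₂.le
    have e0 : (2 : ℝ) - (1 + α) = 1 - α := by ring
    rw [e0] at h2
    have e1 : ‖x‖ ^ ((2:ℝ)) = ‖x‖ ^ (2:ℕ) := by
      rw [show ((2:ℝ)) = ((2:ℕ):ℝ) by norm_num, Real.rpow_natCast]
    rw [e1] at h2
    have e2 : K₂ * (lamStar / (16 * K₂) * ‖x‖ ^ (2:ℕ)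
        + (lamStar / (16 * K₂)) ^ (-((1 + α) / (1 - α))))
        = lamStar / 16 * ‖x‖ ^ 2 + cY := by
      rw [hcY]; field_simp
    linarith only [h2.trans_eq e2]
  have hL : (M₀ + Cstar) * ‖x‖ ≤ lamStar / 16 * ‖x‖ ^ 2 + 4 * (M₀ + Cstar) ^ 2 / lamStar := by
    have h := young_lin (a := M₀ + Cstar) (ε := lamStar / 16) ‖x‖ (by positivity)
    have e1 : (M₀ + Cstar) ^ 2 / (4 * (lamStar / 16)) = 4 * (M₀ + Cstar) ^ 2 / lamStar := by
      rw [div_eq_div_iff (by positivity : (0:ℝ) < 4 * (lamStar / 16)).ne' hlam.ne']; ring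
    linarith only [h, e1]
  have hsq : 0 ≤ lamStar * ‖x‖ ^ 2 := by positivity
  have hAx : ⟪x, b₁ p + lamStar • p⟫ ≤ Cstar + Cstar * ‖x‖ := by
    linarith only [hA]
  linarith only [hE, hiv, hib0, hY, hL, hAx, hsq]
end

section
/- For all δ ∈ (0,1] and all x ∈ ℝ^d: |b^{(δ)}(x)| ≤ |b₀(0)| + |b₁(0)| + K₂(1−α) + (K₂α + 2λ* + √2·L₀·δ^{−θ})|x|. -/
open scoped RealInnerProductSpace
open Real Set

/-- The modified tamed Euler drift
`b^{(δ)}(x) = b₀(x) - λ* x + (b₁(x) + λ* x)/(1 + δ^{2θ}|x|^{2ℓ₀})^{1/2}`. -/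
noncomputable def tamedDrift {d : ℕ}
    (b₀ b₁ : EuclideanSpace ℝ (Fin d) → EuclideanSpace ℝ (Fin d))
    (lamStar δ θ ℓ₀ : ℝ) (x : EuclideanSpace ℝ (Fin d)) : EuclideanSpace ℝ (Fin d) :=
  b₀ x - lamStar • x
    + (((1 + δ ^ (2 * θ) * ‖x‖ ^ (2 * ℓ₀)) ^ ((1:ℝ)/2))⁻¹) • (b₁ x + lamStar • x)

theorem stmt_10 (d : ℕ) (hd : 1 ≤ d)
    (b₀ b₁ : EuclideanSpace ℝ (Fin d) → EuclideanSpace ℝ (Fin d))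
    (K₂ α : ℝ) (hK₂ : 0 < K₂) (hα : α ∈ Set.Ioo (0:ℝ) 1)
    (hb₀ : ∀ x y, ‖b₀ x - b₀ y‖ ≤ K₂ * ‖x - y‖ ^ α)
    (L₀ ℓ₀ : ℝ) (hL₀ : 0 < L₀) (hℓ₀ : 0 < ℓ₀)
    (hb₁ : ∀ x y, ‖b₁ x - b₁ y‖ ≤ L₀ * (1 + ‖x‖ ^ ℓ₀ + ‖y‖ ^ ℓ₀) * ‖x - y‖)
    (θ lamStar : ℝ) (hθ : θ ∈ Set.Ioo (0:ℝ) (1/2)) (hlam : 0 < lamStar) :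
    ∀ δ ∈ Set.Ioc (0:ℝ) 1, ∀ x : EuclideanSpace ℝ (Fin d),
      ‖tamedDrift b₀ b₁ lamStar δ θ ℓ₀ x‖
        ≤ ‖b₀ (0 : EuclideanSpace ℝ (Fin d))‖ + ‖b₁ (0 : EuclideanSpace ℝ (Fin d))‖
            + K₂ * (1 - α)
          + (K₂ * α + 2 * lamStar + Real.sqrt 2 * L₀ * δ ^ (-θ)) * ‖x‖ := by
  rintro δ ⟨hδ0, hδ1⟩ x
  obtain ⟨hα0, hα1⟩ := hα
  obtain ⟨hθ0, hθ1⟩ := hθ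
  have hr0 : (0:ℝ) ≤ ‖x‖ := norm_nonneg x
  set r := ‖x‖ with hrdef
  set s := r ^ ℓ₀ with hsdef
  have hs0 : 0 ≤ s := Real.rpow_nonneg hr0 _
  set E := δ ^ (2 * θ) with hEdef
  have hE0 : 0 < E := Real.rpow_pos_of_pos hδ0 _
  have hE1 : E ≤ 1 := Real.rpow_le_one hδ0.le hδ1 (by linarith)
  have hδθ0 : 0 < δ ^ (-θ) := Real.rpow_pos_of_pos hδ0 _
  have hrs : r ^ (2 * ℓ₀) = s ^ 2 := by
    rw [hsdef, ← Real.rpow_natCast (r ^ ℓ₀) 2, ← Real.rpow_mul hr0]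
    norm_num [mul_comm]
  have hbase : (0:ℝ) < 1 + E * r ^ (2 * ℓ₀) := by
    have : 0 ≤ E * r ^ (2 * ℓ₀) := mul_nonneg hE0.le (Real.rpow_nonneg hr0 _)
    linarith
  set T : ℝ := (1 + E * r ^ (2 * ℓ₀)) ^ ((1:ℝ)/2) with hTdef
  have hT0 : 0 < T := Real.rpow_pos_of_pos hbase _
  have hT1 : 1 ≤ T := by
    rw [hTdef]
    calc (1:ℝ) = 1 ^ ((1:ℝ)/2) := (Real.one_rpow _).symm
    _ ≤ (1 + E * r ^ (2 * ℓ₀)) ^ ((1:ℝ)/2) := by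
        apply Real.rpow_le_rpow zero_le_one _ (by norm_num)
        have : 0 ≤ E * r ^ (2 * ℓ₀) := mul_nonneg hE0.le (Real.rpow_nonneg hr0 _)
        linarith
  have hTinv1 : T⁻¹ ≤ 1 := by
    rw [inv_le_one_iff₀]; right; exact hT1
  have hTinv0 : 0 ≤ T⁻¹ := (inv_pos.mpr hT0).le
  have hTsq : T ^ 2 = 1 + E * r ^ (2 * ℓ₀) := by
    rw [hTdef, ← Real.rpow_natCast ((1 + E * r ^ (2 * ℓ₀)) ^ ((1:ℝ)/2)) 2,
      ← Real.rpow_mul hbase.le]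
    norm_num
  have hδsq : (δ ^ (-θ)) ^ 2 = E⁻¹ := by
    rw [hEdef, ← Real.rpow_natCast (δ ^ (-θ)) 2, ← Real.rpow_mul hδ0.le,
      ← Real.rpow_neg hδ0.le]
    ring_nf
  -- key taming inequality
  have hkey : T⁻¹ * (1 + s) ≤ Real.sqrt 2 * δ ^ (-θ) := by
    rw [inv_mul_le_iff₀ hT0]
    apply le_of_pow_le_pow_left₀ two_ne_zero (by positivity)
    have hsqrt2 : (Real.sqrt 2) ^ 2 = 2 := Real.sq_sqrt (by norm_num)
    have hEinv : (1:ℝ) ≤ E⁻¹ := (one_le_inv₀ hE0).mpr hE1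
    have h2 : (T * (Real.sqrt 2 * δ ^ (-θ))) ^ 2
        = (1 + E * s ^ 2) * (2 * E⁻¹) := by
      rw [mul_pow, mul_pow, hsqrt2, hδsq, hTsq, hrs]
    rw [h2]
    have hEE : E * E⁻¹ = 1 := mul_inv_cancel₀ hE0.ne'
    have expand : (1 + E * s ^ 2) * (2 * E⁻¹) = 2 * E⁻¹ + 2 * s ^ 2 := by
      field_simp
    rw [expand]
    nlinarith [sq_nonneg (1 - s)]
  -- bounds on b₀ and b₁
  have hb0x : ‖b₀ x‖ ≤ ‖b₀ (0 : EuclideanSpace ℝ (Fin d))‖ + K₂ * r ^ α := by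
    have h := hb₀ x 0
    rw [sub_zero] at h
    calc ‖b₀ x‖ = ‖(b₀ x - b₀ 0) + b₀ 0‖ := by rw [sub_add_cancel]
    _ ≤ ‖b₀ x - b₀ 0‖ + ‖b₀ (0 : EuclideanSpace ℝ (Fin d))‖ := norm_add_le _ _
    _ ≤ ‖b₀ (0 : EuclideanSpace ℝ (Fin d))‖ + K₂ * r ^ α := by linarith
  have hb1x : ‖b₁ x‖ ≤ ‖b₁ (0 : EuclideanSpace ℝ (Fin d))‖ + L₀ * (1 + s) * r := by
    have h := hb₁ x 0
    rw [sub_zero, norm_zero, Real.zero_rpow hℓ₀.ne'] at h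
    calc ‖b₁ x‖ = ‖(b₁ x - b₁ 0) + b₁ 0‖ := by rw [sub_add_cancel]
    _ ≤ ‖b₁ x - b₁ 0‖ + ‖b₁ (0 : EuclideanSpace ℝ (Fin d))‖ := norm_add_le _ _
    _ ≤ ‖b₁ (0 : EuclideanSpace ℝ (Fin d))‖ + L₀ * (1 + s) * r := by
        rw [hsdef]; linarith
  -- Young's inequality: r^α ≤ (1-α) + α r
  have hyoung : r ^ α ≤ (1 - α) + α * r := by
    have h := Real.geom_mean_le_arith_mean2_weighted
      (by linarith : (0:ℝ) ≤ 1 - α) hα0.le zero_le_one hr0 (by ring)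
    simpa using h
  -- norm of the drift
  have hnorm : ‖tamedDrift b₀ b₁ lamStar δ θ ℓ₀ x‖
      ≤ ‖b₀ x‖ + lamStar * r + T⁻¹ * (‖b₁ x‖ + lamStar * r) := by
    have hdef : tamedDrift b₀ b₁ lamStar δ θ ℓ₀ x
        = b₀ x - lamStar • x + T⁻¹ • (b₁ x + lamStar • x) := by
      rw [tamedDrift, hTdef, hEdef, hrdef]
    rw [hdef]
    have e1 : ‖b₀ x - lamStar • x‖ ≤ ‖b₀ x‖ + lamStar * r := by
      refine (norm_sub_le _ _).trans ?_
      rw [norm_smul, Real.norm_eq_abs, abs_of_pos hlam]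
    have e2 : ‖T⁻¹ • (b₁ x + lamStar • x)‖ ≤ T⁻¹ * (‖b₁ x‖ + lamStar * r) := by
      rw [norm_smul, Real.norm_eq_abs, abs_of_nonneg hTinv0]
      apply mul_le_mul_of_nonneg_left _ hTinv0
      refine (norm_add_le _ _).trans ?_
      rw [norm_smul, Real.norm_eq_abs, abs_of_pos hlam]
    exact (norm_add_le _ _).trans (by linarith)
  -- combine
  have h3 : T⁻¹ * (L₀ * (1 + s) * r) ≤ Real.sqrt 2 * L₀ * δ ^ (-θ) * r := by
    have := mul_le_mul_of_nonneg_right hkey (mul_nonneg hL₀.le hr0)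
    calc T⁻¹ * (L₀ * (1 + s) * r) = (T⁻¹ * (1 + s)) * (L₀ * r) := by ring
    _ ≤ (Real.sqrt 2 * δ ^ (-θ)) * (L₀ * r) := this
    _ = Real.sqrt 2 * L₀ * δ ^ (-θ) * r := by ring
  have h2 : T⁻¹ * ‖b₁ (0 : EuclideanSpace ℝ (Fin d))‖
      ≤ ‖b₁ (0 : EuclideanSpace ℝ (Fin d))‖ := by
    calc T⁻¹ * ‖b₁ (0 : EuclideanSpace ℝ (Fin d))‖
        ≤ 1 * ‖b₁ (0 : EuclideanSpace ℝ (Fin d))‖ :=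
          mul_le_mul_of_nonneg_right hTinv1 (norm_nonneg _)
    _ = ‖b₁ (0 : EuclideanSpace ℝ (Fin d))‖ := one_mul _
  have h4 : T⁻¹ * (lamStar * r) ≤ lamStar * r := by
    calc T⁻¹ * (lamStar * r) ≤ 1 * (lamStar * r) :=
          mul_le_mul_of_nonneg_right hTinv1 (mul_nonneg hlam.le hr0)
    _ = lamStar * r := one_mul _
  have h5 : T⁻¹ * (‖b₁ x‖ + lamStar * r)
      ≤ T⁻¹ * ‖b₁ (0 : EuclideanSpace ℝ (Fin d))‖ + T⁻¹ * (L₀ * (1 + s) * r)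
        + T⁻¹ * (lamStar * r) := by
    have := mul_le_mul_of_nonneg_left
      (by linarith : ‖b₁ x‖ + lamStar * r
        ≤ ‖b₁ (0 : EuclideanSpace ℝ (Fin d))‖ + L₀ * (1 + s) * r + lamStar * r) hTinv0
    linarith [this, (by ring : T⁻¹ * (‖b₁ (0 : EuclideanSpace ℝ (Fin d))‖
      + L₀ * (1 + s) * r + lamStar * r) = T⁻¹ * ‖b₁ (0 : EuclideanSpace ℝ (Fin d))‖
      + T⁻¹ * (L₀ * (1 + s) * r) + T⁻¹ * (lamStar * r))]
  have h1 : K₂ * r ^ α ≤ K₂ * (1 - α) + K₂ * α * r := by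
    have := mul_le_mul_of_nonneg_left hyoung hK₂.le
    linarith [this, (by ring : K₂ * ((1 - α) + α * r) = K₂ * (1 - α) + K₂ * α * r)]
  clear_value T E s r
  calc ‖tamedDrift b₀ b₁ lamStar δ θ ℓ₀ x‖
      ≤ ‖b₀ x‖ + lamStar * r + T⁻¹ * (‖b₁ x‖ + lamStar * r) := hnorm
  _ ≤ ‖b₀ (0 : EuclideanSpace ℝ (Fin d))‖ + ‖b₁ (0 : EuclideanSpace ℝ (Fin d))‖
        + K₂ * (1 - α) + (K₂ * α + 2 * lamStar + Real.sqrt 2 * L₀ * δ ^ (-θ)) * r := by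
      linarith [hb0x, h5, h2, h3, h4, h1]
end

section
/- There exist δ₀ ∈ (0,1] and C > 0, both depending only on λ*, C*, K₂, α, L₀, ℓ₀, θ, |b₀(0)| and |b₁(0)|, such that for all δ ∈ (0, δ₀] and all x ∈ ℝ^d: ⟨x, b^{(δ)}(x)⟩ + δ|b^{(δ)}(x)|² ≤ −(λ*/4)|x|² + C. -/
open scoped RealInnerProductSpace
open Real Set

lemma young_alpha (K ε α : ℝ) (hK : 0 < K) (hε : 0 < ε) (hα0 : 0 < α) (hα1 : α < 1) :
    ∃ C > 0, ∀ t : ℝ, 0 ≤ t → K * (t ^ α * t) ≤ ε * t ^ 2 + C := by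
  set T : ℝ := max 1 ((K / ε) ^ (1 / (1 - α))) with hT
  have hT1 : 1 ≤ T := le_max_left _ _
  have hT0 : 0 < T := lt_of_lt_of_le one_pos hT1
  refine ⟨K * (T ^ α * T) + 1, by positivity, fun t ht => ?_⟩
  rcases le_or_gt t T with h | h
  · have h1 : t ^ α * t ≤ T ^ α * T := by
      have := Real.rpow_le_rpow ht h (le_of_lt hα0)
      nlinarith [Real.rpow_nonneg ht α]
    nlinarith [sq_nonneg t, mul_le_mul_of_nonneg_left h1 hK.le]
  · have ht0 : 0 < t := lt_trans hT0 h
    have hKε : (0:ℝ) ≤ K / ε := by positivity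
    have h2 : K / ε ≤ t ^ (1 - α) := by
      calc K / ε = ((K / ε) ^ (1 / (1 - α))) ^ (1 - α) := by
            rw [← Real.rpow_mul hKε, one_div, inv_mul_cancel₀ (by linarith : (1:ℝ) - α ≠ 0),
              Real.rpow_one]
        _ ≤ T ^ (1 - α) := Real.rpow_le_rpow (by positivity) (le_max_right _ _) (by linarith)
        _ ≤ t ^ (1 - α) := Real.rpow_le_rpow hT0.le h.le (by linarith)
    have h3 : t ^ (1 - α) * t ^ α = t := by
      rw [← Real.rpow_add ht0]; norm_num
    have h4 : K ≤ ε * (t ^ (1 - α)) := by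
      rw [div_le_iff₀ hε] at h2; linarith [mul_comm ε (t ^ (1-α))]
    have h5 : 0 ≤ t ^ α * t := by positivity
    have := mul_le_mul_of_nonneg_right h4 h5
    calc K * (t ^ α * t) ≤ ε * t ^ (1 - α) * (t ^ α * t) := this
      _ = ε * (t ^ (1-α) * t ^ α) * t := by ring
      _ = ε * t ^ 2 := by rw [h3]; ring
      _ ≤ ε * t ^ 2 + (K * (T ^ α * T) + 1) := by
          nlinarith [mul_nonneg (mul_nonneg hK.le (Real.rpow_nonneg hT0.le α)) hT0.le]


set_option maxHeartbeats 2000000 in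
/-- The constants `δ₀` and `C` depend only on `λ*, C*, K₂, α, L₀, ℓ₀, θ, |b₀(0)|, |b₁(0)|`:
they are chosen before the dimension `d` and the drifts `b₀, b₁` (whose values at `0` are
controlled by `M₀, M₁`). -/
theorem stmt_12 (K₂ α L₀ ℓ₀ θ lamStar Cstar M₀ M₁ : ℝ)
    (hK₂ : 0 < K₂) (hα : α ∈ Set.Ioo (0:ℝ) 1) (hL₀ : 0 < L₀) (hℓ₀ : 0 < ℓ₀)
    (hθ : θ ∈ Set.Ioo (0:ℝ) (1/2)) (hlam : 0 < lamStar) (hCstar : 0 < Cstar)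
    (hM₀ : 0 ≤ M₀) (hM₁ : 0 ≤ M₁) :
    ∃ δ₀ ∈ Set.Ioc (0:ℝ) 1, ∃ C > (0:ℝ), ∀ d : ℕ, 1 ≤ d →
      ∀ b₀ b₁ : EuclideanSpace ℝ (Fin d) → EuclideanSpace ℝ (Fin d),
        (∀ x y, ‖b₀ x - b₀ y‖ ≤ K₂ * ‖x - y‖ ^ α) →
        (∀ x y, ‖b₁ x - b₁ y‖ ≤ L₀ * (1 + ‖x‖ ^ ℓ₀ + ‖y‖ ^ ℓ₀) * ‖x - y‖) →
        (∀ x, ⟪x, b₁ x⟫ ≤ -(lamStar * ‖x‖ ^ 2) + Cstar) →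
        ‖b₀ (0 : EuclideanSpace ℝ (Fin d))‖ ≤ M₀ →
        ‖b₁ (0 : EuclideanSpace ℝ (Fin d))‖ ≤ M₁ →
        ∀ δ ∈ Set.Ioc (0:ℝ) δ₀, ∀ x : EuclideanSpace ℝ (Fin d),
          ⟪x, tamedDrift b₀ b₁ lamStar δ θ ℓ₀ x⟫
              + δ * ‖tamedDrift b₀ b₁ lamStar δ θ ℓ₀ x‖ ^ 2
            ≤ -(lamStar / 4 * ‖x‖ ^ 2) + C := by
  obtain ⟨hα0, hα1⟩ := hα
  obtain ⟨hθ0, hθ1⟩ := hθ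
  have hθ2 : 0 < 1 - 2*θ := by linarith
  set A : ℝ := K₂ + M₀ + M₁ + 2*lamStar + L₀ with hAdef
  have hA0 : 0 < A := by positivity
  obtain ⟨C₁, hC₁0, hC₁⟩ := young_alpha K₂ (lamStar/8) α hK₂ (by positivity) hα0 hα1
  set C₂ : ℝ := M₀^2/(4*(lamStar/8)) + 1 with hC₂def
  have hC₂0 : 0 < C₂ := by positivity
  have hC₂ : ∀ t : ℝ, 0 ≤ t → M₀ * t ≤ (lamStar/8)*t^2 + C₂ := by
    intro t ht
    have hl : 0 < lamStar/8 := by positivity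
    have key : M₀^2/(4*(lamStar/8)) * (4*(lamStar/8)) = M₀^2 :=
      div_mul_cancel₀ _ (by positivity)
    rw [hC₂def]
    nlinarith only [sq_nonneg (2*(lamStar/8)*t - M₀), hl, key, ht, hM₀]
  set δ₀ : ℝ := min 1 (min (lamStar/(32*A^2)) ((lamStar/(32*L₀^2)) ^ (1/(1-2*θ)))) with hδ₀def
  have hδ₀0 : 0 < δ₀ :=
    lt_min one_pos (lt_min (by positivity) (Real.rpow_pos_of_pos (by positivity) _))
  refine ⟨δ₀, ⟨hδ₀0, min_le_left _ _⟩, C₁ + C₂ + Cstar + 2*A^2, by positivity, ?_⟩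
  intro d hd b₀ b₁ hb₀ hb₁ hdiss hb₀0 hb₁0 δ hδ x
  obtain ⟨hδ0, hδδ₀⟩ := hδ
  have hδ1 : δ ≤ 1 := hδδ₀.trans (min_le_left _ _)
  have ht : (0:ℝ) ≤ ‖x‖ := norm_nonneg x
  set t : ℝ := ‖x‖ with htdef
  set B : ℝ := 1 + δ ^ (2*θ) * t ^ (2*ℓ₀) with hBdef
  have hB1 : 1 ≤ B := by
    have h := mul_nonneg (Real.rpow_nonneg hδ0.le (2*θ)) (Real.rpow_nonneg ht (2*ℓ₀))
    rw [hBdef]; linarith only [h]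
  set g : ℝ := (B ^ ((1:ℝ)/2))⁻¹ with hgdef
  have hBr1 : 1 ≤ B ^ ((1:ℝ)/2) := by
    calc (1:ℝ) = (1:ℝ) ^ ((1:ℝ)/2) := (Real.one_rpow _).symm
      _ ≤ B ^ ((1:ℝ)/2) := Real.rpow_le_rpow zero_le_one hB1 (by norm_num)
  have hg0 : 0 < g := by rw [hgdef]; exact inv_pos.mpr (lt_of_lt_of_le one_pos hBr1)
  have hg1 : g ≤ 1 := by rw [hgdef]; exact inv_le_one_of_one_le₀ hBr1
  have hδθ : (0:ℝ) ≤ δ ^ (-θ) := Real.rpow_nonneg hδ0.le _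
  -- key taming bound
  have hgkey : g * (t ^ ℓ₀ * t) ≤ δ ^ (-θ) * t := by
    rcases eq_or_lt_of_le ht with h0 | h0
    · rw [← h0, Real.zero_rpow hℓ₀.ne']; simp
    · have hsq : δ ^ (2*θ) * t ^ (2*ℓ₀) = (δ ^ θ * t ^ ℓ₀)^2 := by
        rw [mul_pow, ← Real.rpow_natCast (δ ^ θ) 2, ← Real.rpow_natCast (t ^ ℓ₀) 2,
          ← Real.rpow_mul hδ0.le, ← Real.rpow_mul ht]
        norm_num [mul_comm]
      have hP : 0 < δ ^ θ * t ^ ℓ₀ := by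
        have := Real.rpow_pos_of_pos hδ0 θ
        have := Real.rpow_pos_of_pos h0 ℓ₀
        positivity
      have h1 : δ ^ θ * t ^ ℓ₀ ≤ B ^ ((1:ℝ)/2) := by
        calc δ ^ θ * t ^ ℓ₀ = ((δ ^ θ * t ^ ℓ₀)^2) ^ ((1:ℝ)/2) := by
              rw [← Real.rpow_natCast (δ ^ θ * t ^ ℓ₀) 2, ← Real.rpow_mul hP.le]
              norm_num
          _ ≤ B ^ ((1:ℝ)/2) := by
              apply Real.rpow_le_rpow (by positivity) _ (by norm_num)
              rw [hBdef, hsq]; linarith only [sq_nonneg (δ ^ θ * t ^ ℓ₀)]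
      have h2 : g ≤ (δ ^ θ * t ^ ℓ₀)⁻¹ := by
        rw [hgdef]
        exact inv_anti₀ hP h1
      have h3 : (δ ^ θ * t ^ ℓ₀)⁻¹ * (t ^ ℓ₀ * t) = δ ^ (-θ) * t := by
        have htl : t ^ ℓ₀ ≠ 0 := (Real.rpow_pos_of_pos h0 ℓ₀).ne'
        have hdl : δ ^ θ ≠ 0 := (Real.rpow_pos_of_pos hδ0 θ).ne'
        rw [Real.rpow_neg hδ0.le]
        field_simp
      calc g * (t ^ ℓ₀ * t) ≤ (δ ^ θ * t ^ ℓ₀)⁻¹ * (t ^ ℓ₀ * t) :=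
            mul_le_mul_of_nonneg_right h2 (by positivity)
        _ = δ ^ (-θ) * t := h3
  -- expression for the drift
  have hexp : tamedDrift b₀ b₁ lamStar δ θ ℓ₀ x
      = b₀ x - lamStar • x + g • (b₁ x + lamStar • x) := rfl
  -- norm bounds on b₀, b₁
  have hb₀x : ‖b₀ x‖ ≤ K₂ * t ^ α + M₀ := by
    have h := hb₀ x 0
    rw [sub_zero] at h
    calc ‖b₀ x‖ = ‖(b₀ x - b₀ 0) + b₀ 0‖ := by rw [sub_add_cancel]
      _ ≤ ‖b₀ x - b₀ 0‖ + ‖b₀ 0‖ := norm_add_le _ _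
      _ ≤ K₂ * t ^ α + M₀ := add_le_add h hb₀0
  have hb₁x : ‖b₁ x‖ ≤ L₀ * t + L₀ * (t ^ ℓ₀ * t) + M₁ := by
    have h := hb₁ x 0
    rw [sub_zero, norm_zero, Real.zero_rpow hℓ₀.ne'] at h
    calc ‖b₁ x‖ = ‖(b₁ x - b₁ 0) + b₁ 0‖ := by rw [sub_add_cancel]
      _ ≤ ‖b₁ x - b₁ 0‖ + ‖b₁ 0‖ := norm_add_le _ _
      _ ≤ L₀ * (1 + t ^ ℓ₀ + 0) * t + M₁ := add_le_add h hb₁0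
      _ = L₀ * t + L₀ * (t ^ ℓ₀ * t) + M₁ := by ring
  -- norm bound on tamed drift
  have hnb : ‖b₁ x + lamStar • x‖ ≤ L₀ * t + L₀ * (t ^ ℓ₀ * t) + M₁ + lamStar * t := by
    calc ‖b₁ x + lamStar • x‖ ≤ ‖b₁ x‖ + ‖lamStar • x‖ := norm_add_le _ _
      _ = ‖b₁ x‖ + lamStar * t := by rw [norm_smul, Real.norm_eq_abs, abs_of_pos hlam]
      _ ≤ L₀ * t + L₀ * (t ^ ℓ₀ * t) + M₁ + lamStar * t := by linarith only [hb₁x]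
  have htamed : ‖tamedDrift b₀ b₁ lamStar δ θ ℓ₀ x‖ ≤ A + (A + L₀ * δ ^ (-θ)) * t := by
    have h1 : ‖tamedDrift b₀ b₁ lamStar δ θ ℓ₀ x‖
        ≤ ‖b₀ x‖ + lamStar * t + g * ‖b₁ x + lamStar • x‖ := by
      rw [hexp]
      calc ‖b₀ x - lamStar • x + g • (b₁ x + lamStar • x)‖
          ≤ ‖b₀ x - lamStar • x‖ + ‖g • (b₁ x + lamStar • x)‖ := norm_add_le _ _
        _ ≤ ‖b₀ x‖ + ‖lamStar • x‖ + ‖g • (b₁ x + lamStar • x)‖ := by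
            have := norm_sub_le (b₀ x) (lamStar • x); linarith
        _ = ‖b₀ x‖ + lamStar * t + g * ‖b₁ x + lamStar • x‖ := by
            rw [norm_smul, norm_smul, Real.norm_eq_abs, Real.norm_eq_abs,
              abs_of_pos hlam, abs_of_pos hg0]
    have h2 : g * ‖b₁ x + lamStar • x‖
        ≤ L₀ * t + L₀ * (δ ^ (-θ) * t) + M₁ + lamStar * t := by
      have h3 := mul_le_mul_of_nonneg_left hnb hg0.le
      have h4 := mul_le_mul_of_nonneg_left hgkey hL₀.le
      linarith only [h3, h4, mul_nonneg (sub_nonneg.mpr hg1) (mul_nonneg hL₀.le ht),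
        mul_nonneg (sub_nonneg.mpr hg1) hM₁,
        mul_nonneg (sub_nonneg.mpr hg1) (mul_nonneg hlam.le ht)]
    have htα : t ^ α ≤ 1 + t := by
      rcases le_or_gt t 1 with h | h
      · have h2 := Real.rpow_le_one ht h hα0.le; linarith only [h2, ht]
      · have h2 : t ^ α ≤ t ^ (1:ℝ) := Real.rpow_le_rpow_of_exponent_le h.le hα1.le
        rw [Real.rpow_one] at h2; linarith only [h2, h]
    have h5 : ‖b₀ x‖ ≤ K₂ + M₀ + K₂ * t := by
      have h6 := mul_le_mul_of_nonneg_left htα hK₂.le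
      linarith only [h6, hb₀x]
    have p1 : 0 ≤ M₀*t := mul_nonneg hM₀ ht
    have p2 : 0 ≤ M₁*t := mul_nonneg hM₁ ht
    rw [hAdef]
    linarith only [h1, h2, h5, p1, p2, hlam.le, hL₀.le]
  -- square bound
  have hsq2 : ‖tamedDrift b₀ b₁ lamStar δ θ ℓ₀ x‖^2
      ≤ 2*A^2 + (4*A^2 + 4*L₀^2*(δ ^ (-θ))^2)*t^2 := by
    have h1 : ‖tamedDrift b₀ b₁ lamStar δ θ ℓ₀ x‖^2 ≤ (A + (A + L₀ * δ ^ (-θ)) * t)^2 :=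
      pow_le_pow_left₀ (norm_nonneg _) htamed 2
    have q1 : (A + L₀ * δ ^ (-θ))^2 ≤ 2*A^2 + 2*L₀^2*(δ ^ (-θ))^2 := by
      linarith only [sq_nonneg (A - L₀ * δ ^ (-θ))]
    have q2 := mul_le_mul_of_nonneg_right q1 (sq_nonneg t)
    linarith only [h1, q2, sq_nonneg (A - (A + L₀ * δ ^ (-θ)) * t)]
  -- smallness of delta terms
  have hδpow : δ * (δ ^ (-θ))^2 = δ ^ (1-2*θ) := by
    rw [← Real.rpow_natCast (δ ^ (-θ)) 2, ← Real.rpow_mul hδ0.le]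
    nth_rewrite 1 [← Real.rpow_one δ]
    rw [← Real.rpow_add hδ0]
    norm_num
    ring_nf
  have he1 : δ ≤ lamStar/(32*A^2) := hδδ₀.trans ((min_le_right _ _).trans (min_le_left _ _))
  have he2 : δ ^ (1-2*θ) ≤ lamStar/(32*L₀^2) := by
    have h1 : δ ^ (1-2*θ) ≤ ((lamStar/(32*L₀^2)) ^ (1/(1-2*θ))) ^ (1-2*θ) :=
      Real.rpow_le_rpow hδ0.le (hδδ₀.trans ((min_le_right _ _).trans (min_le_right _ _)))
        hθ2.le
    rwa [← Real.rpow_mul (by positivity), one_div, inv_mul_cancel₀ hθ2.ne', Real.rpow_one] at h1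
  have hδsmall : 4*A^2*δ + 4*L₀^2*(δ ^ (1-2*θ)) ≤ lamStar/4 := by
    have k1 : 4*A^2*δ ≤ lamStar/8 := by
      have h := mul_le_mul_of_nonneg_left he1 (by positivity : (0:ℝ) ≤ 4*A^2)
      have heq : 4*A^2*(lamStar/(32*A^2)) = lamStar/8 := by field_simp; ring
      linarith only [h, heq]
    have k2 : 4*L₀^2*(δ ^ (1-2*θ)) ≤ lamStar/8 := by
      have h := mul_le_mul_of_nonneg_left he2 (by positivity : (0:ℝ) ≤ 4*L₀^2)
      have heq : 4*L₀^2*(lamStar/(32*L₀^2)) = lamStar/8 := by field_simp; ring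
      linarith only [h, heq]
    linarith only [k1, k2]
  have hδterm : δ * ‖tamedDrift b₀ b₁ lamStar δ θ ℓ₀ x‖^2 ≤ 2*A^2 + (lamStar/4)*t^2 := by
    have h1 := mul_le_mul_of_nonneg_left hsq2 hδ0.le
    have h2 : δ * (2*A^2 + (4*A^2 + 4*L₀^2*(δ ^ (-θ))^2)*t^2)
        = 2*A^2*δ + (4*A^2*δ + 4*L₀^2*(δ * (δ ^ (-θ))^2))*t^2 := by ring
    rw [h2, hδpow] at h1
    have q := mul_le_mul_of_nonneg_right hδsmall (sq_nonneg t)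
    have q2 : 2*A^2*δ ≤ 2*A^2 := mul_le_of_le_one_right (by positivity) hδ1
    calc δ * ‖tamedDrift b₀ b₁ lamStar δ θ ℓ₀ x‖^2
        ≤ 2*A^2*δ + (4*A^2*δ + 4*L₀^2*(δ ^ (1-2*θ)))*t^2 := h1
      _ ≤ 2*A^2 + (lamStar/4)*t^2 := add_le_add q2 q
  -- inner product identity
  have hinner : ⟪x, tamedDrift b₀ b₁ lamStar δ θ ℓ₀ x⟫
      = ⟪x, b₀ x⟫ - lamStar * t^2 + g * (⟪x, b₁ x⟫ + lamStar * t^2) := by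
    rw [hexp, inner_add_right, inner_sub_right, real_inner_smul_right, real_inner_smul_right,
      inner_add_right, real_inner_smul_right, real_inner_self_eq_norm_sq]
  have hip0 : ⟪x, b₀ x⟫ ≤ lamStar/4 * t^2 + (C₁ + C₂) := by
    have h := real_inner_le_norm x (b₀ x)
    have h1 : ⟪x, b₀ x⟫ ≤ t * (K₂ * t ^ α + M₀) :=
      h.trans (mul_le_mul_of_nonneg_left hb₀x ht)
    have h2 := hC₁ t ht
    have h3 := hC₂ t ht
    linarith only [h1, h2, h3]
  have hdis : g * (⟪x, b₁ x⟫ + lamStar * t^2) ≤ Cstar := by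
    have hq : ⟪x, b₁ x⟫ + lamStar * t^2 ≤ Cstar := by
      have := hdiss x; rw [← htdef] at this; linarith
    rcases le_or_gt (⟪x, b₁ x⟫ + lamStar * t^2) 0 with h | h
    · have h2 := mul_nonpos_of_nonneg_of_nonpos hg0.le h
      linarith only [h2, hCstar.le]
    · have h4 : g * (⟪x, b₁ x⟫ + lamStar * t^2) ≤ 1 * (⟪x, b₁ x⟫ + lamStar * t^2) :=
        mul_le_mul_of_nonneg_right hg1 h.le
      linarith only [h4, hq]
  rw [hinner]
  linarith only [hip0, hdis, hδterm, mul_nonneg hlam.le (sq_nonneg t)]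
end

section
/- For all δ ∈ (0,1] and all x, y ∈ ℝ^d: |b(x) − b^{(δ)}(y)| ≤ K₂|x−y|^α + L₀(1+|x|^{ℓ₀}+|y|^{ℓ₀})|x−y| + (1/2)|y|^{2ℓ₀}·(|b₁(0)| + (λ* + L₀(1+|y|^{ℓ₀}))|y|)·δ^{2θ}. -/
open scoped RealInnerProductSpace
open Real Set

lemma one_sub_inv_rpow_half_le (u : ℝ) (hu : 0 ≤ u) :
    1 - (((1 + u) ^ ((1:ℝ)/2))⁻¹) ≤ u / 2 := by
  have h1 : (0:ℝ) < 1 + u := by linarith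
  have hc : (1 + u) ^ ((1:ℝ)/2) = Real.sqrt (1 + u) := by
    rw [Real.sqrt_eq_rpow]
  have hcs : Real.sqrt (1 + u) ≤ 1 + u / 2 := by
    have h2 : 1 + u ≤ (1 + u / 2) ^ 2 := by nlinarith
    calc Real.sqrt (1 + u) ≤ Real.sqrt ((1 + u / 2) ^ 2) := Real.sqrt_le_sqrt h2
      _ = 1 + u / 2 := Real.sqrt_sq (by linarith)
  have hc1 : 1 ≤ Real.sqrt (1 + u) := by
    have := Real.sqrt_le_sqrt (show (1:ℝ) ≤ 1 + u by linarith)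
    simpa using this
  rw [hc]
  have hpos : 0 < Real.sqrt (1 + u) := by linarith
  have : 1 - (Real.sqrt (1 + u))⁻¹ ≤ Real.sqrt (1 + u) - 1 := by
    have : (Real.sqrt (1 + u))⁻¹ ≥ 2 - Real.sqrt (1 + u) := by
      rw [ge_iff_le, ← sub_nonneg]
      have : (Real.sqrt (1 + u))⁻¹ - (2 - Real.sqrt (1 + u))
          = (Real.sqrt (1 + u) - 1) ^ 2 / Real.sqrt (1 + u) := by
        field_simp; ring
      rw [this]
      positivity
    linarith
  linarith

theorem stmt_13 (d : ℕ) (hd : 1 ≤ d)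
    (b₀ b₁ b : EuclideanSpace ℝ (Fin d) → EuclideanSpace ℝ (Fin d))
    (hb : ∀ x, b x = b₀ x + b₁ x)
    (K₂ α : ℝ) (hK₂ : 0 < K₂) (hα : α ∈ Set.Ioo (0:ℝ) 1)
    (hb₀ : ∀ x y, ‖b₀ x - b₀ y‖ ≤ K₂ * ‖x - y‖ ^ α)
    (L₀ ℓ₀ : ℝ) (hL₀ : 0 < L₀) (hℓ₀ : 0 < ℓ₀)
    (hb₁ : ∀ x y, ‖b₁ x - b₁ y‖ ≤ L₀ * (1 + ‖x‖ ^ ℓ₀ + ‖y‖ ^ ℓ₀) * ‖x - y‖)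
    (θ lamStar : ℝ) (hθ : θ ∈ Set.Ioo (0:ℝ) (1/2)) (hlam : 0 < lamStar) :
    ∀ δ ∈ Set.Ioc (0:ℝ) 1, ∀ x y : EuclideanSpace ℝ (Fin d),
      ‖b x - tamedDrift b₀ b₁ lamStar δ θ ℓ₀ y‖
        ≤ K₂ * ‖x - y‖ ^ α + L₀ * (1 + ‖x‖ ^ ℓ₀ + ‖y‖ ^ ℓ₀) * ‖x - y‖
          + (1/2) * ‖y‖ ^ (2 * ℓ₀)
            * (‖b₁ (0 : EuclideanSpace ℝ (Fin d))‖ + (lamStar + L₀ * (1 + ‖y‖ ^ ℓ₀)) * ‖y‖)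
            * δ ^ (2 * θ) := by
  intro δ hδ x y
  set u : ℝ := δ ^ (2 * θ) * ‖y‖ ^ (2 * ℓ₀) with hu_def
  have hu : 0 ≤ u := by
    exact mul_nonneg (Real.rpow_nonneg hδ.1.le _) (Real.rpow_nonneg (norm_nonneg _) _)
  set c : ℝ := (1 + u) ^ ((1:ℝ)/2) with hc_def
  have hc1 : 1 ≤ c := Real.one_le_rpow (by linarith) (by norm_num)
  have hcpos : 0 < c := by linarith
  have hsplit : b x - tamedDrift b₀ b₁ lamStar δ θ ℓ₀ y
      = (b₀ x - b₀ y) + (b₁ x - b₁ y) + (1 - c⁻¹) • (b₁ y + lamStar • y) := by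
    rw [hb]
    unfold tamedDrift
    rw [← hu_def, ← hc_def]
    module
  have hnorm3 : ‖(1 - c⁻¹) • (b₁ y + lamStar • y)‖
      ≤ (u / 2) * (‖b₁ (0 : EuclideanSpace ℝ (Fin d))‖
          + (lamStar + L₀ * (1 + ‖y‖ ^ ℓ₀)) * ‖y‖) := by
    rw [norm_smul, Real.norm_eq_abs]
    have hinv : c⁻¹ ≤ 1 := inv_le_one_of_one_le₀ hc1
    have habs : |1 - c⁻¹| = 1 - c⁻¹ := abs_of_nonneg (by linarith)
    rw [habs]
    have hA : 1 - c⁻¹ ≤ u / 2 := one_sub_inv_rpow_half_le u hu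
    have hB : ‖b₁ y + lamStar • y‖
        ≤ ‖b₁ (0 : EuclideanSpace ℝ (Fin d))‖ + (lamStar + L₀ * (1 + ‖y‖ ^ ℓ₀)) * ‖y‖ := by
      have h1 : ‖b₁ y + lamStar • y‖ ≤ ‖b₁ y‖ + lamStar * ‖y‖ := by
        calc ‖b₁ y + lamStar • y‖ ≤ ‖b₁ y‖ + ‖lamStar • y‖ := norm_add_le _ _
          _ = ‖b₁ y‖ + lamStar * ‖y‖ := by
              rw [norm_smul, Real.norm_eq_abs, abs_of_pos hlam]
      have h2 : ‖b₁ y‖ ≤ ‖b₁ (0 : EuclideanSpace ℝ (Fin d))‖ + L₀ * (1 + ‖y‖ ^ ℓ₀) * ‖y‖ := by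
        have := hb₁ y 0
        simp only [norm_zero, sub_zero, Real.zero_rpow hℓ₀.ne', add_zero] at this
        have hrw : b₁ y = (b₁ y - b₁ 0) + b₁ 0 := by abel
        calc ‖b₁ y‖ ≤ ‖b₁ y - b₁ 0‖ + ‖b₁ (0 : EuclideanSpace ℝ (Fin d))‖ := by
              rw [hrw]; exact (norm_add_le _ _).trans (by rw [← hrw])
          _ ≤ L₀ * (1 + ‖y‖ ^ ℓ₀) * ‖y‖ + ‖b₁ (0 : EuclideanSpace ℝ (Fin d))‖ := by linarith
          _ = _ := by ring
      have := h1.trans (by linarith : ‖b₁ y‖ + lamStar * ‖y‖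
          ≤ ‖b₁ (0 : EuclideanSpace ℝ (Fin d))‖ + lamStar * ‖y‖ + L₀ * (1 + ‖y‖ ^ ℓ₀) * ‖y‖)
      linarith [this]
    exact mul_le_mul hA hB (norm_nonneg _) (by linarith)
  calc ‖b x - tamedDrift b₀ b₁ lamStar δ θ ℓ₀ y‖
      = ‖(b₀ x - b₀ y) + (b₁ x - b₁ y) + (1 - c⁻¹) • (b₁ y + lamStar • y)‖ := by rw [hsplit]
    _ ≤ ‖b₀ x - b₀ y‖ + ‖b₁ x - b₁ y‖ + ‖(1 - c⁻¹) • (b₁ y + lamStar • y)‖ :=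
        norm_add₃_le
    _ ≤ K₂ * ‖x - y‖ ^ α + L₀ * (1 + ‖x‖ ^ ℓ₀ + ‖y‖ ^ ℓ₀) * ‖x - y‖
        + (u / 2) * (‖b₁ (0 : EuclideanSpace ℝ (Fin d))‖
            + (lamStar + L₀ * (1 + ‖y‖ ^ ℓ₀)) * ‖y‖) := by
        gcongr <;> [exact hb₀ x y; exact hb₁ x y]
        -- fallback handled below
    _ = _ := by rw [hu_def]; ring
end

section
/- There exist constants β ∈ (0,1], λ_* > 0 and C_* > 0, depending only on a, b, L, λ*_V, C*_V and ℓ₀, such that for every ε > 0, every cutoff h_ε as in the context, and all (x,y), (x′,y′) ∈ ℝ^d×ℝ^d: Θ₁^{ε,β}((x,y),(x′,y′)) ≤ −[ λ_*·1_{r≤ℓ₀} + (2βC*_V/(1 + 4βC*_V/λ*_V))·1_{r>ℓ₀} ]·ρ_β((x,y),(x′,y′)) + C_*·ε·(1 + βV(x,y) + βV(x′,y′)). -/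
open Real Set Bornology

/-- Euclidean space `ℝ^d`. -/
abbrev Euc (d : ℕ) := EuclideanSpace ℝ (Fin d)

set_option linter.unusedVariables false
set_option maxHeartbeats 1600000

private lemma combine1 {β CV lamV lam0 CS ε F R c₁ c₂ S Br : ℝ}
    (hβ : 0 < β) (hCV : 0 < CV) (hlamV : 0 < lamV) (hlam0 : 0 < lam0)
    (hF1 : c₁ * R ≤ F) (hF2 : F ≤ (c₂ + c₁) * R) (hF0 : 0 ≤ F) (hR : 0 ≤ R)
    (hS : 2 ≤ S) (hε : 0 ≤ ε) (hCS : 0 ≤ CS)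
    (hβle : 2 * β * CV * (c₂ + c₁) ≤ lam0 * c₁ / 2)
    (hbr : Br ≤ -lam0 * F + CS * ε) :
    (1 + β * S) * Br - β * F * (lamV * S - 2 * CV)
      ≤ -(lam0 / 2 * (F * (1 + β * S))) + CS * ε * (1 + β * S) := by
  have hS0 : (0:ℝ) ≤ S := by linarith
  have hW : (1:ℝ) ≤ 1 + β * S := by nlinarith
  have hW0 : (0:ℝ) ≤ 1 + β * S := by linarith
  have t0 : (1 + β * S) * Br ≤ (1 + β * S) * (-lam0 * F + CS * ε) :=
    mul_le_mul_of_nonneg_left hbr hW0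
  have t1a : 2 * β * CV * F ≤ 2 * β * CV * ((c₂ + c₁) * R) :=
    mul_le_mul_of_nonneg_left hF2 (by positivity)
  have t1b : 2 * β * CV * (c₂ + c₁) * R ≤ lam0 * c₁ / 2 * R :=
    mul_le_mul_of_nonneg_right hβle hR
  have t1c : lam0 / 2 * (c₁ * R) ≤ lam0 / 2 * F :=
    mul_le_mul_of_nonneg_left hF1 (by positivity)
  have t2 : 0 ≤ β * (lamV * S) * F :=
    mul_nonneg (mul_nonneg hβ.le (mul_nonneg hlamV.le hS0)) hF0
  have t3 : 0 ≤ lam0 / 2 * F * (β * S) :=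
    mul_nonneg (mul_nonneg (by positivity) hF0) (mul_nonneg hβ.le hS0)
  nlinarith [t0, t1a, t1b, t1c, t2, t3]

private lemma bracket_case1 (γ α₀ b B ℓ₀ c₁ c₂ ε Z Q R H : ℝ)
    (hb : 0 < b) (hγ : 0 < γ) (hα₀ : 2 < α₀) (hB : 0 < B) (hℓ₀ : 1 ≤ ℓ₀)
    (hc₂ : c₂ = 2 / γ ^ 2 * ℓ₀ * B) (hc₁ : c₁ = c₂ * Real.exp (-c₂ * ℓ₀))
    (hZ : 0 ≤ Z) (hQ : 0 ≤ Q) (hRZQ : R = α₀ * Z + Q) (hRℓ : R ≤ ℓ₀)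
    (hε : 0 < ε) (hH0 : 0 ≤ H) (hH1 : H ≤ 1) (hHQ : 2 * ε ≤ Q → H = 1) :
    (c₂ * Real.exp (-c₂ * R) + c₁) * (-b * Z + B * Q)
      + 2 * γ ^ 2 * (-(c₂ ^ 2) * Real.exp (-c₂ * R)) * H ^ 2
    ≤ -(min (ℓ₀ * B * c₁) (b * c₁ / (α₀ * (c₂ + c₁)))) * (1 - Real.exp (-c₂ * R) + c₁ * R)
      + (2 * B * (c₂ + c₁) + 2 * b * c₁ / α₀) * ε := by
  have hℓ0 : (0:ℝ) < ℓ₀ := by linarith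
  have hα0 : (0:ℝ) < α₀ := by linarith
  have hc₂0 : 0 < c₂ := by rw [hc₂]; positivity
  have hR0 : 0 ≤ R := by nlinarith
  set E := Real.exp (-c₂ * R) with hE
  set E₀ := Real.exp (-c₂ * ℓ₀) with hE₀
  have hE0 : 0 < E := Real.exp_pos _
  have hE₀0 : 0 < E₀ := Real.exp_pos _
  have hE1 : E ≤ 1 := by
    calc E ≤ Real.exp 0 := Real.exp_le_exp.mpr (by nlinarith)
    _ = 1 := Real.exp_zero
  have hE₀1 : E₀ ≤ 1 := by
    calc E₀ ≤ Real.exp 0 := Real.exp_le_exp.mpr (by nlinarith)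
    _ = 1 := Real.exp_zero
  have hEE : E₀ ≤ E := Real.exp_le_exp.mpr (by nlinarith)
  have hc₁0 : 0 < c₁ := by rw [hc₁]; positivity
  have hc₁c₂ : c₁ ≤ c₂ := by rw [hc₁]; nlinarith
  have h1E : 1 - E ≤ c₂ * R := by
    have := Real.add_one_le_exp (-c₂ * R)
    rw [← hE] at this; linarith
  have hxe : c₂ * ℓ₀ * E₀ ≤ 1 := by
    have h1 := Real.add_one_le_exp (c₂ * ℓ₀)
    have hmul : E₀ * Real.exp (c₂ * ℓ₀) = 1 := by
      rw [hE₀, ← Real.exp_add]; ring_nf; exact Real.exp_zero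
    nlinarith [mul_le_mul_of_nonneg_left h1 hE₀0.le]
  have hQR : Q ≤ R := by nlinarith
  have hF0 : 0 ≤ 1 - E + c₁ * R := by nlinarith [mul_nonneg hc₁0.le hR0]
  have hF2 : 1 - E + c₁ * R ≤ 2 := by
    have h1 : c₁ * R ≤ c₁ * ℓ₀ := mul_le_mul_of_nonneg_left hRℓ hc₁0.le
    have h2 : c₁ * ℓ₀ ≤ 1 := by rw [hc₁]; nlinarith
    linarith
  have hFle : 1 - E + c₁ * R ≤ (c₂ + c₁) * R := by nlinarith
  have hl10 : (0:ℝ) < ℓ₀ * B * c₁ := by positivity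
  have hl20 : (0:ℝ) < b * c₁ / (α₀ * (c₂ + c₁)) := by positivity
  have hCS0 : (0:ℝ) ≤ (2 * B * (c₂ + c₁) + 2 * b * c₁ / α₀) * ε := by positivity
  rcases le_or_gt (2 * ε) Q with hq | hq
  · have hH' := hHQ hq
    subst hH'
    have hgc : γ ^ 2 * c₂ = 2 * ℓ₀ * B := by rw [hc₂]; field_simp
    have key1 : (c₂ * E + c₁) * (-b * Z + B * Q) ≤ (c₂ * E + c₁) * (B * ℓ₀) := by
      apply mul_le_mul_of_nonneg_left _ (by positivity)
      nlinarith [mul_nonneg hb.le hZ, mul_le_mul_of_nonneg_left (le_trans hQR hRℓ) hB.le]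
    have key2 : 2 * γ ^ 2 * (-(c₂ ^ 2) * E) * (1:ℝ) ^ 2 = -(4 * ℓ₀ * B * (c₂ * E)) := by
      linear_combination (-2 * c₂ * E) * hgc
    have key3 : B * ℓ₀ * c₁ ≤ B * ℓ₀ * (c₂ * E) := by
      have h5 : c₁ ≤ c₂ * E := by rw [hc₁]; exact mul_le_mul_of_nonneg_left hEE hc₂0.le
      exact mul_le_mul_of_nonneg_left h5 (by positivity)
    have key4 : ℓ₀ * B * c₁ * (1 - E + c₁ * R) ≤ ℓ₀ * B * c₁ * 2 :=
      mul_le_mul_of_nonneg_left hF2 (by positivity)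
    have hlm : min (ℓ₀ * B * c₁) (b * c₁ / (α₀ * (c₂ + c₁))) ≤ ℓ₀ * B * c₁ := min_le_left _ _
    have hFmul : min (ℓ₀ * B * c₁) (b * c₁ / (α₀ * (c₂ + c₁))) * (1 - E + c₁ * R)
        ≤ ℓ₀ * B * c₁ * (1 - E + c₁ * R) := mul_le_mul_of_nonneg_right hlm hF0
    linarith [key1, key2, key3, key4, hFmul, hCS0]
  · have hgg : 2 * γ ^ 2 * (-(c₂ ^ 2) * E) * H ^ 2 ≤ 0 := by
      have h5 : 0 ≤ 2 * γ ^ 2 * c₂ ^ 2 * E * H ^ 2 := by positivity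
      nlinarith [h5]
    have keyA : (c₂ * E + c₁) * (-b * Z + B * Q) ≤ -(b * c₁ * Z) + (c₂ + c₁) * (B * (2 * ε)) := by
      have e1 : (c₂ * E + c₁) * (-b * Z) ≤ -(b * c₁ * Z) := by
        nlinarith [mul_nonneg (mul_nonneg hc₂0.le hE0.le) (mul_nonneg hb.le hZ)]
      have e2 : (c₂ * E + c₁) * (B * Q) ≤ (c₂ + c₁) * (B * (2 * ε)) := by
        apply mul_le_mul (by nlinarith) (mul_le_mul_of_nonneg_left hq.le hB.le)
          (by positivity) (by positivity)
      nlinarith [e1, e2]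
    have h2 : b * c₁ / α₀ * R = b * c₁ * Z + b * c₁ / α₀ * Q := by
      rw [hRZQ]; field_simp
    have keyB : -(b * c₁ * Z) ≤ -(b * c₁ / α₀) * R + 2 * b * c₁ / α₀ * ε := by
      have h6 : b * c₁ / α₀ * Q ≤ b * c₁ / α₀ * (2 * ε) :=
        mul_le_mul_of_nonneg_left hq.le (by positivity)
      have h7 : 2 * b * c₁ / α₀ * ε = b * c₁ / α₀ * (2 * ε) := by ring
      linarith [h2, h6]
    have h3R : b * c₁ / (α₀ * (c₂ + c₁)) * ((c₂ + c₁) * R) = b * c₁ / α₀ * R := by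
      field_simp
    have keyD : b * c₁ / (α₀ * (c₂ + c₁)) * (1 - E + c₁ * R)
        ≤ b * c₁ / (α₀ * (c₂ + c₁)) * ((c₂ + c₁) * R) :=
      mul_le_mul_of_nonneg_left hFle hl20.le
    have hlm : min (ℓ₀ * B * c₁) (b * c₁ / (α₀ * (c₂ + c₁))) ≤ b * c₁ / (α₀ * (c₂ + c₁)) :=
      min_le_right _ _
    have hFmul : min (ℓ₀ * B * c₁) (b * c₁ / (α₀ * (c₂ + c₁))) * (1 - E + c₁ * R)
        ≤ b * c₁ / (α₀ * (c₂ + c₁)) * (1 - E + c₁ * R) := mul_le_mul_of_nonneg_right hlm hF0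
    linarith [keyA, hgg, keyB, keyD, h3R, hFmul]

/-- The constants `β, λ_*, C_*` depend only on `a, b, L, λ*_V, C*_V` and `ℓ₀`: they are
chosen before the dimension `d`, the Lyapunov function `V` and the cutoff `h_ε`. -/
theorem stmt_14 (a b L : ℝ) (ha : 0 ≤ a) (hb : 0 < b) (hL : 0 < L)
    (γ α₀ : ℝ) (hγ : γ = b / (a + b)) (hα₀ : α₀ = 2 + (1/b + 1/(a+b)) * L)
    (lamV CV : ℝ) (hlamV : 0 < lamV) (hCV : 0 < CV)
    (ℓ₀ c₁ c₂ : ℝ)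
    (hc₂ : c₂ = (2 / γ ^ 2) * ℓ₀ * ((α₀ + 1) * b / γ + L))
    (hc₁ : c₁ = c₂ * Real.exp (-c₂ * ℓ₀))
    (f g g' g'' : ℝ → ℝ)
    (hf : ∀ s, f s = 1 - Real.exp (-c₂ * s) + c₁ * s)
    (hg : ∀ s, g s = f (min s ℓ₀))
    (hg' : ∀ s, g' s = if s ≤ ℓ₀ then c₂ * Real.exp (-c₂ * s) + c₁ else 0)
    (hg'' : ∀ s, g'' s = if s ≤ ℓ₀ then -(c₂ ^ 2) * Real.exp (-c₂ * s) else 0) :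
    ∃ β lamS CS : ℝ, β ∈ Set.Ioc (0:ℝ) 1 ∧ 0 < lamS ∧ 0 < CS ∧
      ∀ d : ℕ, 1 ≤ d →
      ∀ V : Euc d × Euc d → ℝ,
        Continuous V → (∀ p, 1 ≤ V p) →
        (∀ R > (0:ℝ), IsBounded {p : Euc d × Euc d | V p ≤ R}) →
      ∀ r : (Euc d × Euc d) → (Euc d × Euc d) → ℝ,
        (∀ p p', r p p' = α₀ * ‖p.1 - p'.1‖ + ‖(p.1 - p'.1) + γ • (p.2 - p'.2)‖) →
        ℓ₀ = 1 + sSup {s : ℝ | ∃ p p', V p + V p' ≤ 4 * CV / lamV ∧ s = r p p'} →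
      ∀ ε > (0:ℝ), ∀ h : ℝ → ℝ,
        (∀ s, 0 ≤ s → h s ∈ Set.Icc (0:ℝ) 1) →
        (∀ s, 0 ≤ s → s ≤ ε → h s = 0) → (∀ s, 2 * ε ≤ s → h s = 1) →
      ∀ p p' : Euc d × Euc d,
        (1 + β * V p + β * V p') *
            (g' (r p p') * (((1 - α₀) * (b / γ - a) + L * (1 + γ)) * ‖p.1 - p'.1‖
                + ((α₀ + 1) * b / γ + L) * ‖(p.1 - p'.1) + γ • (p.2 - p'.2)‖)
              + 2 * γ ^ 2 * g'' (r p p') * (h ‖(p.1 - p'.1) + γ • (p.2 - p'.2)‖) ^ 2)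
          - β * g (r p p') * (lamV * (V p + V p') - 2 * CV)
        ≤ -((if r p p' ≤ ℓ₀ then lamS else 2 * β * CV / (1 + 4 * β * CV / lamV))
              * (g (r p p') * (1 + β * V p + β * V p')))
          + CS * ε * (1 + β * V p + β * V p') := by
  have hab : (0:ℝ) < a + b := by linarith
  have hγ0 : 0 < γ := by rw [hγ]; positivity
  have hα₀2 : 2 < α₀ := by
    rw [hα₀]
    have h1 : 0 < (1/b + 1/(a+b)) * L := by positivity
    linarith
  have hα₀0 : 0 < α₀ := by linarith
  have hb' : b ≠ 0 := ne_of_gt hb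
  have hab' : a + b ≠ 0 := ne_of_gt hab
  have hA : (1 - α₀) * (b / γ - a) + L * (1 + γ) = -b := by
    rw [hγ, hα₀]; field_simp; ring
  set B := (α₀ + 1) * b / γ + L with hBdef
  have hB : 0 < B := by rw [hBdef]; positivity
  rcases lt_or_ge ℓ₀ 1 with hℓ | hℓ
  · refine ⟨1, 1, 1, ⟨one_pos, le_refl 1⟩, one_pos, one_pos, ?_⟩
    intro d hd V hVc hV1 hVb r hr hℓeq ε hε h hIcc hzero hone p p'
    exfalso
    have hnn : 0 ≤ sSup {s : ℝ | ∃ p p', V p + V p' ≤ 4 * CV / lamV ∧ s = r p p'} := by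
      apply Real.sSup_nonneg
      rintro x ⟨u, u', -, rfl⟩
      rw [hr]; positivity
    linarith
  · have hℓ0 : (0:ℝ) < ℓ₀ := by linarith
    have hc₂0 : 0 < c₂ := by rw [hc₂]; positivity
    have hc₁0 : 0 < c₁ := by rw [hc₁]; positivity
    set lam0 := min (ℓ₀ * B * c₁) (b * c₁ / (α₀ * (c₂ + c₁))) with hlam0def
    have hlam0 : 0 < lam0 := lt_min (by positivity) (by positivity)
    set CS := 2 * B * (c₂ + c₁) + 2 * b * c₁ / α₀ with hCSdef
    have hCS : 0 < CS := by rw [hCSdef]; positivity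
    set β := min 1 (lam0 * c₁ / (4 * CV * (c₂ + c₁))) with hβdef
    have hβ0 : 0 < β := lt_min one_pos (by positivity)
    have hβ1 : β ≤ 1 := min_le_left _ _
    have hβle : 2 * β * CV * (c₂ + c₁) ≤ lam0 * c₁ / 2 := by
      have h1 : β ≤ lam0 * c₁ / (4 * CV * (c₂ + c₁)) := min_le_right _ _
      have h2 : 2 * CV * (c₂ + c₁) * β
          ≤ 2 * CV * (c₂ + c₁) * (lam0 * c₁ / (4 * CV * (c₂ + c₁))) :=
        mul_le_mul_of_nonneg_left h1 (by positivity)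
      have h3 : 2 * CV * (c₂ + c₁) * (lam0 * c₁ / (4 * CV * (c₂ + c₁))) = lam0 * c₁ / 2 := by
        field_simp; ring
      nlinarith [h2, h3]
    refine ⟨β, lam0 / 2, CS, ⟨hβ0, hβ1⟩, by positivity, hCS, ?_⟩
    intro d hd V hVc hV1 hVb r hr hℓeq ε hε h hIcc hzero hone p p'
    have hVp := hV1 p
    have hVp' := hV1 p'
    have hW0 : (0:ℝ) ≤ 1 + β * V p + β * V p' := by nlinarith
    have hRZQ := hr p p'
    set Z := ‖p.1 - p'.1‖ with hZdef
    set Q := ‖p.1 - p'.1 + γ • (p.2 - p'.2)‖ with hQdef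
    set R := r p p' with hRdef
    have hZ0 : 0 ≤ Z := norm_nonneg _
    have hQ0 : 0 ≤ Q := norm_nonneg _
    have hR0 : 0 ≤ R := by nlinarith [mul_nonneg hα₀0.le hZ0]
    simp only [hg', hg'', hg, hf]
    clear_value B lam0 CS β Z Q R
    by_cases hcase : R ≤ ℓ₀
    · rw [if_pos hcase, if_pos hcase, if_pos hcase, min_eq_left hcase, hA]
      have hHmem := hIcc Q hQ0
      have hbr := bracket_case1 γ α₀ b B ℓ₀ c₁ c₂ ε Z Q R (h Q) hb hγ0 hα₀2 hB hℓ hc₂ hc₁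
        hZ0 hQ0 hRZQ hcase hε hHmem.1 hHmem.2 (hone Q)
      rw [← hlam0def, ← hCSdef] at hbr
      have hE1 : Real.exp (-c₂ * R) ≤ 1 := by
        calc Real.exp (-c₂ * R) ≤ Real.exp 0 := Real.exp_le_exp.mpr (by nlinarith)
        _ = 1 := Real.exp_zero
      have hF1 : c₁ * R ≤ 1 - Real.exp (-c₂ * R) + c₁ * R := by linarith
      have hF2 : 1 - Real.exp (-c₂ * R) + c₁ * R ≤ (c₂ + c₁) * R := by
        have := Real.add_one_le_exp (-c₂ * R); nlinarith
      have hF0 : 0 ≤ 1 - Real.exp (-c₂ * R) + c₁ * R := by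
        nlinarith [mul_nonneg hc₁0.le hR0]
      have hSig : 2 ≤ V p + V p' := by linarith
      have hcomb := combine1 hβ0 hCV hlamV hlam0 hF1 hF2 hF0 hR0 hSig hε.le hCS.le hβle hbr
      linarith [hcomb]
    · rw [if_neg hcase, if_neg hcase, if_neg hcase, min_eq_right (le_of_not_ge hcase)]
      have hcase' : ℓ₀ < R := not_le.mp hcase
      have hSig4 : 4 * CV ≤ lamV * (V p + V p') := by
        by_contra hcon
        push_neg at hcon
        have hsm : V p + V p' ≤ 4 * CV / lamV := by
          rw [le_div_iff₀ hlamV]; nlinarith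
        obtain ⟨M, hM⟩ := isBounded_iff_forall_norm_le.mp (hVb (4 * CV / lamV) (by positivity))
        have hbdd : BddAbove {s : ℝ | ∃ p p', V p + V p' ≤ 4 * CV / lamV ∧ s = r p p'} := by
          refine ⟨α₀ * (2 * M) + (2 * M + γ * (2 * M)), ?_⟩
          rintro s ⟨u, u', huu, rfl⟩
          have hu : ‖u‖ ≤ M := hM u (by simp only [Set.mem_setOf_eq]; linarith [hV1 u'])
          have hu' : ‖u'‖ ≤ M := hM u' (by simp only [Set.mem_setOf_eq]; linarith [hV1 u])
          have n1 : ‖u.1 - u'.1‖ ≤ 2 * M := by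
            calc ‖u.1 - u'.1‖ ≤ ‖u.1‖ + ‖u'.1‖ := norm_sub_le _ _
            _ ≤ 2 * M := by linarith [norm_fst_le u, norm_fst_le u']
          have n2 : ‖u.2 - u'.2‖ ≤ 2 * M := by
            calc ‖u.2 - u'.2‖ ≤ ‖u.2‖ + ‖u'.2‖ := norm_sub_le _ _
            _ ≤ 2 * M := by linarith [norm_snd_le u, norm_snd_le u']
          have n3 : ‖u.1 - u'.1 + γ • (u.2 - u'.2)‖ ≤ 2 * M + γ * (2 * M) := by
            calc ‖u.1 - u'.1 + γ • (u.2 - u'.2)‖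
                ≤ ‖u.1 - u'.1‖ + ‖γ • (u.2 - u'.2)‖ := norm_add_le _ _
            _ = ‖u.1 - u'.1‖ + |γ| * ‖u.2 - u'.2‖ := by rw [norm_smul, Real.norm_eq_abs]
            _ ≤ 2 * M + γ * (2 * M) := by
                rw [abs_of_pos hγ0]
                have := mul_le_mul_of_nonneg_left n2 hγ0.le
                linarith
          rw [hr]
          have h9 := mul_le_mul_of_nonneg_left n1 hα₀0.le
          linarith [n3]
        have hle := le_csSup hbdd (⟨p, p', hsm, rfl⟩ :
          r p p' ∈ {s : ℝ | ∃ p p', V p + V p' ≤ 4 * CV / lamV ∧ s = r p p'})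
        rw [← hRdef] at hle
        linarith [hℓeq, hle]
      have hFl0 : 0 ≤ 1 - Real.exp (-c₂ * ℓ₀) + c₁ * ℓ₀ := by
        have hE1 : Real.exp (-c₂ * ℓ₀) ≤ 1 := by
          calc Real.exp (-c₂ * ℓ₀) ≤ Real.exp 0 := Real.exp_le_exp.mpr (by nlinarith)
          _ = 1 := Real.exp_zero
        nlinarith [mul_nonneg hc₁0.le hℓ0.le]
      have hKalt : 2 * β * CV / (1 + 4 * β * CV / lamV)
          = 2 * β * CV * lamV / (lamV + 4 * β * CV) := by
        rw [div_eq_div_iff (by positivity) (by positivity)]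
        field_simp
      rw [hKalt]
      have hdiff : 0 ≤ lamV * (V p + V p') - 4 * CV := by linarith
      have hKW : 2 * β * CV * lamV / (lamV + 4 * β * CV) * (1 + β * V p + β * V p')
          ≤ β * (lamV * (V p + V p') - 2 * CV) := by
        rw [div_mul_eq_mul_div, div_le_iff₀ (by positivity)]
        nlinarith [mul_nonneg (mul_nonneg hβ0.le hlamV.le) hdiff,
          mul_nonneg (mul_nonneg (mul_nonneg hβ0.le hβ0.le) hCV.le) hdiff]
      have hmul := mul_le_mul_of_nonneg_right hKW hFl0
      have hcs := mul_nonneg (mul_nonneg hCS.le hε.le) hW0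
      linarith [hmul, hcs]
end

section
/- Set C := 4γL*_V(1 + c₂/c₁)·max((1+γ^{−1})/α₀, γ^{−1}). For every β ∈ (0,1], ε > 0, cutoff h_ε as in the context, and all (x,y), (x′,y′) ∈ ℝ^d×ℝ^d with q ≠ 0: 2βγ·g′₋(r)·h_ε(|q|)²·⟨q/|q|, ∇₂V(x′,y′) − ∇₂V(x,y)⟩ ≤ C·β^{1−η}·ρ_β((x,y),(x′,y′))·1_{r≤ℓ₀}. -/
open scoped RealInnerProductSpace
open Real Set Bornology

lemma aux_rpow_le_one_add (t η : ℝ) (ht : 0 ≤ t) (hη0 : 0 ≤ η) (hη1 : η ≤ 1) :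
    t ^ η ≤ 1 + t := by
  rcases le_total t 1 with h | h
  · calc t ^ η ≤ 1 := Real.rpow_le_one ht h hη0
    _ ≤ 1 + t := by linarith
  · calc t ^ η ≤ t ^ (1:ℝ) := Real.rpow_le_rpow_of_exponent_le h hη1
    _ = t := Real.rpow_one t
    _ ≤ 1 + t := by linarith

lemma aux_beta_pow (β t η : ℝ) (hβ0 : 0 < β) (ht : 1 ≤ t) (hη0 : 0 ≤ η) (hη1 : η ≤ 1) :
    β * t ^ η ≤ β ^ (1 - η) * (1 + β * t) := by
  have ht0 : (0:ℝ) ≤ t := by linarith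
  have h1 : β * t ^ η = β ^ (1 - η) * (β * t) ^ η := by
    rw [Real.mul_rpow hβ0.le ht0, ← mul_assoc, ← Real.rpow_add hβ0,
      show (1 - η) + η = 1 by ring, Real.rpow_one]
  have h2 : (β * t) ^ η ≤ 1 + β * t :=
    aux_rpow_le_one_add _ _ (by positivity) hη0 hη1
  rw [h1]
  exact mul_le_mul_of_nonneg_left h2 (Real.rpow_nonneg hβ0.le _)

lemma aux_chain (γ LsV M β S T R G' G B C P' : ℝ)
    (hγ : 0 < γ) (hLsV : 0 < LsV) (hM : 0 < M) (hβ : 0 < β) (hS : 0 ≤ S) (hT : 0 ≤ T)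
    (hR : 0 ≤ R) (hG' : 0 ≤ G') (hG : 0 ≤ G) (hB : 0 ≤ B)
    (hP'0 : 0 ≤ P') (hP'1 : P' ≤ 1) (hGR : G' * R ≤ G) (hβS : β * S ≤ 2 * B * T)
    (hC : 4 * γ * LsV * M ≤ C) :
    2 * β * γ * G' * P' * (LsV * S * (M * R)) ≤ C * B * (G * T) := by
  have hGR0 : 0 ≤ G' * R := mul_nonneg hG' hR
  have hβS0 : 0 ≤ β * S := mul_nonneg hβ.le hS
  have hBT0 : 0 ≤ 2 * B * T := by positivity
  have hK : 0 ≤ 2 * γ * LsV * M := by positivity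
  calc 2 * β * γ * G' * P' * (LsV * S * (M * R))
      = (2 * γ * LsV * M) * P' * (G' * R) * (β * S) := by ring
    _ ≤ (2 * γ * LsV * M) * 1 * (G' * R) * (β * S) := by
        apply mul_le_mul_of_nonneg_right _ hβS0
        apply mul_le_mul_of_nonneg_right _ hGR0
        exact mul_le_mul_of_nonneg_left hP'1 hK
    _ ≤ (2 * γ * LsV * M) * 1 * G * (β * S) := by
        apply mul_le_mul_of_nonneg_right _ hβS0
        apply mul_le_mul_of_nonneg_left hGR (by positivity)
    _ ≤ (2 * γ * LsV * M) * 1 * G * (2 * B * T) := by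
        apply mul_le_mul_of_nonneg_left hβS (by positivity)
    _ = (4 * γ * LsV * M) * B * (G * T) := by ring
    _ ≤ C * B * (G * T) := by
        apply mul_le_mul_of_nonneg_right _ (mul_nonneg hG hT)
        exact mul_le_mul_of_nonneg_right hC hB

set_option maxHeartbeats 4000000 in
theorem stmt_15 (d : ℕ) (hd : 1 ≤ d) (a b L : ℝ) (ha : 0 ≤ a) (hb : 0 < b) (hL : 0 < L)
    (γ α₀ : ℝ) (hγ : γ = b / (a + b)) (hα₀ : α₀ = 2 + (1/b + 1/(a+b)) * L)
    (V : Euc d × Euc d → ℝ) (hVcont : Continuous V) (hV1 : ∀ p, 1 ≤ V p)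
    (hVsub : ∀ R > (0:ℝ), IsBounded {p : Euc d × Euc d | V p ≤ R})
    (lamV CV : ℝ) (hlamV : 0 < lamV) (hCV : 0 < CV)
    (D₂V : Euc d × Euc d → Euc d)
    (hD₂V : ∀ x y : Euc d, HasGradientAt (fun y' => V (x, y')) (D₂V (x, y)) y)
    (LsV η : ℝ) (hLsV : 0 < LsV) (hη : η ∈ Set.Ico (0:ℝ) 1)
    (hLip : ∀ p p' : Euc d × Euc d,
      ‖D₂V p - D₂V p'‖ ≤ LsV * (V p ^ η + V p' ^ η) * (‖p.1 - p'.1‖ + ‖p.2 - p'.2‖))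
    (r : (Euc d × Euc d) → (Euc d × Euc d) → ℝ)
    (hr : ∀ p p', r p p' = α₀ * ‖p.1 - p'.1‖ + ‖(p.1 - p'.1) + γ • (p.2 - p'.2)‖)
    (ℓ₀ c₁ c₂ : ℝ)
    (hℓ₀ : ℓ₀ = 1 + sSup {s : ℝ | ∃ p p', V p + V p' ≤ 4 * CV / lamV ∧ s = r p p'})
    (hc₂ : c₂ = (2 / γ ^ 2) * ℓ₀ * ((α₀ + 1) * b / γ + L))
    (hc₁ : c₁ = c₂ * Real.exp (-c₂ * ℓ₀))
    (f g g' : ℝ → ℝ)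
    (hf : ∀ s, f s = 1 - Real.exp (-c₂ * s) + c₁ * s)
    (hg : ∀ s, g s = f (min s ℓ₀))
    (hg' : ∀ s, g' s = if s ≤ ℓ₀ then c₂ * Real.exp (-c₂ * s) + c₁ else 0)
    (C : ℝ) (hC : C = 4 * γ * LsV * (1 + c₂ / c₁) * max ((1 + γ⁻¹) / α₀) γ⁻¹) :
    ∀ β ∈ Set.Ioc (0:ℝ) 1, ∀ ε > (0:ℝ), ∀ h : ℝ → ℝ,
      (∀ s, 0 ≤ s → h s ∈ Set.Icc (0:ℝ) 1) →
      (∀ s, 0 ≤ s → s ≤ ε → h s = 0) → (∀ s, 2 * ε ≤ s → h s = 1) →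
      ∀ p p' : Euc d × Euc d, (p.1 - p'.1) + γ • (p.2 - p'.2) ≠ 0 →
        2 * β * γ * g' (r p p') * (h ‖(p.1 - p'.1) + γ • (p.2 - p'.2)‖) ^ 2 *
            ⟪(‖(p.1 - p'.1) + γ • (p.2 - p'.2)‖⁻¹) • ((p.1 - p'.1) + γ • (p.2 - p'.2)),
              D₂V p' - D₂V p⟫
          ≤ if r p p' ≤ ℓ₀ then
              C * β ^ (1 - η) * (g (r p p') * (1 + β * V p + β * V p'))
            else 0 := by
  obtain ⟨hη0, hη1⟩ := hη
  intro β hβ ε hε h hh01 hh0 hh1 p p' hq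
  obtain ⟨hβ0, hβ1⟩ := hβ
  have hab : 0 < a + b := by linarith
  have hγ0 : 0 < γ := by rw [hγ]; positivity
  have hα₀0 : 0 < α₀ := by rw [hα₀]; positivity
  set q : Euc d := (p.1 - p'.1) + γ • (p.2 - p'.2) with hqdef
  have hq0 : 0 < ‖q‖ := norm_pos_iff.mpr hq
  have hR0 : 0 ≤ r p p' := by
    rw [hr, ← hqdef]; positivity
  have hℓ₀1 : (1:ℝ) ≤ ℓ₀ := by
    rw [hℓ₀]
    have hs : 0 ≤ sSup {s : ℝ | ∃ p p', V p + V p' ≤ 4 * CV / lamV ∧ s = r p p'} := by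
      apply Real.sSup_nonneg
      rintro x ⟨u, u', -, rfl⟩
      rw [hr]; positivity
    linarith
  have hc₂0 : 0 < c₂ := by
    rw [hc₂]
    have h1 : 0 < 2 / γ ^ 2 := by positivity
    have h2 : 0 < (α₀ + 1) * b / γ + L := by positivity
    have h3 : 0 < ℓ₀ := by linarith
    positivity
  have hc₁0 : 0 < c₁ := by rw [hc₁]; positivity
  by_cases hcase : r p p' ≤ ℓ₀
  · rw [if_pos hcase]
    set R := r p p' with hRdef
    -- values of g and g'
    have hgval : g R = 1 - Real.exp (-c₂ * R) + c₁ * R := by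
      rw [hg, min_eq_left hcase, hf]
    have hg'val : g' R = c₂ * Real.exp (-c₂ * R) + c₁ := by
      rw [hg', if_pos hcase]
    have hg'0 : 0 ≤ g' R := by rw [hg'val]; positivity
    have hG0 : 0 ≤ g R := by
      rw [hgval]
      have hE1 : Real.exp (-c₂ * R) ≤ 1 := by
        rw [Real.exp_le_one_iff]
        nlinarith
      nlinarith
    -- g'(R) * R ≤ g(R)
    have hGR : g' R * R ≤ g R := by
      rw [hgval, hg'val]
      have h1 := Real.add_one_le_exp (c₂ * R)
      have h3 := Real.exp_pos (-(c₂ * R))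
      have h2 : Real.exp (-(c₂ * R)) * Real.exp (c₂ * R) = 1 := by
        rw [← Real.exp_add]; simp
      have h4 : Real.exp (-c₂ * R) = Real.exp (-(c₂ * R)) := by ring_nf
      rw [h4]
      have h5 : Real.exp (-(c₂ * R)) * (c₂ * R + 1) ≤ 1 := by
        calc Real.exp (-(c₂ * R)) * (c₂ * R + 1)
            ≤ Real.exp (-(c₂ * R)) * Real.exp (c₂ * R) :=
              mul_le_mul_of_nonneg_left (by linarith [h1]) h3.le
          _ = 1 := h2
      nlinarith [h5]
    -- cutoff bounds
    have hh := hh01 ‖q‖ (norm_nonneg q)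
    have hP'0 : 0 ≤ (h ‖q‖) ^ 2 := sq_nonneg _
    have hP'1 : (h ‖q‖) ^ 2 ≤ 1 := by nlinarith [hh.1, hh.2]
    -- inner product bound
    have hunit : ‖(‖q‖⁻¹ : ℝ) • q‖ = 1 := by
      rw [norm_smul, norm_inv, norm_norm, inv_mul_cancel₀ hq0.ne']
    have hA : ⟪(‖q‖⁻¹ : ℝ) • q, D₂V p' - D₂V p⟫ ≤ ‖D₂V p - D₂V p'‖ := by
      calc ⟪(‖q‖⁻¹ : ℝ) • q, D₂V p' - D₂V p⟫
          ≤ ‖(‖q‖⁻¹ : ℝ) • q‖ * ‖D₂V p' - D₂V p‖ := real_inner_le_norm _ _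
        _ = ‖D₂V p - D₂V p'‖ := by rw [hunit, one_mul, norm_sub_rev]
    -- geometric bound: |z| + |v| ≤ M * R
    set M : ℝ := max ((1 + γ⁻¹) / α₀) γ⁻¹ with hMdef
    have hM0 : 0 < M := lt_of_lt_of_le (inv_pos.mpr hγ0) (le_max_right _ _)
    have hv : γ * ‖p.2 - p'.2‖ ≤ ‖q‖ + ‖p.1 - p'.1‖ := by
      have h1 : q - (p.1 - p'.1) = γ • (p.2 - p'.2) := by rw [hqdef]; abel
      calc γ * ‖p.2 - p'.2‖ = ‖γ • (p.2 - p'.2)‖ := by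
            rw [norm_smul, Real.norm_eq_abs, abs_of_pos hγ0]
        _ = ‖q - (p.1 - p'.1)‖ := by rw [h1]
        _ ≤ ‖q‖ + ‖p.1 - p'.1‖ := norm_sub_le _ _
    have hzv : ‖p.1 - p'.1‖ + ‖p.2 - p'.2‖ ≤ M * R := by
      have hM1 : 1 + γ⁻¹ ≤ M * α₀ := by
        have h1 : (1 + γ⁻¹) / α₀ ≤ M := le_max_left _ _
        calc 1 + γ⁻¹ = ((1 + γ⁻¹) / α₀) * α₀ := by field_simp
          _ ≤ M * α₀ := mul_le_mul_of_nonneg_right h1 hα₀0.le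
      have hM2 : γ⁻¹ ≤ M := le_max_right _ _
      have hvn : ‖p.2 - p'.2‖ ≤ γ⁻¹ * (‖q‖ + ‖p.1 - p'.1‖) := by
        rw [inv_mul_eq_div, le_div_iff₀ hγ0]
        linarith [hv]
      rw [hRdef, hr, ← hqdef]
      nlinarith [norm_nonneg (p.1 - p'.1), norm_nonneg q,
        mul_le_mul_of_nonneg_right hM1 (norm_nonneg (p.1 - p'.1)),
        mul_le_mul_of_nonneg_right hM2 (norm_nonneg q)]
    -- Lipschitz bound
    have hS0 : 0 ≤ V p ^ η + V p' ^ η := by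
      have := Real.rpow_nonneg (by linarith [hV1 p] : (0:ℝ) ≤ V p) η
      have := Real.rpow_nonneg (by linarith [hV1 p'] : (0:ℝ) ≤ V p') η
      linarith
    have hN : ‖D₂V p - D₂V p'‖ ≤ LsV * (V p ^ η + V p' ^ η) * (M * R) := by
      calc ‖D₂V p - D₂V p'‖
          ≤ LsV * (V p ^ η + V p' ^ η) * (‖p.1 - p'.1‖ + ‖p.2 - p'.2‖) := hLip p p'
        _ ≤ LsV * (V p ^ η + V p' ^ η) * (M * R) := by
            apply mul_le_mul_of_nonneg_left hzv (by positivity)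
    -- β-power bound
    have hβS : β * (V p ^ η + V p' ^ η) ≤
        2 * β ^ (1 - η) * (1 + β * V p + β * V p') := by
      have h1 := aux_beta_pow β (V p) η hβ0 (hV1 p) hη0 hη1.le
      have h2 := aux_beta_pow β (V p') η hβ0 (hV1 p') hη0 hη1.le
      have hB0 : 0 ≤ β ^ (1 - η) := Real.rpow_nonneg hβ0.le _
      nlinarith [mul_pos hβ0 (lt_of_lt_of_le one_pos (hV1 p)),
        mul_pos hβ0 (lt_of_lt_of_le one_pos (hV1 p'))]
    have hT0 : 0 ≤ 1 + β * V p + β * V p' := by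
      nlinarith [hV1 p, hV1 p', mul_pos hβ0 (lt_of_lt_of_le one_pos (hV1 p))]
    have hCge : 4 * γ * LsV * M ≤ C := by
      rw [hC]
      have h1 : 0 < c₂ / c₁ := div_pos hc₂0 hc₁0
      calc 4 * γ * LsV * M = 4 * γ * LsV * 1 * M := by ring
        _ ≤ 4 * γ * LsV * (1 + c₂ / c₁) * M := by
            apply mul_le_mul_of_nonneg_right _ hM0.le
            apply mul_le_mul_of_nonneg_left (by linarith) (by positivity)
    -- assemble
    have hP : 0 ≤ 2 * β * γ * g' R * (h ‖q‖) ^ 2 := by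
      apply mul_nonneg _ hP'0
      apply mul_nonneg _ hg'0
      positivity
    calc 2 * β * γ * g' R * (h ‖q‖) ^ 2 * ⟪(‖q‖⁻¹ : ℝ) • q, D₂V p' - D₂V p⟫
        ≤ 2 * β * γ * g' R * (h ‖q‖) ^ 2 *
            (LsV * (V p ^ η + V p' ^ η) * (M * R)) :=
          mul_le_mul_of_nonneg_left (hA.trans hN) hP
      _ ≤ C * β ^ (1 - η) * (g R * (1 + β * V p + β * V p')) :=
          aux_chain γ LsV M β (V p ^ η + V p' ^ η) (1 + β * V p + β * V p') R
            (g' R) (g R) (β ^ (1 - η)) C ((h ‖q‖) ^ 2)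
            hγ0 hLsV hM0 hβ0 hS0 hT0 hR0 hg'0 hG0 (Real.rpow_nonneg hβ0.le _)
            hP'0 hP'1 hGR hβS hCge
  · rw [if_neg hcase]
    have hz : g' (r p p') = 0 := by rw [hg', if_neg hcase]
    rw [hz, mul_zero, zero_mul, zero_mul]
end

section
/- For all x, y ∈ ℝ^d: ⟨x, ∇U(x)⟩ + |y|² + λ⟨x,y⟩ ≥ λ_*·V_λ(x,y) − λ₂ + λ₂·min U − C⋆. -/
open scoped RealInnerProductSpace
open Real Set

/-- `κ := min( (4λ₁−λ²)/(8(7/4−λ)), 3(4λ₁−λ²)/(10(λ²+4λ₁)) )`. -/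
noncomputable def kappaConst (lam1 lam : ℝ) : ℝ :=
  min ((4 * lam1 - lam ^ 2) / (8 * (7/4 - lam)))
    (3 * (4 * lam1 - lam ^ 2) / (10 * (lam ^ 2 + 4 * lam1)))

/-- `λ_* := min(4κ, λ₂)`. -/
noncomputable def lamStarConst (lam1 lam2 lam : ℝ) : ℝ :=
  min (4 * kappaConst lam1 lam) lam2

/-- `V_λ(x,y) := 1 + U(x) − m + (1/4)(|x+y|² + |y|² − λ|x|²)`, where `m = min U`. -/
noncomputable def Vlam {d : ℕ} (U : EuclideanSpace ℝ (Fin d) → ℝ) (m lam : ℝ)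
    (x y : EuclideanSpace ℝ (Fin d)) : ℝ :=
  1 + U x - m + (1/4) * (‖x + y‖ ^ 2 + ‖y‖ ^ 2 - lam * ‖x‖ ^ 2)

/-- Scalar quadratic-form inequality at the core of the drift estimate. -/
lemma scalar_key (lam1 lam k s t p : ℝ) (hl1 : 0 < lam1) (hl : 0 < lam)
    (hl4 : lam < 1/4) (hsq : lam ^ 2 < 4 * lam1)
    (hk0 : 0 < k) (hk1 : k * (14 - 8 * lam) ≤ 4 * lam1 - lam ^ 2)
    (hk2 : 10 * k * (lam ^ 2 + 4 * lam1) ≤ 3 * (4 * lam1 - lam ^ 2))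
    (hs : 0 ≤ s) (ht : 0 ≤ t) (hp1 : -(s * t) ≤ p) (hp2 : p ≤ s * t) :
    k * ((1 - lam) * s ^ 2 + 2 * t ^ 2 + 2 * p) ≤ lam1 * s ^ 2 + t ^ 2 + lam * p := by
  -- b := 1 - 2k > 0
  have hb : 0 < 1 - 2 * k := by nlinarith
  -- discriminant condition : (lam - 2k)^2 ≤ 4 (lam1 - k(1-lam)) (1 - 2k)
  have hdisc : (lam - 2 * k) ^ 2 ≤ 4 * (lam1 - k * (1 - lam)) * (1 - 2 * k) := by
    rcases le_or_gt lam1 (5/4) with h | h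
    · nlinarith [mul_pos hk0 hk0]
    · nlinarith [mul_pos hk0 hk0]
  have ha : 0 ≤ lam1 - k * (1 - lam) := by nlinarith [sq_nonneg (lam - 2 * k)]
  rcases le_or_gt 0 (lam - 2 * k) with hc | hc
  · nlinarith [sq_nonneg (2 * (1 - 2 * k) * t - (lam - 2 * k) * s),
      mul_nonneg (mul_nonneg hc hb.le) (by linarith : 0 ≤ p + s * t),
      mul_nonneg ha (sq_nonneg s)]
  · nlinarith [sq_nonneg (2 * (1 - 2 * k) * t + (lam - 2 * k) * s),
      mul_nonneg (mul_nonneg (by linarith : 0 ≤ 2 * k - lam) hb.le)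
        (by linarith : 0 ≤ s * t - p),
      mul_nonneg ha (sq_nonneg s)]

theorem stmt_17 (d : ℕ) (hd : 1 ≤ d)
    (U : EuclideanSpace ℝ (Fin d) → ℝ) (hU : ContDiff ℝ 1 U)
    (hcoer : ∀ M : ℝ, ∃ R : ℝ, ∀ x, R ≤ ‖x‖ → M ≤ U x)
    (x₀ : EuclideanSpace ℝ (Fin d)) (hx₀ : ∀ x, U x₀ ≤ U x)
    (lam1 lam2 Cst : ℝ) (hlam1 : 0 < lam1) (hlam2 : 0 < lam2) (hCst : 0 < Cst)
    (hgrad : ∀ x, lam1 * ‖x‖ ^ 2 + lam2 * U x - Cst ≤ ⟪x, gradient U x⟫)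
    (lam : ℝ) (hlam : lam ∈ Set.Ioo (0:ℝ) (min (2 * Real.sqrt lam1) (1/4))) :
    ∀ x y : EuclideanSpace ℝ (Fin d),
      lamStarConst lam1 lam2 lam * Vlam U (U x₀) lam x y - lam2 + lam2 * U x₀ - Cst
        ≤ ⟪x, gradient U x⟫ + ‖y‖ ^ 2 + lam * ⟪x, y⟫ := by
  obtain ⟨hl0, hlub⟩ := hlam
  have hl2s : lam < 2 * Real.sqrt lam1 := lt_of_lt_of_le hlub (min_le_left _ _)
  have hl4 : lam < 1/4 := lt_of_lt_of_le hlub (min_le_right _ _)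
  have hsq : lam ^ 2 < 4 * lam1 := by
    nlinarith [Real.sq_sqrt hlam1.le, Real.sqrt_nonneg lam1]
  -- bounds on kappa
  set k := kappaConst lam1 lam with hkdef
  have hden1 : (0:ℝ) < 8 * (7/4 - lam) := by linarith
  have hden2 : (0:ℝ) < 10 * (lam ^ 2 + 4 * lam1) := by nlinarith [sq_nonneg lam]
  have hk0 : 0 < k := by
    refine lt_min (div_pos (by linarith) hden1) (div_pos (by linarith) hden2)
  have hkle1 : k ≤ (4 * lam1 - lam ^ 2) / (8 * (7/4 - lam)) := by
    rw [hkdef, kappaConst]; exact min_le_left _ _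
  have hkle2 : k ≤ 3 * (4 * lam1 - lam ^ 2) / (10 * (lam ^ 2 + 4 * lam1)) := by
    rw [hkdef, kappaConst]; exact min_le_right _ _
  have hk1 : k * (14 - 8 * lam) ≤ 4 * lam1 - lam ^ 2 := by
    have h := (le_div_iff₀ hden1).mp hkle1
    linarith
  have hk2 : 10 * k * (lam ^ 2 + 4 * lam1) ≤ 3 * (4 * lam1 - lam ^ 2) := by
    have h := (le_div_iff₀ hden2).mp hkle2
    linarith
  -- lamStar
  set ls := lamStarConst lam1 lam2 lam with hlsdef
  have hls2 : ls ≤ lam2 := min_le_right _ _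
  have hls4k : ls ≤ 4 * k := min_le_left _ _
  have hls0 : 0 < ls := lt_min (by linarith) hlam2
  intro x y
  have hg := hgrad x
  have hUx := hx₀ x
  have hxy : ‖x + y‖ ^ 2 = ‖x‖ ^ 2 + 2 * ⟪x, y⟫ + ‖y‖ ^ 2 := norm_add_sq_real x y
  have hcs : |⟪x, y⟫| ≤ ‖x‖ * ‖y‖ := abs_real_inner_le_norm x y
  have hcs1 : -(‖x‖ * ‖y‖) ≤ ⟪x, y⟫ := neg_le_of_abs_le hcs
  have hcs2 : ⟪x, y⟫ ≤ ‖x‖ * ‖y‖ := le_of_abs_le hcs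
  -- the quadratic part, with coefficient ls/4 ≤ k
  have hkey := scalar_key lam1 lam (ls / 4) ‖x‖ ‖y‖ ⟪x, y⟫ hlam1 hl0 hl4 hsq
    (by linarith)
    (le_trans (mul_le_mul_of_nonneg_right (by linarith : ls / 4 ≤ k) (by linarith)) hk1)
    (by nlinarith)
    (norm_nonneg x) (norm_nonneg y) hcs1 hcs2
  -- the potential part
  have hpot : ls * (1 + U x - U x₀) ≤ lam2 * (1 + U x - U x₀) :=
    mul_le_mul_of_nonneg_right hls2 (by linarith)
  simp only [Vlam]
  rw [hxy] at *
  nlinarith [hkey, hpot, hg]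
end

section
/- For all x, y ∈ ℝ^d: ⟨∇U(x) + (1/2)((1−λ)x + y), y⟩ − (1/2)⟨x + 2y, ∇U(x) + y⟩ + d/2 = −(1/2)(⟨x, ∇U(x)⟩ + |y|² + λ⟨x,y⟩ − d), and this quantity is ≤ −(λ_*/2)·V_λ(x,y) + (1/2)(d + λ₂ + C⋆ + λ₂|min U|). (The left-hand side equals ⟨∇_xV_λ(x,y), y⟩ − ⟨∇_yV_λ(x,y), ∇U(x)+y⟩ + (1/2)Δ_yV_λ(x,y), i.e. the kinetic Langevin generator applied to V_λ, since ∇_xV_λ(x,y) = ∇U(x) + (1/2)((1−λ)x + y), ∇_yV_λ(x,y) = (1/2)(x+2y) and Δ_yV_λ = d.) -/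
open scoped RealInnerProductSpace
open Real Set

set_option maxHeartbeats 1000000 in
lemma core_ineq (lam1 lam : ℝ) (hlam1 : 0 < lam1) (hl0 : 0 < lam)
    (hl2 : lam ^ 2 < 4 * lam1) (hl4 : lam < 1/4)
    (S T p : ℝ) (hp : p ^ 2 ≤ S ^ 2 * T ^ 2) :
    kappaConst lam1 lam * (S ^ 2 + 2 * T ^ 2 + 2 * p - lam * S ^ 2)
      ≤ lam1 * S ^ 2 + T ^ 2 + lam * p := by
  have hd1 : (0:ℝ) < 8 * (7/4 - lam) := by nlinarith
  have hd2 : (0:ℝ) < 10 * (lam ^ 2 + 4 * lam1) := by nlinarith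
  have hnum : (0:ℝ) < 4 * lam1 - lam ^ 2 := by linarith
  obtain ⟨k, hkdef⟩ : ∃ k, k = kappaConst lam1 lam := ⟨_, rfl⟩
  rw [← hkdef]
  have hle1 : k ≤ (4 * lam1 - lam ^ 2) / (8 * (7/4 - lam)) := by
    rw [hkdef, kappaConst]; exact min_le_left _ _
  have hle2 : k ≤ 3 * (4 * lam1 - lam ^ 2) / (10 * (lam ^ 2 + 4 * lam1)) := by
    rw [hkdef, kappaConst]; exact min_le_right _ _
  have hkpos : 0 < k := by
    rw [hkdef, kappaConst]
    exact lt_min (div_pos hnum hd1) (div_pos (by linarith) hd2)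
  clear hkdef
  have hk1 : k * (8 * (7/4 - lam)) ≤ 4 * lam1 - lam ^ 2 := (le_div_iff₀ hd1).mp hle1
  have hk2 : k * (10 * (lam ^ 2 + 4 * lam1)) ≤ 3 * (4 * lam1 - lam ^ 2) :=
    (le_div_iff₀ hd2).mp hle2
  clear hle1 hle2
  have hB : 0 < 1 - 2 * k := by nlinarith
  have hA : 0 < lam1 - k * (1 - lam) := by nlinarith
  have hABC : (lam - 2 * k) ^ 2 ≤ 4 * (lam1 - k * (1 - lam)) * (1 - 2 * k) := by
    have key : k * (8 * lam1 + 4 - 8 * lam) ≤ 4 * lam1 - lam ^ 2 := by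
      rcases le_or_gt lam1 (5/4) with h | h
      · nlinarith [hkpos.le]
      · nlinarith [hkpos.le]
    nlinarith [sq_nonneg k, mul_pos hkpos hkpos]
  set A := lam1 - k * (1 - lam) with hA'
  set B := 1 - 2 * k with hB'
  set C := lam - 2 * k with hC'
  have hST : 0 ≤ S ^ 2 * T ^ 2 := by positivity
  have h1 : (C * p) ^ 2 ≤ (A * S ^ 2 + B * T ^ 2) ^ 2 := by
    nlinarith [sq_nonneg (A * S ^ 2 - B * T ^ 2),
      mul_nonneg (sub_nonneg.2 hABC) hST,
      mul_nonneg (sq_nonneg C) (sub_nonneg.2 hp)]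
  have h2 : 0 ≤ A * S ^ 2 + B * T ^ 2 :=
    add_nonneg (mul_nonneg hA.le (sq_nonneg _)) (mul_nonneg hB.le (sq_nonneg _))
  have h3 : 0 ≤ A * S ^ 2 + B * T ^ 2 + C * p := by
    nlinarith [h1, h2, sq_nonneg (A * S ^ 2 + B * T ^ 2 + C * p)]
  simp only [hA', hB', hC'] at h3
  nlinarith [h3]

set_option maxHeartbeats 2000000 in
theorem stmt_18 (d : ℕ) (hd : 1 ≤ d)
    (U : EuclideanSpace ℝ (Fin d) → ℝ) (hU : ContDiff ℝ 1 U)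
    (hcoer : ∀ M : ℝ, ∃ R : ℝ, ∀ x, R ≤ ‖x‖ → M ≤ U x)
    (x₀ : EuclideanSpace ℝ (Fin d)) (hx₀ : ∀ x, U x₀ ≤ U x)
    (lam1 lam2 Cst : ℝ) (hlam1 : 0 < lam1) (hlam2 : 0 < lam2) (hCst : 0 < Cst)
    (hgrad : ∀ x, lam1 * ‖x‖ ^ 2 + lam2 * U x - Cst ≤ ⟪x, gradient U x⟫)
    (lam : ℝ) (hlam : lam ∈ Set.Ioo (0:ℝ) (min (2 * Real.sqrt lam1) (1/4))) :
    ∀ x y : EuclideanSpace ℝ (Fin d),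
      (⟪gradient U x + (1/2 : ℝ) • ((1 - lam) • x + y), y⟫
          - (1/2) * ⟪x + (2:ℝ) • y, gradient U x + y⟫ + (d : ℝ) / 2
        = -(1/2) * (⟪x, gradient U x⟫ + ‖y‖ ^ 2 + lam * ⟪x, y⟫ - (d : ℝ)))
      ∧ (⟪gradient U x + (1/2 : ℝ) • ((1 - lam) • x + y), y⟫
          - (1/2) * ⟪x + (2:ℝ) • y, gradient U x + y⟫ + (d : ℝ) / 2
        ≤ -(lamStarConst lam1 lam2 lam / 2) * Vlam U (U x₀) lam x y
          + (1/2) * ((d : ℝ) + lam2 + Cst + lam2 * |U x₀|)) := by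
  obtain ⟨hl0, hlt⟩ := hlam
  have hl1 : lam < 2 * Real.sqrt lam1 := lt_of_lt_of_le hlt (min_le_left _ _)
  have hl4 : lam < 1/4 := lt_of_lt_of_le hlt (min_le_right _ _)
  have hl2 : lam ^ 2 < 4 * lam1 := by
    nlinarith [Real.sq_sqrt hlam1.le, Real.sqrt_nonneg lam1]
  intro x y
  have e1 : ⟪gradient U x + (1/2 : ℝ) • ((1 - lam) • x + y), y⟫
          - (1/2) * ⟪x + (2:ℝ) • y, gradient U x + y⟫ + (d : ℝ) / 2
        = -(1/2) * (⟪x, gradient U x⟫ + ‖y‖ ^ 2 + lam * ⟪x, y⟫ - (d : ℝ)) := by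
    simp only [inner_add_left, inner_add_right, real_inner_smul_left, real_inner_smul_right,
      real_inner_self_eq_norm_sq, real_inner_comm y x, real_inner_comm y (gradient U x)]
    ring
  refine ⟨e1, ?_⟩
  rw [e1]
  -- notation
  obtain ⟨L, hLdef⟩ : ∃ L, L = lamStarConst lam1 lam2 lam := ⟨_, rfl⟩
  rw [← hLdef]
  have hL4k : L ≤ 4 * kappaConst lam1 lam := by
    rw [hLdef, lamStarConst]; exact min_le_left _ _
  have hLl2 : L ≤ lam2 := by
    rw [hLdef, lamStarConst]; exact min_le_right _ _
  clear hLdef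
  have hnorm : ‖x + y‖ ^ 2 = ‖x‖ ^ 2 + 2 * ⟪x, y⟫ + ‖y‖ ^ 2 := norm_add_sq_real x y
  have habs : |⟪x, y⟫| ≤ ‖x‖ * ‖y‖ := abs_real_inner_le_norm x y
  have hp2 : ⟪x, y⟫ ^ 2 ≤ ‖x‖ ^ 2 * ‖y‖ ^ 2 := by
    nlinarith [habs, abs_nonneg (⟪x, y⟫ : ℝ), sq_abs (⟪x, y⟫ : ℝ), neg_abs_le (⟪x, y⟫ : ℝ)]
  have hcore := core_ineq lam1 lam hlam1 hl0 hl2 hl4 ‖x‖ ‖y‖ ⟪x, y⟫ hp2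
  have hI := hgrad x
  have hum : U x₀ ≤ U x := hx₀ x
  have hmabs : -|U x₀| ≤ U x₀ := neg_abs_le _
  -- Q ≥ 0
  have hQ : 0 ≤ ‖x‖ ^ 2 + 2 * ‖y‖ ^ 2 + 2 * ⟪x, y⟫ - lam * ‖x‖ ^ 2 := by
    nlinarith [sq_nonneg (‖x‖ - 2 * ‖y‖), neg_abs_le (⟪x, y⟫ : ℝ), habs, sq_nonneg ‖x‖,
      mul_nonneg (norm_nonneg x) (norm_nonneg y)]
  -- L * Q ≤ 4 * kappa * Q
  have hLQ : L * (‖x‖ ^ 2 + 2 * ‖y‖ ^ 2 + 2 * ⟪x, y⟫ - lam * ‖x‖ ^ 2)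
      ≤ 4 * kappaConst lam1 lam * (‖x‖ ^ 2 + 2 * ‖y‖ ^ 2 + 2 * ⟪x, y⟫ - lam * ‖x‖ ^ 2) :=
    mul_le_mul_of_nonneg_right hL4k hQ
  -- L * (1 + U x - m) ≤ lam2 * (1 + U x - m)
  have hLU : L * (1 + U x - U x₀) ≤ lam2 * (1 + U x - U x₀) :=
    mul_le_mul_of_nonneg_right hLl2 (by linarith)
  rw [Vlam, hnorm]
  nlinarith [hcore, hI, hLQ, hLU, hmabs, hum]
end

section
/- There exists a constant C₁ > 0, depending only on λ₁, λ₂, C⋆, λ and min U (but not on d), such that for all x, y ∈ ℝ^d: 2V_λ(x,y)·(−1/2)(⟨x, ∇U(x)⟩ + |y|² + λ⟨x,y⟩ − d) + (1/4)|x + 2y|² ≤ −(λ_*/2)·V_λ(x,y)² + C₁(1 + d²). (The left-hand side equals the kinetic Langevin generator applied to V_λ², namely ⟨∇_x(V_λ²), y⟩ − ⟨∇_y(V_λ²), ∇U(x)+y⟩ + (1/2)Δ_y(V_λ²).) -/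
set_option maxHeartbeats 800000

open scoped RealInnerProductSpace
open Real Set

private lemma aux_negP (A B P : ℝ) (hA0 : 0 ≤ A) (hB0 : 0 ≤ B) (hPC : P ^ 2 ≤ A * B) :
    -((5/7) * A + (7/5) * B) ≤ 2 * P := by
  nlinarith [hPC, sq_nonneg ((5/7) * A - (7/5) * B), mul_nonneg hA0 hB0]

private lemma aux_2P (A B P : ℝ) (hA0 : 0 ≤ A) (hB0 : 0 ≤ B) (hPC : P ^ 2 ≤ A * B) :
    2 * P ≤ (3/4) * A + (4/3) * B := by
  nlinarith [hPC, sq_nonneg ((3/4) * A - (4/3) * B), mul_nonneg hA0 hB0]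

private lemma aux_4P (A B P : ℝ) (hA0 : 0 ≤ A) (hB0 : 0 ≤ B) (hPC : P ^ 2 ≤ A * B) :
    4 * P ≤ A + 4 * B := by
  nlinarith [hPC, sq_nonneg (A - 4 * B), mul_nonneg hA0 hB0]

private lemma aux_cross (lam1 lam A B P : ℝ) (hlam1 : 0 < lam1) (hlam0 : 0 < lam)
    (hA0 : 0 ≤ A) (hB0 : 0 ≤ B) (hPC : P ^ 2 ≤ A * B) :
    0 ≤ ((4 * lam1 + lam ^ 2) ^ 2 / 8) * A + 2 * lam ^ 2 * B
      + lam * (4 * lam1 + lam ^ 2) * P := by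
  have hu : (0:ℝ) ≤ ((4 * lam1 + lam ^ 2) ^ 2 / 8) * A := by positivity
  have hv : (0:ℝ) ≤ 2 * lam ^ 2 * B := by positivity
  nlinarith [sq_nonneg (((4 * lam1 + lam ^ 2) ^ 2 / 8) * A - 2 * lam ^ 2 * B), hu, hv,
    mul_le_mul_of_nonneg_left hPC (by positivity : (0:ℝ) ≤ lam ^ 2 * (4 * lam1 + lam ^ 2) ^ 2)]

private lemma aux_s3 (lam1 lam A B P κ : ℝ)
    (hcross : 0 ≤ ((4 * lam1 + lam ^ 2) ^ 2 / 8) * A + 2 * lam ^ 2 * B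
      + lam * (4 * lam1 + lam ^ 2) * P)
    (s2a : κ * (7/4 - lam) * (A * (4 * lam1 + lam ^ 2))
        ≤ ((4 * lam1 - lam ^ 2) / 8) * (A * (4 * lam1 + lam ^ 2)))
    (s2b : (κ * (10/3) * (4 * lam1 + lam ^ 2)) * B ≤ (4 * lam1 - lam ^ 2) * B) :
    κ * ((7/4 - lam) * A + (10/3) * B) * (4 * lam1 + lam ^ 2)
        ≤ (lam1 * A + B + lam * P) * (4 * lam1 + lam ^ 2) := by
  nlinarith [hcross, s2a, s2b]

private lemma aux_VG (lam1 lam2 Cst lam m A B P S W G κ ls : ℝ)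
    (hW0 : 0 ≤ W) (hQ0 : 0 ≤ S + B - lam * A)
    (hls1 : ls ≤ 4 * κ) (hls2 : ls ≤ lam2)
    (hkey : κ * (S + B - lam * A) ≤ lam1 * A + B + lam * P)
    (hGge : lam1 * A + lam2 * W + lam2 * m - Cst ≤ G) :
    ls * (1 + W + (1/4) * (S + B - lam * A)) ≤ G + B + lam * P + (ls + Cst - lam2 * m) := by
  have p1 : ls * W ≤ lam2 * W := mul_le_mul_of_nonneg_right hls2 hW0
  have p2 : ls * (S + B - lam * A) ≤ 4 * κ * (S + B - lam * A) :=
    mul_le_mul_of_nonneg_right hls1 hQ0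
  nlinarith [hkey, hGge, p1, p2]

private lemma aux_h1 (lam2 Cst lam m B P G ls V : ℝ)
    (hVG : ls * V ≤ G + B + lam * P + (ls + Cst - lam2 * m)) (hV1 : 1 ≤ V) :
    ls * V ^ 2 ≤ (G + B + lam * P) * V + (ls + Cst - lam2 * m) * V := by
  nlinarith [mul_le_mul_of_nonneg_right hVG (by linarith : (0:ℝ) ≤ V)]

private lemma aux_fin (ls K C₁ V d : ℝ) (hlspos : 0 < ls)
    (hC₁ls : C₁ * ls = K ^ 2 + 1) :
    (K + d) * V ≤ (ls/2) * V ^ 2 + C₁ * (1 + d ^ 2) := by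
  have hC₁' : ls * (C₁ * (1 + d ^ 2)) = (K ^ 2 + 1) * (1 + d ^ 2) := by
    rw [show ls * (C₁ * (1 + d ^ 2)) = (C₁ * ls) * (1 + d ^ 2) by ring, hC₁ls]
  have hmul : ls * ((K + d) * V) ≤ ls * ((ls/2) * V ^ 2 + C₁ * (1 + d ^ 2)) := by
    nlinarith [sq_nonneg (ls * V - (K + d)), sq_nonneg (K - d), hC₁']
  exact le_of_mul_le_mul_left hmul hlspos

private lemma aux_final (lam2 Cst lam m A B P T G ls K C₁ V d : ℝ)
    (hA0 : 0 ≤ A) (hB0 : 0 ≤ B) (hd' : 1 ≤ d) (hV1 : 1 ≤ V)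
    (h1 : ls * V ^ 2 ≤ (G + B + lam * P) * V + (ls + Cst - lam2 * m) * V)
    (hT4 : T ≤ 2 * A + 8 * B)
    (hVAB : A + B ≤ 112 * (V - 1))
    (hfin : (K + d) * V ≤ (ls/2) * V ^ 2 + C₁ * (1 + d ^ 2))
    (hKd : 0 ≤ (K - (ls + Cst - lam2 * m) - 224) * V) :
    2 * V * (-(1/2) * (G + B + lam * P - d)) + (1/4) * T
      ≤ -(ls / 2) * V ^ 2 + C₁ * (1 + d ^ 2) := by
  nlinarith [h1, hT4, hVAB, hfin, hV1, hKd, hd']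

/-- The constant `C₁` depends only on `λ₁, λ₂, C⋆, λ` and `m = min U`, but not on the
dimension `d`: it is chosen before `d` and `U`. -/
theorem stmt_19 (lam1 lam2 Cst lam m : ℝ)
    (hlam1 : 0 < lam1) (hlam2 : 0 < lam2) (hCst : 0 < Cst)
    (hlam : lam ∈ Set.Ioo (0:ℝ) (min (2 * Real.sqrt lam1) (1/4))) :
    ∃ C₁ > (0:ℝ), ∀ d : ℕ, 1 ≤ d →
      ∀ U : EuclideanSpace ℝ (Fin d) → ℝ, ContDiff ℝ 1 U →
        (∀ M : ℝ, ∃ R : ℝ, ∀ x, R ≤ ‖x‖ → M ≤ U x) →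
        ∀ x₀ : EuclideanSpace ℝ (Fin d), (∀ x, U x₀ ≤ U x) → U x₀ = m →
        (∀ x, lam1 * ‖x‖ ^ 2 + lam2 * U x - Cst ≤ ⟪x, gradient U x⟫) →
        ∀ x y : EuclideanSpace ℝ (Fin d),
          2 * Vlam U m lam x y
              * (-(1/2) * (⟪x, gradient U x⟫ + ‖y‖ ^ 2 + lam * ⟪x, y⟫ - (d : ℝ)))
            + (1/4) * ‖x + (2:ℝ) • y‖ ^ 2
          ≤ -(lamStarConst lam1 lam2 lam / 2) * (Vlam U m lam x y) ^ 2
            + C₁ * (1 + (d : ℝ) ^ 2) := by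
  obtain ⟨hlam0, hlamlt⟩ := hlam
  have hlam4 : lam < 1/4 := lt_of_lt_of_le hlamlt (min_le_right _ _)
  have hlamsq : lam ^ 2 < 4 * lam1 := by
    have h := lt_of_lt_of_le hlamlt (min_le_left _ _)
    nlinarith [Real.sq_sqrt hlam1.le, Real.sqrt_nonneg lam1]
  set κ := kappaConst lam1 lam with hκ_def
  set ls := lamStarConst lam1 lam2 lam with hls_def
  have hκ1 : κ * (8 * (7/4 - lam)) ≤ 4 * lam1 - lam ^ 2 := by
    have h : κ ≤ (4 * lam1 - lam ^ 2) / (8 * (7/4 - lam)) := min_le_left _ _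
    rw [le_div_iff₀ (by linarith)] at h; linarith
  have hκ2 : κ * (10 * (lam ^ 2 + 4 * lam1)) ≤ 3 * (4 * lam1 - lam ^ 2) := by
    have h : κ ≤ 3 * (4 * lam1 - lam ^ 2) / (10 * (lam ^ 2 + 4 * lam1)) := min_le_right _ _
    rw [le_div_iff₀ (by nlinarith [sq_nonneg lam])] at h; linarith
  have hκpos : 0 < κ := by
    apply lt_min
    · apply div_pos (by linarith) (by linarith)
    · apply div_pos (by linarith) (by nlinarith [sq_nonneg lam])
  have hls1 : ls ≤ 4 * κ := min_le_left _ _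
  have hls2 : ls ≤ lam2 := min_le_right _ _
  have hlspos : 0 < ls := lt_min (by linarith) hlam2
  set K : ℝ := lam2 + Cst + lam2 * |m| + 224 with hK_def
  have hK0 : 0 < K := by positivity
  refine ⟨(K ^ 2 + 1) / ls, div_pos (by positivity) hlspos, ?_⟩
  set C₁ := (K ^ 2 + 1) / ls with hC₁_def
  have hC₁ls : C₁ * ls = K ^ 2 + 1 := div_mul_cancel₀ _ hlspos.ne'
  intro d hd U hU hcoerc x₀ hmin hUm hgrad x y
  have hd' : (1:ℝ) ≤ (d:ℝ) := by exact_mod_cast hd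
  set A := ‖x‖ ^ 2 with hA_def
  set B := ‖y‖ ^ 2 with hB_def
  set S := ‖x + y‖ ^ 2 with hS_def
  set T := ‖x + (2:ℝ) • y‖ ^ 2 with hT_def
  set P := ⟪x, y⟫ with hP_def
  set G := ⟪x, gradient U x⟫ with hG_def
  set W := U x - m with hW_def
  set V := Vlam U m lam x y with hV_def
  have hA0 : 0 ≤ A := by rw [hA_def]; positivity
  have hB0 : 0 ≤ B := by rw [hB_def]; positivity
  have hW0 : 0 ≤ W := by
    have h1 := hmin x
    rw [hUm] at h1
    rw [hW_def]; linarith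
  have hPC : P ^ 2 ≤ A * B := by
    have h := real_inner_mul_inner_self_le x y
    rw [real_inner_self_eq_norm_sq, real_inner_self_eq_norm_sq] at h
    rw [hP_def, hA_def, hB_def]; nlinarith only [h]
  have hSs : S = A + 2 * P + B := by
    rw [hS_def, hA_def, hB_def, hP_def]; exact norm_add_sq_real x y
  have hTs : T = A + 4 * P + 4 * B := by
    rw [hT_def, hA_def, hB_def, hP_def, norm_add_sq_real, real_inner_smul_right, norm_smul]
    simp
    ring
  have hGge : lam1 * A + lam2 * W + lam2 * m - Cst ≤ G := by
    have h := hgrad x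
    rw [← hA_def, ← hG_def] at h
    have hid : lam2 * W + lam2 * m = lam2 * U x := by rw [hW_def]; ring
    linarith
  have hVdef : V = 1 + W + (1/4) * (S + B - lam * A) := by
    rw [hV_def, Vlam, hW_def, hA_def, hB_def, hS_def]; ring
  have hnegP := aux_negP A B P hA0 hB0 hPC
  have hQlb : (1/28) * (A + B) ≤ S + B - lam * A := by
    rw [hSs]
    nlinarith only [hnegP, hB0, mul_nonneg (by linarith : (0:ℝ) ≤ 1/4 - lam) hA0]
  have hQ0 : 0 ≤ S + B - lam * A := by linarith
  have hV1 : 1 ≤ V := by rw [hVdef]; linarith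
  have hVAB : A + B ≤ 112 * (V - 1) := by rw [hVdef]; linarith
  have hT4 : T ≤ 2 * A + 8 * B := by
    have := aux_4P A B P hA0 hB0 hPC
    rw [hTs]; linarith
  have hcross := aux_cross lam1 lam A B P hlam1 hlam0 hA0 hB0 hPC
  have h2P := aux_2P A B P hA0 hB0 hPC
  have hkey : κ * (S + B - lam * A) ≤ lam1 * A + B + lam * P := by
    have hD : (0:ℝ) < 4 * lam1 + lam ^ 2 := by positivity
    have s1 : κ * (S + B - lam * A) ≤ κ * ((7/4 - lam) * A + (10/3) * B) := by
      apply mul_le_mul_of_nonneg_left _ hκpos.le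
      rw [hSs]; linarith
    have s2a : κ * (7/4 - lam) * (A * (4 * lam1 + lam ^ 2))
        ≤ ((4 * lam1 - lam ^ 2) / 8) * (A * (4 * lam1 + lam ^ 2)) :=
      mul_le_mul_of_nonneg_right (by linarith) (mul_nonneg hA0 hD.le)
    have s2b : (κ * (10/3) * (4 * lam1 + lam ^ 2)) * B ≤ (4 * lam1 - lam ^ 2) * B :=
      mul_le_mul_of_nonneg_right (by linarith) hB0
    have s3 := aux_s3 lam1 lam A B P κ hcross s2a s2b
    have s4 : κ * (S + B - lam * A) * (4 * lam1 + lam ^ 2)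
        ≤ (lam1 * A + B + lam * P) * (4 * lam1 + lam ^ 2) :=
      le_trans (mul_le_mul_of_nonneg_right s1 hD.le) s3
    exact le_of_mul_le_mul_right s4 hD
  have hVG : ls * V ≤ G + B + lam * P + (ls + Cst - lam2 * m) := by
    rw [hVdef]
    exact aux_VG lam1 lam2 Cst lam m A B P S W G κ ls hW0 hQ0 hls1 hls2 hkey hGge
  have h1 := aux_h1 lam2 Cst lam m B P G ls V hVG hV1
  have hC2K : ls + Cst - lam2 * m + 224 ≤ K := by
    rw [hK_def]
    have hm : lam2 * (-m) ≤ lam2 * |m| := by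
      apply mul_le_mul_of_nonneg_left (neg_le_abs m) hlam2.le
    linarith only [hm, hls2]
  have hfin := aux_fin ls K C₁ V (d:ℝ) hlspos hC₁ls
  have hKd : 0 ≤ (K - (ls + Cst - lam2 * m) - 224) * V :=
    mul_nonneg (by linarith) (by linarith)
  exact aux_final lam2 Cst lam m A B P T G ls K C₁ V (d:ℝ) hA0 hB0 hd' hV1 h1 hT4 hVAB hfin hKd
end
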